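/- arXiv:2002.04060 — 6 statements merged into one kernel-verified Lean document; each statement's English description precedes it below -/
import Mathlib

section
/- For every dimension d ≥ 1, every function f ∈ L¹(I_d) and every ε > 0, there exist an integer n ≥ 1, output weights α_1, …, α_n ∈ ℝ, input weight vectors w_1, …, w_n ∈ ℝ^d and biases b_1, …, b_n ∈ ℝ such that the single-hidden-layer ReLU network g(x) = Σ_{j=1}^n α_j · ReLU(w_jᵀ x + b_j) satisfies ∫_{I_d} |g(x) − f(x)| dx < ε. In other words, finite sums of the form Σ_j α_j ReLU(w_jᵀ x + b_j) are dense in L¹(I_d). -/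
open MeasureTheory

/-- ReLU activation: `ReLU t = max t 0`. -/
noncomputable def ReLU (t : ℝ) : ℝ := max t 0

open Finset

lemma relu_of_nonneg {t : ℝ} (h : 0 ≤ t) : ReLU t = t := max_eq_left h
lemma relu_of_nonpos {t : ℝ} (h : t ≤ 0) : ReLU t = 0 := max_eq_right h

/-- Evaluation of the piecewise-linear interpolant written as a ReLU sum. -/
lemma pl_eval (φ : ℝ → ℝ) (h : ℝ) (hh : 0 < h) (t : ℕ → ℝ)
    (hstep : ∀ i, t (i+1) = t i + h) (N : ℕ) (u : ℝ)
    (k : ℕ) (hkN : k < N) (hlo : t k ≤ u) (hhi : u ≤ t (k+1)) :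
    φ (t 0) + ∑ i ∈ Finset.range N,
      ((φ (t (i+1)) - φ (t i))/h) * (ReLU (u - t i) - ReLU (u - t (i+1)))
      = φ (t k) + ((φ (t (k+1)) - φ (t k))/h) * (u - t k) := by
  have hmono : ∀ i j : ℕ, i ≤ j → t i ≤ t j := by
    intro i j hij
    induction j with
    | zero => simp_all
    | succ n ih =>
      rcases Nat.lt_or_ge i (n+1) with hc | hc
      · have := ih (Nat.lt_succ_iff.1 hc)
        rw [hstep]; linarith
      · have : i = n + 1 := le_antisymm hij hc
        subst this; rfl
  have hsub : Finset.range (k+1) ⊆ Finset.range N := Finset.range_subset_range.2 hkN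
  rw [← Finset.sum_subset hsub ?_]
  · rw [Finset.sum_range_succ]
    have h1 : ReLU (u - t k) = u - t k := relu_of_nonneg (by linarith)
    have h2 : ReLU (u - t (k+1)) = 0 := relu_of_nonpos (by linarith)
    have h3 : ∀ i ∈ Finset.range k,
        ((φ (t (i+1)) - φ (t i))/h) * (ReLU (u - t i) - ReLU (u - t (i+1)))
        = φ (t (i+1)) - φ (t i) := by
      intro i hi
      have hik : i + 1 ≤ k := Finset.mem_range.1 hi
      have l1 : t (i+1) ≤ t k := hmono _ _ hik
      have r1 : ReLU (u - t i) = u - t i := relu_of_nonneg (by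
        have := hmono i k (Nat.le_of_succ_le hik); linarith)
      have r2 : ReLU (u - t (i+1)) = u - t (i+1) := relu_of_nonneg (by linarith)
      rw [r1, r2, show u - t i - (u - t (i+1)) = h by rw [hstep]; ring,
        div_mul_cancel₀ _ hh.ne']
    rw [Finset.sum_congr rfl h3, Finset.sum_range_sub (fun i => φ (t i)), h1, h2]
    ring
  · intro i hiN hik
    have hki : k + 1 ≤ i := by simp only [Finset.mem_range, not_lt] at hik; exact hik
    have hui : u ≤ t i := le_trans hhi (hmono _ _ hki)
    have : t i ≤ t (i+1) := by rw [hstep]; linarith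
    rw [relu_of_nonpos (by linarith), relu_of_nonpos (by linarith), sub_zero, mul_zero]

def reluUnits (d : ℕ) : Set ((Fin d → ℝ) → ℝ) :=
  {g | ∃ (w : Fin d → ℝ) (c : ℝ), g = fun x => ReLU ((∑ k, w k * x k) - c)}

lemma continuous_ReLU : Continuous ReLU := continuous_id.max continuous_const

lemma span_reluUnits_continuous {d : ℕ} {g : (Fin d → ℝ) → ℝ}
    (hg : g ∈ Submodule.span ℝ (reluUnits d)) : Continuous g := by
  induction hg using Submodule.span_induction with
  | mem g hgU =>
    obtain ⟨w, c, rfl⟩ := hgU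
    exact continuous_ReLU.comp ((continuous_finset_sum _ fun k _ =>
      (continuous_const.mul (continuous_apply k))).sub continuous_const)
  | zero => exact continuous_const
  | add p q _ _ hp hq => exact hp.add hq
  | smul c p _ hp => exact hp.const_smul c

/-- A continuous ridge function `x ↦ φ(w·x)` can be approximated uniformly on `[0,1]^d`
by an element of the span of ReLU units. -/
lemma ridge_approx {d : ℕ} (w : Fin d → ℝ) (φ : ℝ → ℝ) (hφ : Continuous φ)
    {δ : ℝ} (hδ : 0 < δ) :
    ∃ g ∈ Submodule.span ℝ (reluUnits d), ∀ x ∈ Set.Icc (0 : Fin d → ℝ) 1,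
      |g x - φ (∑ k, w k * x k)| ≤ δ := by
  classical
  set M : ℝ := ∑ k, |w k| with hM
  have hM0 : 0 ≤ M := Finset.sum_nonneg fun _ _ => abs_nonneg _
  set A : ℝ := -M - 1 with hA
  set B : ℝ := M + 1 with hB
  have hAB : A < B := by simp only [hA, hB]; linarith
  have hUC : UniformContinuousOn φ (Set.Icc A B) :=
    isCompact_Icc.uniformContinuousOn_of_continuous hφ.continuousOn
  obtain ⟨η, hη0, hη⟩ := Metric.uniformContinuousOn_iff.1 hUC (δ/2) (by linarith)
  set N : ℕ := ⌈(B - A)/η⌉₊ + 1 with hN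
  have hN0 : 0 < N := Nat.succ_pos _
  have hNR : (B - A)/η < (N : ℝ) := by
    calc (B - A)/η ≤ (⌈(B - A)/η⌉₊ : ℝ) := Nat.le_ceil _
    _ < N := by exact_mod_cast Nat.lt_succ_self _
  set h : ℝ := (B - A)/N with hh
  have hNpos : (0:ℝ) < N := by exact_mod_cast hN0
  have hh0 : 0 < h := div_pos (by linarith) hNpos
  have hhη : h < η := by
    rw [hh, div_lt_iff₀ hNpos]
    rw [div_lt_iff₀ hη0] at hNR
    linarith
  have hNh : A + (N : ℝ) * h = B := by rw [hh]; field_simp; ring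
  set t : ℕ → ℝ := fun i => A + (i : ℝ) * h with ht
  have hstep : ∀ i, t (i+1) = t i + h := by intro i; simp only [ht]; push_cast; ring
  have htIcc : ∀ i : ℕ, i ≤ N → t i ∈ Set.Icc A B := by
    intro i hi
    have h1 : (0:ℝ) ≤ i := Nat.cast_nonneg i
    have h2 : (i : ℝ) ≤ N := by exact_mod_cast hi
    constructor
    · simp only [ht]; nlinarith
    · simp only [ht]; nlinarith
  set s : (Fin d → ℝ) → ℝ := fun x => ∑ k, w k * x k with hs
  set uf : ℝ → ((Fin d → ℝ) → ℝ) := fun c => fun x => ReLU (s x - c) with huf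
  have hufU : ∀ c, uf c ∈ reluUnits d := fun c => ⟨w, c, rfl⟩
  set m : ℕ → ℝ := fun i => (φ (t (i+1)) - φ (t i))/h with hm
  set g : (Fin d → ℝ) → ℝ :=
    φ (t 0) • (uf (A-1) - uf A) + ∑ i ∈ Finset.range N, m i • (uf (t i) - uf (t (i+1))) with hg
  have hgspan : g ∈ Submodule.span ℝ (reluUnits d) := by
    apply Submodule.add_mem
    · exact Submodule.smul_mem _ _ (Submodule.sub_mem _
        (Submodule.subset_span (hufU _)) (Submodule.subset_span (hufU _)))
    · exact Submodule.sum_mem _ fun i _ => Submodule.smul_mem _ _ (Submodule.sub_mem _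
        (Submodule.subset_span (hufU _)) (Submodule.subset_span (hufU _)))
  refine ⟨g, hgspan, ?_⟩
  intro x hx
  have hu : |s x| ≤ M := by
    calc |s x| ≤ ∑ k, |w k * x k| := Finset.abs_sum_le_sum_abs _ _
    _ ≤ ∑ k, |w k| := Finset.sum_le_sum (fun k _ => by
        rw [abs_mul]
        have h0 : 0 ≤ x k := hx.1 k
        have h1 : x k ≤ 1 := hx.2 k
        have : |x k| ≤ 1 := abs_le.2 ⟨by linarith, h1⟩
        nlinarith [abs_nonneg (w k)])
  have huA : A ≤ s x := by have := abs_le.1 hu; simp only [hA]; linarith [this.1]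
  have huB : s x ≤ B := by have := abs_le.1 hu; simp only [hB]; linarith [this.2]
  set k : ℕ := min (⌊(s x - A)/h⌋₊) (N - 1) with hk
  have hkN : k < N := lt_of_le_of_lt (min_le_right _ _) (Nat.sub_lt hN0 one_pos)
  have hlo : t k ≤ s x := by
    have h1 : (k : ℝ) ≤ ⌊(s x - A)/h⌋₊ := by exact_mod_cast min_le_left _ _
    have h2 : (⌊(s x - A)/h⌋₊ : ℝ) ≤ (s x - A)/h :=
      Nat.floor_le (div_nonneg (by linarith) hh0.le)
    have h3 := (le_div_iff₀ hh0).1 (le_trans h1 h2)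
    simp only [ht]; linarith
  have hhi : s x ≤ t (k+1) := by
    rcases le_or_gt (⌊(s x - A)/h⌋₊) (N-1) with hc | hc
    · have hkf : k = ⌊(s x - A)/h⌋₊ := min_eq_left hc
      have h4 := Nat.lt_floor_add_one ((s x - A)/h)
      rw [← hkf] at h4
      have h5 := (div_lt_iff₀ hh0).1 h4
      simp only [ht]; push_cast; linarith
    · have hkf : k = N - 1 := min_eq_right hc.le
      have hkn : k + 1 = N := by omega
      rw [hkn]
      show s x ≤ A + (N:ℝ) * h
      rw [hNh]; exact huB
  have hgx : g x = φ (t 0) * (ReLU (s x - (A-1)) - ReLU (s x - A))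
      + ∑ i ∈ Finset.range N, m i * (ReLU (s x - t i) - ReLU (s x - t (i+1))) := by
    simp only [hg, Pi.add_apply, Pi.smul_apply, Pi.sub_apply, Finset.sum_apply, huf,
      smul_eq_mul]
  have hconst : ReLU (s x - (A-1)) - ReLU (s x - A) = 1 := by
    rw [relu_of_nonneg (by linarith), relu_of_nonneg (by linarith)]; ring
  have heval := pl_eval φ h hh0 t hstep N (s x) k hkN hlo hhi
  have hgx2 : g x = φ (t k) + m k * (s x - t k) := by
    rw [hgx, hconst, mul_one]; exact heval
  have hne : s x ∈ Set.Icc A B := ⟨huA, huB⟩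
  have htk : t k ∈ Set.Icc A B := htIcc k hkN.le
  have htk1 : t (k+1) ∈ Set.Icc A B := htIcc (k+1) hkN
  have hstepk := hstep k
  have hd1 : dist (t k) (s x) < η := by
    rw [Real.dist_eq, abs_sub_comm, abs_of_nonneg (by linarith)]
    linarith
  have hd2 : dist (t (k+1)) (t k) < η := by
    rw [Real.dist_eq, show t (k+1) - t k = h by rw [hstepk]; ring, abs_of_pos hh0]
    exact hhη
  have e1 : |φ (t k) - φ (s x)| < δ/2 := by
    have := hη (t k) htk (s x) hne hd1
    rwa [Real.dist_eq] at this
  have e2 : |m k * (s x - t k)| ≤ |φ (t (k+1)) - φ (t k)| := by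
    rw [hm, abs_mul, abs_div, abs_of_pos hh0, div_mul_eq_mul_div, div_le_iff₀ hh0]
    have h1 : |s x - t k| ≤ h := by
      rw [abs_of_nonneg (by linarith)]; linarith
    exact mul_le_mul_of_nonneg_left h1 (abs_nonneg _)
  have e3 : |φ (t (k+1)) - φ (t k)| < δ/2 := by
    have := hη (t (k+1)) htk1 (t k) htk hd2
    rwa [Real.dist_eq] at this
  rw [hgx2]
  calc |φ (t k) + m k * (s x - t k) - φ (s x)|
      ≤ |φ (t k) - φ (s x)| + |m k * (s x - t k)| := by
        have := abs_add_le (φ (t k) - φ (s x)) (m k * (s x - t k))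
        rw [show φ (t k) + m k * (s x - t k) - φ (s x) = (φ (t k) - φ (s x)) + m k * (s x - t k) by ring]; exact this
    _ ≤ δ := by linarith

abbrev Kcube (d : ℕ) : Set (Fin d → ℝ) := Set.Icc (0 : Fin d → ℝ) 1

instance : CompactSpace (Kcube d) := isCompact_iff_compactSpace.1 isCompact_Icc

/-- The exponential ridge functions on the cube. -/
noncomputable def expRidge (d : ℕ) (w : Fin d → ℝ) : C(Kcube d, ℝ) :=
  ⟨fun x => Real.exp (∑ k, w k * (x : Fin d → ℝ) k), by
    apply Real.continuous_exp.comp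
    exact continuous_finset_sum _ fun k _ =>
      continuous_const.mul ((continuous_apply k).comp continuous_subtype_val)⟩

noncomputable def expSet (d : ℕ) : Set C(Kcube d, ℝ) := Set.range (expRidge d)

lemma expSet_mul {p q : C(Kcube d, ℝ)} (hp : p ∈ expSet d) (hq : q ∈ expSet d) :
    p * q ∈ expSet d := by
  obtain ⟨u, rfl⟩ := hp
  obtain ⟨v, rfl⟩ := hq
  refine ⟨u + v, ?_⟩
  ext x
  simp only [expRidge, ContinuousMap.mul_apply, ContinuousMap.coe_mk, Pi.add_apply,
    add_mul, Finset.sum_add_distrib, Real.exp_add]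

lemma expSet_one : (1 : C(Kcube d, ℝ)) ∈ expSet d := by
  refine ⟨0, ?_⟩
  ext x
  simp [expRidge]

/-- The span of exponential ridge functions, as a subalgebra. -/
noncomputable def expAlg (d : ℕ) : Subalgebra ℝ C(Kcube d, ℝ) :=
  Submodule.toSubalgebra (Submodule.span ℝ (expSet d))
    (Submodule.subset_span expSet_one)
    (by
      intro p q hp hq
      induction hp using Submodule.span_induction with
      | mem p hpE =>
        induction hq using Submodule.span_induction with
        | mem q hqE => exact Submodule.subset_span (expSet_mul hpE hqE)
        | zero => simp only [mul_zero]; exact Submodule.zero_mem _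
        | add q r _ _ hq' hr' => rw [mul_add]; exact Submodule.add_mem _ hq' hr'
        | smul c q _ hq' => rw [mul_smul_comm]; exact Submodule.smul_mem _ _ hq'
      | zero => simp only [zero_mul]; exact Submodule.zero_mem _
      | add p r _ _ hp' hr' => rw [add_mul]; exact Submodule.add_mem _ hp' hr'
      | smul c p _ hp' => rw [smul_mul_assoc]; exact Submodule.smul_mem _ _ hp')

lemma expAlg_separates : (expAlg d).SeparatesPoints := by
  intro x y hxy
  have : ∃ k, (x : Fin d → ℝ) k ≠ (y : Fin d → ℝ) k := by
    by_contra hcon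
    push_neg at hcon
    exact hxy (Subtype.ext (funext hcon))
  obtain ⟨k, hk⟩ := this
  refine ⟨⇑(expRidge d (Pi.single k 1)), ⟨expRidge d (Pi.single k 1),
    Submodule.subset_span ⟨_, rfl⟩, rfl⟩, ?_⟩
  simp only [expRidge, ContinuousMap.coe_mk]
  have hsum : ∀ z : Kcube d, ∑ j, (Pi.single k (1:ℝ) : Fin d → ℝ) j * (z : Fin d → ℝ) j
      = (z : Fin d → ℝ) k := by
    intro z
    rw [Finset.sum_eq_single k]
    · simp
    · intro j _ hj; simp [Pi.single_apply, hj]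
    · simp
  rw [hsum, hsum]
  exact fun hcon => hk (Real.exp_injective hcon)

/-- Transfer: anything in the span of exponential ridge functions is uniformly
approximable on the cube by elements of the ReLU span. -/
lemma span_exp_approx {d : ℕ} {p : C(Kcube d, ℝ)}
    (hp : p ∈ Submodule.span ℝ (expSet d)) :
    ∀ δ : ℝ, 0 < δ → ∃ g ∈ Submodule.span ℝ (reluUnits d),
      ∀ x (hx : x ∈ Kcube d), |g x - p ⟨x, hx⟩| ≤ δ := by
  induction hp using Submodule.span_induction with
  | mem p hpE =>
    obtain ⟨w, rfl⟩ := hpE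
    intro δ hδ
    obtain ⟨g, hg, hgb⟩ := ridge_approx w Real.exp Real.continuous_exp hδ
    exact ⟨g, hg, fun x hx => hgb x hx⟩
  | zero =>
    intro δ hδ
    exact ⟨0, Submodule.zero_mem _, fun x hx => by simp [hδ.le]⟩
  | add p q _ _ hp' hq' =>
    intro δ hδ
    obtain ⟨g₁, hg₁, hb₁⟩ := hp' (δ/2) (by linarith)
    obtain ⟨g₂, hg₂, hb₂⟩ := hq' (δ/2) (by linarith)
    refine ⟨g₁ + g₂, Submodule.add_mem _ hg₁ hg₂, fun x hx => ?_⟩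
    have t1 := hb₁ x hx
    have t2 := hb₂ x hx
    simp only [Pi.add_apply, ContinuousMap.add_apply]
    calc |g₁ x + g₂ x - (p ⟨x, hx⟩ + q ⟨x, hx⟩)|
        = |(g₁ x - p ⟨x, hx⟩) + (g₂ x - q ⟨x, hx⟩)| := by ring_nf
      _ ≤ |g₁ x - p ⟨x, hx⟩| + |g₂ x - q ⟨x, hx⟩| := abs_add_le _ _
      _ ≤ δ := by linarith
  | smul c p _ hp' =>
    intro δ hδ
    rcases eq_or_ne c 0 with rfl | hc
    · exact ⟨0, Submodule.zero_mem _, fun x hx => by simp [hδ.le]⟩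
    · obtain ⟨g, hg, hb⟩ := hp' (δ/|c|) (div_pos hδ (abs_pos.2 hc))
      refine ⟨c • g, Submodule.smul_mem _ _ hg, fun x hx => ?_⟩
      have := hb x hx
      simp only [Pi.smul_apply, ContinuousMap.smul_apply, smul_eq_mul]
      rw [show c * g x - c * p ⟨x, hx⟩ = c * (g x - p ⟨x, hx⟩) by ring, abs_mul]
      calc |c| * |g x - p ⟨x, hx⟩| ≤ |c| * (δ/|c|) :=
            mul_le_mul_of_nonneg_left this (abs_nonneg c)
        _ = δ := by field_simp

/-- **Universal approximation with ReLU in L¹.**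
For every dimension `d ≥ 1`, every `f ∈ L¹(I_d)` (with `I_d = [0,1]^d`) and every `ε > 0`,
there is a single-hidden-layer ReLU network
`g x = ∑ j, α j * ReLU (⟪w j, x⟫ + b j)` with `∫_{I_d} |g x - f x| dx < ε`. -/
theorem relu_network_dense_L1
    (d : ℕ) (hd : 1 ≤ d) (f : (Fin d → ℝ) → ℝ)
    (hf : IntegrableOn f (Set.Icc (0 : Fin d → ℝ) 1)) (ε : ℝ) (hε : 0 < ε) :
    ∃ (n : ℕ), 1 ≤ n ∧ ∃ (α : Fin n → ℝ) (w : Fin n → Fin d → ℝ) (b : Fin n → ℝ),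
      ∫ x in Set.Icc (0 : Fin d → ℝ) 1,
        |(∑ j, α j * ReLU (∑ k, w j k * x k + b j)) - f x| < ε := by
  classical
  set K : Set (Fin d → ℝ) := Set.Icc (0 : Fin d → ℝ) 1 with hK
  have hKmeas : MeasurableSet K := measurableSet_Icc
  have hKvol : (volume K).toReal = 1 := by
    rw [hK, Real.volume_Icc_pi_toReal (by intro i; simp : (0 : Fin d → ℝ) ≤ 1)]
    simp
  set ε4 : ℝ := ε/8 with hε4
  have hε4pos : 0 < ε4 := by positivity
  -- Step 1: continuous approximation of f in L¹
  set f' : (Fin d → ℝ) → ℝ := K.indicator f with hf'def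
  have hf' : Integrable f' volume := (integrable_indicator_iff hKmeas).2 hf
  obtain ⟨g, gsupp, hgint, gcont, gint⟩ := hf'.exists_hasCompactSupport_integral_sub_le hε4pos
  -- Step 2: Stone-Weierstrass with exponential ridge functions
  obtain ⟨⟨p, hpA⟩, hpF⟩ :=
    ContinuousMap.exists_mem_subalgebra_near_continuous_of_separatesPoints
      (expAlg d) expAlg_separates (fun x : Kcube d => g ↑x)
      (gcont.comp continuous_subtype_val) ε4 hε4pos
  have hpspan : p ∈ Submodule.span ℝ (expSet d) :=
    Submodule.mem_toSubalgebra.1 hpA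
  -- Step 3: ReLU approximation of p
  obtain ⟨q, hqspan, hqb⟩ := span_exp_approx hpspan ε4 hε4pos
  have qcont : Continuous q := span_reluUnits_continuous hqspan
  -- Step 4: integral estimate for q
  have hqg : ∀ x ∈ K, |q x - g x| ≤ 2*ε4 := by
    intro x hx
    have h1 := hqb x hx
    have h2 := hpF ⟨x, hx⟩
    rw [Real.norm_eq_abs] at h2
    calc |q x - g x| = |(q x - p ⟨x, hx⟩) + (p ⟨x, hx⟩ - g x)| := by ring_nf
      _ ≤ |q x - p ⟨x, hx⟩| + |p ⟨x, hx⟩ - g x| := abs_add_le _ _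
      _ ≤ 2*ε4 := by
          have : |p ⟨x, hx⟩ - g x| < ε4 := h2
          linarith
  have intqg : IntegrableOn (fun x => |q x - g x|) K :=
    ((qcont.sub gcont).abs).continuousOn.integrableOn_compact isCompact_Icc
  have intgf : IntegrableOn (fun x => |g x - f x|) K :=
    ((gint.integrableOn.sub hf).abs)
  have intqf : IntegrableOn (fun x => |q x - f x|) K :=
    ((qcont.continuousOn.integrableOn_compact isCompact_Icc).sub hf).abs
  have step1 : ∫ x in K, |q x - f x| ≤ (∫ x in K, |q x - g x|) + ∫ x in K, |g x - f x| := by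
    rw [← integral_add intqg intgf]
    exact setIntegral_mono_on intqf (intqg.add intgf) hKmeas
      (fun x _ => abs_sub_le _ _ _)
  have step2 : ∫ x in K, |q x - g x| ≤ 2*ε4 := by
    have : ∫ x in K, |q x - g x| ≤ ∫ _x in K, (2*ε4) :=
      setIntegral_mono_on intqg (integrableOn_const measure_Icc_lt_top.ne) hKmeas hqg
    rwa [setIntegral_const, measureReal_def, hKvol, one_smul] at this
  have step3 : ∫ x in K, |g x - f x| ≤ ε4 := by
    have heq : ∫ x in K, |g x - f x| = ∫ x in K, ‖f' x - g x‖ := by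
      apply setIntegral_congr_fun hKmeas
      intro x hx
      show |g x - f x| = ‖f' x - g x‖
      rw [hf'def, Set.indicator_of_mem hx, Real.norm_eq_abs, abs_sub_comm]
    rw [heq]
    calc ∫ x in K, ‖f' x - g x‖ ≤ ∫ x, ‖f' x - g x‖ :=
          setIntegral_le_integral (hf'.sub gint).norm
            (Filter.Eventually.of_forall fun x => norm_nonneg _)
      _ ≤ ε4 := hgint
  have hqfinal : ∫ x in K, |q x - f x| < ε := by
    have : (2*ε4 : ℝ) + ε4 < ε := by rw [hε4]; linarith
    linarith
  -- Step 5: extract the finite network from q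
  obtain ⟨c, hsupp, hsum⟩ := Submodule.mem_span_set.1 hqspan
  set n₀ : ℕ := c.support.card with hn₀
  set e : ↥c.support ≃ Fin n₀ := c.support.equivFin with he
  have hmem : ∀ j : Fin n₀, ∃ (wv : Fin d → ℝ) (cv : ℝ),
      ((e.symm j : ↥c.support) : (Fin d → ℝ) → ℝ)
        = fun x => ReLU ((∑ k, wv k * x k) - cv) :=
    fun j => hsupp (e.symm j).2
  choose w0 c0 hwc using hmem
  have hqx : ∀ x, q x = ∑ j : Fin n₀,
      c ((e.symm j : ↥c.support) : (Fin d → ℝ) → ℝ) * ReLU ((∑ k, w0 j k * x k) - c0 j) := by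
    intro x
    have h1 : q x = ∑ g0 ∈ c.support, c g0 * g0 x := by
      rw [← hsum]
      rw [Finsupp.sum]
      rw [Finset.sum_apply]
      simp only [Pi.smul_apply, smul_eq_mul]
    rw [h1, ← Finset.sum_coe_sort]
    rw [← Equiv.sum_comp e.symm
      (fun a : ↥c.support => c (a : (Fin d → ℝ) → ℝ) * (a : (Fin d → ℝ) → ℝ) x)]
    apply Finset.sum_congr rfl
    intro j _
    rw [hwc j]
  -- build the final network with one padding unit
  set n : ℕ := n₀ + 1 with hn
  set α : Fin n → ℝ := Fin.snoc (fun j => c ((e.symm j : ↥c.support) : (Fin d → ℝ) → ℝ)) 0 with hα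
  set w : Fin n → Fin d → ℝ := Fin.snoc w0 0 with hw
  set b : Fin n → ℝ := Fin.snoc (fun j => -(c0 j)) 0 with hb
  have hdne : (d : ℝ) ≠ 0 := by
    have : (0:ℕ) < d := hd
    exact_mod_cast this.ne'
  have hnet : ∀ x : Fin d → ℝ,
      (∑ j, α j * ReLU (∑ k, w j k * x k + b j)) = q x := by
    intro x
    rw [Fin.sum_univ_castSucc]
    simp only [hα, hw, hb, Fin.snoc_castSucc, Fin.snoc_last, zero_mul, add_zero]
    rw [hqx x]
    apply Finset.sum_congr rfl
    intro j _
    simp only [sub_eq_add_neg]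
  refine ⟨n, by omega, α, w, b, ?_⟩
  simpa only [hnet] using hqfinal
end

section
/- For every d ≥ 1 and m ≥ 1, every vector-valued function f = (f_1, …, f_m) with each component f_i ∈ L¹(I_d), and every ε > 0, there exist an integer n ≥ 1, shared hidden-layer weights w_1, …, w_n ∈ ℝ^d and biases b_1, …, b_n ∈ ℝ, and output weights α_{ij} ∈ ℝ (1 ≤ i ≤ m, 1 ≤ j ≤ n), such that the multi-output ReLU network g_i(x) = Σ_{j=1}^n α_{ij} · ReLU(w_jᵀ x + b_j) satisfies Σ_{i=1}^m ∫_{I_d} |g_i(x) − f_i(x)| dx < ε. -/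
open MeasureTheory

namespace UATaux

lemma relu_of_nonneg {t : ℝ} (h : 0 ≤ t) : ReLU t = t := max_eq_left h
lemma relu_of_nonpos {t : ℝ} (h : t ≤ 0) : ReLU t = 0 := max_eq_right h
lemma relu_nonneg (t : ℝ) : 0 ≤ ReLU t := le_max_right _ _

/-- A hat function supported on `[a, a+2μ]`, built from three ReLUs. -/
noncomputable def hat (μ a t : ℝ) : ℝ :=
  (ReLU (t - a) - 2 * ReLU (t - a - μ) + ReLU (t - a - 2*μ)) / μ

lemma hat_nonneg {μ : ℝ} (hμ : 0 < μ) (a t : ℝ) : 0 ≤ hat μ a t := by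
  unfold hat
  apply div_nonneg _ hμ.le
  rcases le_total t a with h | h
  · rw [relu_of_nonpos (by linarith), relu_of_nonpos (by linarith),
      relu_of_nonpos (by linarith)]; norm_num
  rcases le_total t (a + μ) with h1 | h1
  · rw [relu_of_nonneg (by linarith), relu_of_nonpos (by linarith),
      relu_of_nonpos (by linarith)]; linarith
  rcases le_total t (a + 2*μ) with h2 | h2
  · rw [relu_of_nonneg (by linarith), relu_of_nonneg (by linarith),
      relu_of_nonpos (by linarith)]; linarith
  · rw [relu_of_nonneg (by linarith), relu_of_nonneg (by linarith),
      relu_of_nonneg (by linarith)]; linarith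

lemma hat_eq_zero {μ a t : ℝ} (h : t ≤ a ∨ a + 2*μ ≤ t) (hμ : 0 < μ) : hat μ a t = 0 := by
  unfold hat
  rcases h with h | h
  · rw [relu_of_nonpos (by linarith), relu_of_nonpos (by linarith),
      relu_of_nonpos (by linarith)]; ring
  · rw [relu_of_nonneg (by linarith), relu_of_nonneg (by linarith),
      relu_of_nonneg (by linarith)]; ring

/-- Partition of unity: the hats centered at `-R + j*μ`, `j = 0, …, N`, sum to 1 on `[-R, R]`. -/
lemma sum_hat {μ R t : ℝ} (hμ : 0 < μ) {N : ℕ} (hN : 2*R ≤ N * μ)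
    (ht : t ∈ Set.Icc (-R) R) :
    ∑ j ∈ Finset.range (N+1), hat μ (-R + j*μ - μ) t = 1 := by
  obtain ⟨ht1, ht2⟩ := ht
  set u : ℕ → ℝ := fun j => ReLU (t + R + μ - j*μ) with hu
  have key : ∀ j ∈ Finset.range (N+1), hat μ (-R + j*μ - μ) t
      = ((u j - u (j+1)) - (u (j+1) - u (j+2))) / μ := by
    intro j _
    unfold hat
    congr 1
    simp only [hu]
    push_cast
    have e1 : t - (-R + j*μ - μ) = t + R + μ - j*μ := by ring
    have e2 : t - (-R + j*μ - μ) - μ = t + R + μ - (j+1)*μ := by ring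
    have e3 : t - (-R + j*μ - μ) - 2*μ = t + R + μ - (j+2)*μ := by ring
    rw [e3, e2, e1]; ring
  rw [Finset.sum_congr rfl key, ← Finset.sum_div, Finset.sum_sub_distrib]
  have A1 : ∑ x ∈ Finset.range (N+1), (u x - u (x+1)) = u 0 - u (N+1) :=
    Finset.sum_range_sub' u (N+1)
  have A2 : ∑ x ∈ Finset.range (N+1), (u (x+1) - u (x+2)) = u 1 - u (N+2) :=
    Finset.sum_range_sub' (fun j => u (j+1)) (N+1)
  rw [A1, A2]
  have hu0 : u 0 = t + R + μ := by
    show ReLU (t + R + μ - (0:ℕ)*μ) = _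
    push_cast; rw [relu_of_nonneg (by linarith)]; ring
  have hu1 : u 1 = t + R := by
    have : t + R + μ - (1:ℕ)*μ = t + R := by push_cast; ring
    simp only [hu, this]; exact relu_of_nonneg (by linarith)
  have huN1 : u (N+1) = 0 := by
    apply relu_of_nonpos; push_cast; nlinarith
  have huN2 : u (N+2) = 0 := by
    apply relu_of_nonpos; push_cast; nlinarith
  rw [hu0, hu1, huN1, huN2]
  field_simp
  ring


lemma hat_def (μ a t : ℝ) : hat μ a t =
  (ReLU (t - a) - 2 * ReLU (t - a - μ) + ReLU (t - a - 2*μ)) / μ := rfl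

variable (d : ℕ)

/-- The generating set: single ReLU ridge units. -/
def S : Set ((Fin d → ℝ) → ℝ) :=
  {g | ∃ (w : Fin d → ℝ) (b : ℝ), g = fun x => ReLU ((∑ k, w k * x k) + b)}

/-- The space of single-hidden-layer ReLU networks (single output). -/
noncomputable def V : Submodule ℝ ((Fin d → ℝ) → ℝ) := Submodule.span ℝ (S d)

variable {d}

lemma hatfun_mem {μ : ℝ} (hμ : 0 < μ) (a : ℝ) (w : Fin d → ℝ) :
    (fun x => hat μ a (∑ k, w k * x k)) ∈ V d := by
  have m0 : (fun x => ReLU ((∑ k, w k * x k) + (-a))) ∈ V d :=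
    Submodule.subset_span ⟨w, -a, rfl⟩
  have m1 : (fun x => ReLU ((∑ k, w k * x k) + (-a - μ))) ∈ V d :=
    Submodule.subset_span ⟨w, -a - μ, rfl⟩
  have m2 : (fun x => ReLU ((∑ k, w k * x k) + (-a - 2*μ))) ∈ V d :=
    Submodule.subset_span ⟨w, -a - 2*μ, rfl⟩
  have heq : (fun x => hat μ a (∑ k, w k * x k)) =
      (1/μ) • (fun x : Fin d → ℝ => ReLU ((∑ k, w k * x k) + (-a)))
      + (-2/μ) • (fun x : Fin d → ℝ => ReLU ((∑ k, w k * x k) + (-a - μ)))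
      + (1/μ) • (fun x : Fin d → ℝ => ReLU ((∑ k, w k * x k) + (-a - 2*μ))) := by
    funext x
    simp only [Pi.add_apply, Pi.smul_apply, smul_eq_mul, hat_def]
    have e0 : (∑ k, w k * x k) + (-a) = (∑ k, w k * x k) - a := by ring
    have e1 : (∑ k, w k * x k) + (-a - μ) = (∑ k, w k * x k) - a - μ := by ring
    have e2 : (∑ k, w k * x k) + (-a - 2*μ) = (∑ k, w k * x k) - a - 2*μ := by ring
    rw [e0, e1, e2]
    field_simp
    ring
  rw [heq]
  exact Submodule.add_mem _ (Submodule.add_mem _ (Submodule.smul_mem _ _ m0)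
    (Submodule.smul_mem _ _ m1)) (Submodule.smul_mem _ _ m2)

/-- Any continuous ridge function `x ↦ h (⟪w, x⟫)` can be uniformly approximated on the
cube by a member of `V d`. -/
lemma ridge_approx (h : ℝ → ℝ) (hc : Continuous h) (w : Fin d → ℝ) {ε : ℝ} (hε : 0 < ε) :
    ∃ g ∈ V d, ∀ x ∈ Set.Icc (0 : Fin d → ℝ) 1, |g x - h (∑ k, w k * x k)| ≤ ε := by
  set R : ℝ := (∑ k, |w k|) + 1 with hR
  have hR0 : 0 < R := by
    have : 0 ≤ ∑ k, |w k| := Finset.sum_nonneg fun k _ => abs_nonneg _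
    linarith
  -- the inner product lies in [-R, R] on the cube
  have hrange : ∀ x ∈ Set.Icc (0 : Fin d → ℝ) 1, (∑ k, w k * x k) ∈ Set.Icc (-R) R := by
    intro x hx
    obtain ⟨hx0, hx1⟩ := hx
    have habs : |∑ k, w k * x k| ≤ ∑ k, |w k| := by
      calc |∑ k, w k * x k| ≤ ∑ k, |w k * x k| := Finset.abs_sum_le_sum_abs _ _
        _ ≤ ∑ k, |w k| := by
            apply Finset.sum_le_sum
            intro k _
            rw [abs_mul]
            have h0 : (0:ℝ) ≤ x k := hx0 k
            have h1' : x k ≤ (1:ℝ) := hx1 k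
            have h1 : |x k| ≤ 1 := by rw [abs_le]; exact ⟨by linarith, h1'⟩
            nlinarith [abs_nonneg (w k)]
    have := abs_le.mp habs
    constructor <;> [linarith [this.1]; linarith [this.2]]
  -- uniform continuity of h on [-R, R]
  have huc : UniformContinuousOn h (Set.Icc (-R) R) :=
    (isCompact_Icc).uniformContinuousOn_of_continuous hc.continuousOn
  rw [Metric.uniformContinuousOn_iff] at huc
  obtain ⟨δ, hδ0, hδ⟩ := huc ε hε
  obtain ⟨N, hNgt⟩ := exists_nat_gt (2*R/δ)
  have hN0 : 0 < (N:ℝ) := lt_trans (by positivity) hNgt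
  set μ : ℝ := 2*R/N with hμdef
  have hμ0 : 0 < μ := by positivity
  have hμδ : μ < δ := by
    rw [hμdef, div_lt_iff₀ hN0]
    have h1 : (2*R/δ) * δ < N * δ := mul_lt_mul_of_pos_right hNgt hδ0
    have h2 : (2*R/δ) * δ = 2*R := by field_simp
    nlinarith
  have hNμeq : (N:ℝ) * μ = 2*R := by rw [hμdef]; field_simp
  have hNμ : 2*R ≤ N * μ := le_of_eq hNμeq.symm
  refine ⟨fun x => ∑ j ∈ Finset.range (N+1),
      h (-R + j*μ) * hat μ (-R + j*μ - μ) (∑ k, w k * x k), ?_, ?_⟩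
  · -- membership in V
    have : (fun x => ∑ j ∈ Finset.range (N+1),
        h (-R + j*μ) * hat μ (-R + j*μ - μ) (∑ k, w k * x k))
        = ∑ j ∈ Finset.range (N+1),
          (h (-R + j*μ)) • (fun x : Fin d → ℝ => hat μ (-R + j*μ - μ) (∑ k, w k * x k)) := by
      funext x
      rw [Finset.sum_apply]
      simp [smul_eq_mul]
    rw [this]
    exact Submodule.sum_mem _ fun j _ => Submodule.smul_mem _ _ (hatfun_mem hμ0 _ w)
  · -- approximation bound
    intro x hx
    set t : ℝ := ∑ k, w k * x k with htdef
    have htmem : t ∈ Set.Icc (-R) R := hrange x hx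
    have hsum1 : ∑ j ∈ Finset.range (N+1), hat μ (-R + j*μ - μ) t = 1 :=
      sum_hat hμ0 hNμ htmem
    have hdiff : (∑ j ∈ Finset.range (N+1), h (-R + j*μ) * hat μ (-R + j*μ - μ) t) - h t
        = ∑ j ∈ Finset.range (N+1), (h (-R + j*μ) - h t) * hat μ (-R + j*μ - μ) t := by
      have e : ∀ j ∈ Finset.range (N+1), (h (-R + j*μ) - h t) * hat μ (-R + j*μ - μ) t
          = h (-R + j*μ) * hat μ (-R + j*μ - μ) t - h t * hat μ (-R + j*μ - μ) t :=
        fun j _ => by ring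
      rw [Finset.sum_congr rfl e, Finset.sum_sub_distrib, ← Finset.mul_sum, hsum1, mul_one]
    rw [hdiff]
    calc |∑ j ∈ Finset.range (N+1), (h (-R + j*μ) - h t) * hat μ (-R + j*μ - μ) t|
        ≤ ∑ j ∈ Finset.range (N+1), |(h (-R + j*μ) - h t) * hat μ (-R + j*μ - μ) t| :=
          Finset.abs_sum_le_sum_abs _ _
      _ ≤ ∑ j ∈ Finset.range (N+1), ε * hat μ (-R + j*μ - μ) t := by
          apply Finset.sum_le_sum
          intro j hj
          rw [abs_mul, abs_of_nonneg (hat_nonneg hμ0 _ _)]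
          by_cases hz : hat μ (-R + j*μ - μ) t = 0
          · rw [hz]; simp
          apply mul_le_mul_of_nonneg_right _ (hat_nonneg hμ0 _ _)
          -- hat ≠ 0 ⟹ |t - (-R + jμ)| < μ < δ
          have hsup : ¬(t ≤ -R + j*μ - μ ∨ (-R + j*μ - μ) + 2*μ ≤ t) := by
            intro hcon; exact hz (hat_eq_zero hcon hμ0)
          push_neg at hsup
          obtain ⟨hl, hr⟩ := hsup
          have hdist : dist (-R + j*μ) t < δ := by
            rw [Real.dist_eq, abs_lt]; constructor <;> [linarith; linarith]
          have hnode : (-R + j*μ) ∈ Set.Icc (-R) R := by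
            have hj' : (j:ℝ) ≤ N := by
              exact_mod_cast Nat.lt_succ_iff.mp (Finset.mem_range.mp hj)
            have hj0 : (0:ℝ) ≤ (j:ℝ) * μ := mul_nonneg (Nat.cast_nonneg j) hμ0.le
            have hjN : (j:ℝ) * μ ≤ (N:ℝ) * μ := mul_le_mul_of_nonneg_right hj' hμ0.le
            constructor
            · linarith
            · rw [hNμeq] at hjN; linarith
          have := hδ _ hnode _ htmem hdist
          rw [Real.dist_eq] at this
          exact this.le
      _ = ε * ∑ j ∈ Finset.range (N+1), hat μ (-R + j*μ - μ) t := by rw [Finset.mul_sum]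
      _ = ε := by rw [hsum1, mul_one]


/-- The unit cube as a subtype. -/
abbrev Cube (d : ℕ) := (Set.Icc (0 : Fin d → ℝ) 1)

instance : CompactSpace (Cube d) := isCompact_iff_compactSpace.mp isCompact_Icc

/-- Ridge cosine as a continuous map on the cube. -/
noncomputable def cosRidge (d : ℕ) (w : Fin d → ℝ) (b : ℝ) : C(Cube d, ℝ) :=
  ⟨fun x => Real.cos ((∑ k, w k * (x : Fin d → ℝ) k) + b), by
    apply Real.continuous_cos.comp
    apply Continuous.add _ continuous_const
    exact continuous_finset_sum _ fun k _ =>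
      continuous_const.mul ((continuous_apply k).comp continuous_subtype_val)⟩

def Scos (d : ℕ) : Set C(Cube d, ℝ) := {g | ∃ w b, g = cosRidge d w b}

noncomputable def Mcos (d : ℕ) : Submodule ℝ C(Cube d, ℝ) := Submodule.span ℝ (Scos d)

lemma cosRidge_mul (w w' : Fin d → ℝ) (b b' : ℝ) :
    cosRidge d w b * cosRidge d w' b'
      = (1/2 : ℝ) • cosRidge d (w + w') (b + b') + (1/2 : ℝ) • cosRidge d (w - w') (b - b') := by
  ext x
  simp only [ContinuousMap.mul_apply, ContinuousMap.add_apply, ContinuousMap.smul_apply,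
    cosRidge, ContinuousMap.coe_mk, smul_eq_mul]
  have hs : ∀ c c' : Fin d → ℝ, (∑ k, (c k + c' k) * (x : Fin d → ℝ) k)
      = (∑ k, c k * (x : Fin d → ℝ) k) + ∑ k, c' k * (x : Fin d → ℝ) k := by
    intro c c'
    rw [← Finset.sum_add_distrib]
    exact Finset.sum_congr rfl fun k _ => by ring
  have e1 : (∑ k, (w + w') k * (x : Fin d → ℝ) k) + (b + b')
      = ((∑ k, w k * (x : Fin d → ℝ) k) + b) + ((∑ k, w' k * (x : Fin d → ℝ) k) + b') := by
    simp only [Pi.add_apply, hs]; ring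
  have e2 : (∑ k, (w - w') k * (x : Fin d → ℝ) k) + (b - b')
      = ((∑ k, w k * (x : Fin d → ℝ) k) + b) - ((∑ k, w' k * (x : Fin d → ℝ) k) + b') := by
    have : ∀ k, (w - w') k * (x : Fin d → ℝ) k
        = w k * (x : Fin d → ℝ) k - w' k * (x : Fin d → ℝ) k := fun k => by
      simp [Pi.sub_apply]; ring
    rw [Finset.sum_congr rfl fun k _ => this k, Finset.sum_sub_distrib]; ring
  have key : ∀ A B : ℝ, Real.cos A * Real.cos B
      = 1/2 * Real.cos (A + B) + 1/2 * Real.cos (A - B) := by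
    intro A B
    rw [Real.cos_add, Real.cos_sub]
    ring
  rw [e1, e2, key]

lemma Mcos_mul_gen {ψ φ : C(Cube d, ℝ)} (hψ : ψ ∈ Scos d) (hφ : φ ∈ Mcos d) :
    ψ * φ ∈ Mcos d := by
  induction hφ using Submodule.span_induction with
  | mem g' hg' =>
    obtain ⟨w, b, rfl⟩ := hψ
    obtain ⟨w', b', rfl⟩ := hg'
    rw [cosRidge_mul]
    exact Submodule.add_mem _
      (Submodule.smul_mem _ _ (Submodule.subset_span ⟨_, _, rfl⟩))
      (Submodule.smul_mem _ _ (Submodule.subset_span ⟨_, _, rfl⟩))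
  | zero => rw [mul_zero]; exact Submodule.zero_mem _
  | add a c _ _ ha hc => rw [mul_add]; exact Submodule.add_mem _ ha hc
  | smul r a _ ha => rw [mul_smul_comm]; exact Submodule.smul_mem _ _ ha

lemma Mcos_mul_mem {ψ φ : C(Cube d, ℝ)} (hψ : ψ ∈ Mcos d) (hφ : φ ∈ Mcos d) :
    ψ * φ ∈ Mcos d := by
  induction hψ using Submodule.span_induction with
  | mem g hg => exact Mcos_mul_gen hg hφ
  | zero => rw [zero_mul]; exact Submodule.zero_mem _
  | add a c _ _ ha hc => rw [add_mul]; exact Submodule.add_mem _ ha hc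
  | smul r a _ ha => rw [smul_mul_assoc]; exact Submodule.smul_mem _ _ ha

lemma one_mem_Mcos : (1 : C(Cube d, ℝ)) ∈ Mcos d := by
  have : (1 : C(Cube d, ℝ)) = cosRidge d 0 0 := by
    ext x
    simp [cosRidge]
  rw [this]
  exact Submodule.subset_span ⟨_, _, rfl⟩

lemma adjoin_le_Mcos {ψ : C(Cube d, ℝ)} (hψ : ψ ∈ Algebra.adjoin ℝ (Scos d)) :
    ψ ∈ Mcos d := by
  induction hψ using Algebra.adjoin_induction with
  | mem g hg => exact Submodule.subset_span hg
  | algebraMap r =>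
    have : (algebraMap ℝ C(Cube d, ℝ)) r = r • (1 : C(Cube d, ℝ)) :=
      (Algebra.algebraMap_eq_smul_one r)
    rw [this]
    exact Submodule.smul_mem _ _ one_mem_Mcos
  | add a c _ _ ha hc => exact Submodule.add_mem _ ha hc
  | mul a c _ _ ha hc => exact Mcos_mul_mem ha hc

lemma separates : (Algebra.adjoin ℝ (Scos d)).SeparatesPoints := by
  intro x y hxy
  have hk : ∃ k, (x : Fin d → ℝ) k ≠ (y : Fin d → ℝ) k := by
    by_contra hcon
    push_neg at hcon
    exact hxy (Subtype.ext (funext hcon))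
  obtain ⟨k, hk⟩ := hk
  set w : Fin d → ℝ := fun j => if j = k then 1 else 0 with hw
  have hsum : ∀ z : Cube d, (∑ j, w j * (z : Fin d → ℝ) j) = (z : Fin d → ℝ) k := by
    intro z
    rw [hw]
    simp [Finset.sum_ite_eq']
  refine ⟨cosRidge d w (-(Real.pi/2)), ⟨cosRidge d w (-(Real.pi/2)),
    Algebra.subset_adjoin ⟨w, -(Real.pi/2), rfl⟩, rfl⟩, ?_⟩
  simp only [cosRidge, ContinuousMap.coe_mk, hsum]
  have hform : ∀ z : Cube d, Real.cos ((z : Fin d → ℝ) k + -(Real.pi/2))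
      = Real.sin ((z : Fin d → ℝ) k) := by
    intro z
    rw [← sub_eq_add_neg, Real.cos_sub_pi_div_two]
  rw [hform x, hform y]
  have hmem : ∀ z : Cube d, (z : Fin d → ℝ) k ∈ Set.Icc (-(Real.pi/2)) (Real.pi/2) := by
    intro z
    obtain ⟨hz0, hz1⟩ := z.2
    have h0 : (0:ℝ) ≤ (z : Fin d → ℝ) k := hz0 k
    have h1 : (z : Fin d → ℝ) k ≤ 1 := hz1 k
    have hπ : (3:ℝ) < Real.pi := Real.pi_gt_three
    constructor <;> [linarith; linarith]
  intro heq
  exact hk (Real.strictMonoOn_sin.injOn (hmem x) (hmem y) heq)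

/-- Everything in `Mcos` is uniformly approximable on the cube by elements of `V`. -/
lemma approx_of_mem_Mcos {ψ : C(Cube d, ℝ)} (hψ : ψ ∈ Mcos d) :
    ∀ ε : ℝ, 0 < ε → ∃ g ∈ V d, ∀ x (hx : x ∈ Set.Icc (0 : Fin d → ℝ) 1),
      |g x - ψ ⟨x, hx⟩| ≤ ε := by
  induction hψ using Submodule.span_induction with
  | mem g hg =>
    obtain ⟨w, b, rfl⟩ := hg
    intro ε hε
    obtain ⟨g, hgV, hgap⟩ := ridge_approx (fun t => Real.cos (t + b))
      (Real.continuous_cos.comp (continuous_id.add continuous_const)) w hε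
    exact ⟨g, hgV, fun x hx => hgap x hx⟩
  | zero =>
    intro ε hε
    exact ⟨0, Submodule.zero_mem _, fun x hx => by simp [hε.le]⟩
  | add a c _ _ ha hc =>
    intro ε hε
    obtain ⟨g1, hg1V, hg1⟩ := ha (ε/2) (by linarith)
    obtain ⟨g2, hg2V, hg2⟩ := hc (ε/2) (by linarith)
    refine ⟨g1 + g2, Submodule.add_mem _ hg1V hg2V, fun x hx => ?_⟩
    have h1 := hg1 x hx
    have h2 := hg2 x hx
    simp only [Pi.add_apply, ContinuousMap.add_apply]
    calc |g1 x + g2 x - (a ⟨x, hx⟩ + c ⟨x, hx⟩)|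
        = |(g1 x - a ⟨x, hx⟩) + (g2 x - c ⟨x, hx⟩)| := by ring_nf
      _ ≤ |g1 x - a ⟨x, hx⟩| + |g2 x - c ⟨x, hx⟩| := abs_add_le _ _
      _ ≤ ε := by linarith
  | smul r a _ ha =>
    intro ε hε
    obtain ⟨g, hgV, hg⟩ := ha (ε / (|r| + 1)) (by positivity)
    refine ⟨r • g, Submodule.smul_mem _ _ hgV, fun x hx => ?_⟩
    have h1 := hg x hx
    simp only [Pi.smul_apply, ContinuousMap.smul_apply, smul_eq_mul]
    rw [← mul_sub, abs_mul]
    calc |r| * |g x - a ⟨x, hx⟩| ≤ |r| * (ε / (|r| + 1)) :=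
        mul_le_mul_of_nonneg_left h1 (abs_nonneg r)
      _ ≤ ε := by
        rw [mul_div_assoc']
        rw [div_le_iff₀ (by positivity)]
        nlinarith [abs_nonneg r]


/-- Every member of `V` is continuous. -/
lemma continuous_of_mem_V {g : (Fin d → ℝ) → ℝ} (hg : g ∈ V d) : Continuous g := by
  induction hg using Submodule.span_induction with
  | mem g hgS =>
    obtain ⟨w, b, rfl⟩ := hgS
    have : Continuous fun x : Fin d → ℝ => (∑ k, w k * x k) + b :=
      Continuous.add (continuous_finset_sum _ fun k _ =>
        continuous_const.mul (continuous_apply k)) continuous_const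
    exact (this.max continuous_const)
  | zero => exact continuous_const
  | add a c _ _ ha hc => exact ha.add hc
  | smul r a _ ha => exact ha.const_smul r

/-- Single-output L¹ approximation by members of `V`. -/
lemma single_output {f : (Fin d → ℝ) → ℝ}
    (hf : IntegrableOn f (Set.Icc (0 : Fin d → ℝ) 1)) {ε : ℝ} (hε : 0 < ε) :
    ∃ g ∈ V d, ∫ x in Set.Icc (0 : Fin d → ℝ) 1, |g x - f x| < ε := by
  set K := Set.Icc (0 : Fin d → ℝ) 1 with hK
  have hKm : MeasurableSet K := measurableSet_Icc
  have hKc : IsCompact K := isCompact_Icc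
  set C : ℝ := (volume K).toReal with hC
  have hC0 : 0 ≤ C := ENNReal.toReal_nonneg
  -- step 1 : continuous approximation of the zero-extension
  have hF : Integrable (K.indicator f) volume := (integrable_indicator_iff hKm).mpr hf
  obtain ⟨φ, _, hφint, hφcont, hφInt⟩ :=
    hF.exists_hasCompactSupport_integral_sub_le (ε := ε/4) (by linarith)
  -- step 2 : Stone–Weierstrass on the cube
  set ε₁ : ℝ := ε/(8*(C+1)) with hε₁
  have hε₁0 : 0 < ε₁ := by positivity
  obtain ⟨ψ, hψ⟩ := ContinuousMap.exists_mem_subalgebra_near_continuous_of_separatesPoints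
    (Algebra.adjoin ℝ (Scos d)) separates (fun x : Cube d => φ (x : Fin d → ℝ))
    (hφcont.comp continuous_subtype_val) ε₁ hε₁0
  -- step 3 : approximate ψ by a ReLU network
  obtain ⟨g, hgV, hgψ⟩ := approx_of_mem_Mcos (adjoin_le_Mcos ψ.2) ε₁ hε₁0
  refine ⟨g, hgV, ?_⟩
  have hgcont : Continuous g := continuous_of_mem_V hgV
  -- pointwise : |g - φ| ≤ 2 ε₁ on K
  have hgφ : ∀ x ∈ K, |g x - φ x| ≤ 2*ε₁ := by
    intro x hx
    have h1 := hgψ x hx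
    have h2 := hψ ⟨x, hx⟩
    rw [Real.norm_eq_abs] at h2
    calc |g x - φ x| = |(g x - (ψ : C(Cube d, ℝ)) ⟨x, hx⟩)
        + ((ψ : C(Cube d, ℝ)) ⟨x, hx⟩ - φ x)| := by ring_nf
      _ ≤ |g x - (ψ : C(Cube d, ℝ)) ⟨x, hx⟩| + |(ψ : C(Cube d, ℝ)) ⟨x, hx⟩ - φ x| := abs_add_le _ _
      _ ≤ 2*ε₁ := by linarith
  -- integrability facts
  have hgK : IntegrableOn g K := hgcont.continuousOn.integrableOn_compact hKc
  have hφK : IntegrableOn φ K := hφcont.continuousOn.integrableOn_compact hKc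
  have hint1 : IntegrableOn (fun x => |g x - φ x|) K := (hgK.sub hφK).abs
  have hint2 : IntegrableOn (fun x => |φ x - f x|) K := ((hφK.sub hf).abs)
  have hint0 : IntegrableOn (fun x => |g x - f x|) K := (hgK.sub hf).abs
  -- the triangle inequality under the integral
  have step1 : ∫ x in K, |g x - f x| ≤ (∫ x in K, |g x - φ x|) + ∫ x in K, |φ x - f x| := by
    rw [← integral_add hint1 hint2]
    apply setIntegral_mono_on hint0 (hint1.add hint2) hKm
    intro x hx
    exact abs_sub_le _ _ _
  -- bound the first piece
  have step2 : ∫ x in K, |g x - φ x| ≤ 2*ε₁ * C := by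
    have : ∫ x in K, (2*ε₁) ∂volume = 2*ε₁ * C := by
      rw [setIntegral_const, smul_eq_mul, hC, measureReal_def]; ring
    rw [← this]
    exact setIntegral_mono_on hint1 (integrableOn_const hKc.measure_lt_top.ne) hKm
      fun x hx => hgφ x hx
  -- bound the second piece by the global integral
  have step3 : ∫ x in K, |φ x - f x| ≤ ε/4 := by
    have heqK : ∀ x ∈ K, |φ x - f x| = ‖K.indicator f x - φ x‖ := by
      intro x hx
      rw [Set.indicator_of_mem hx, Real.norm_eq_abs, abs_sub_comm]
    have h1 : ∫ x in K, |φ x - f x| = ∫ x in K, ‖K.indicator f x - φ x‖ :=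
      setIntegral_congr_fun hKm heqK
    rw [h1]
    have h2 : ∫ x in K, ‖K.indicator f x - φ x‖ ≤ ∫ x, ‖K.indicator f x - φ x‖ :=
      setIntegral_le_integral ((hF.sub hφInt).norm)
        (Filter.Eventually.of_forall fun x => norm_nonneg _)
    linarith
  have hfinal : 2*ε₁ * C ≤ ε/4 := by
    rw [hε₁]
    have e : 2*(ε/(8*(C+1)))*C = (ε*C)/(4*(C+1)) := by
      field_simp
      ring
    rw [e, div_le_div_iff₀ (by positivity) (by norm_num)]
    nlinarith
  linarith


end UATaux

/-- **Universal approximation with ReLU, multiple outputs.**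
For every `d ≥ 1`, `m ≥ 1`, every vector-valued `f = (f_1, …, f_m)` with each component
in `L¹(I_d)`, and every `ε > 0`, there is a single-hidden-layer ReLU network with shared
hidden weights/biases and output weights `α i j` whose outputs
`g i x = ∑ j, α i j * ReLU (⟪w j, x⟫ + b j)` satisfy
`∑ i, ∫_{I_d} |g i x - f i x| dx < ε`. -/
theorem multi_output_relu_network_dense_L1
    (d m : ℕ) (hd : 1 ≤ d) (hm : 1 ≤ m)
    (f : Fin m → (Fin d → ℝ) → ℝ)
    (hf : ∀ i, IntegrableOn (f i) (Set.Icc (0 : Fin d → ℝ) 1))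
    (ε : ℝ) (hε : 0 < ε) :
    ∃ (n : ℕ), 1 ≤ n ∧ ∃ (w : Fin n → Fin d → ℝ) (b : Fin n → ℝ)
      (α : Fin m → Fin n → ℝ),
      ∑ i, ∫ x in Set.Icc (0 : Fin d → ℝ) 1,
        |(∑ j, α i j * ReLU (∑ k, w j k * x k + b j)) - f i x| < ε := by
  classical
  have hm' : (0:ℝ) < (m:ℝ) := by exact_mod_cast hm
  have hεm : 0 < ε / m := by positivity
  -- approximate each component
  have hsingle : ∀ i, ∃ g ∈ UATaux.V d,
      ∫ x in Set.Icc (0 : Fin d → ℝ) 1, |g x - f i x| < ε / m :=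
    fun i => UATaux.single_output (hf i) hεm
  choose g hgV hgI using hsingle
  -- put all networks over a common finite set of units
  have hfin : ∀ i, ∃ T : Finset ((Fin d → ℝ) → ℝ),
      ↑T ⊆ UATaux.S d ∧ g i ∈ Submodule.span ℝ (T : Set ((Fin d → ℝ) → ℝ)) :=
    fun i => Submodule.mem_span_finite_of_mem_span (hgV i)
  choose T hTS hgT using hfin
  set u₀ : (Fin d → ℝ) → ℝ := fun x => ReLU ((∑ k, (0 : Fin d → ℝ) k * x k) + 1) with hu₀
  have hu₀S : u₀ ∈ UATaux.S d := ⟨0, 1, rfl⟩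
  set Tfull : Finset ((Fin d → ℝ) → ℝ) := insert u₀ (Finset.univ.biUnion T) with hTfull
  have hTfullS : ↑Tfull ⊆ UATaux.S d := by
    intro t ht
    rw [hTfull, Finset.coe_insert] at ht
    rcases ht with rfl | ht
    · exact hu₀S
    · rw [Finset.coe_biUnion] at ht
      simp only [Set.mem_iUnion] at ht
      obtain ⟨i, _, hti⟩ := ht
      exact hTS i hti
  have hgTfull : ∀ i, g i ∈ Submodule.span ℝ (Tfull : Set ((Fin d → ℝ) → ℝ)) := by
    intro i
    apply Submodule.span_mono _ (hgT i)
    rw [hTfull, Finset.coe_insert]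
    intro t ht
    right
    rw [Finset.coe_biUnion]
    simp only [Set.mem_iUnion]
    exact ⟨i, Finset.mem_univ i, ht⟩
  -- coefficients
  have hcoef : ∀ i, ∃ c : ((Fin d → ℝ) → ℝ) → ℝ,
      ∑ t ∈ Tfull, c t • t = g i := fun i => (Submodule.mem_span_finset.mp (hgTfull i)).imp fun _ h => h.2
  choose c hc using hcoef
  -- enumerate units
  set n : ℕ := Tfull.card with hn
  have hn1 : 1 ≤ n := Finset.card_pos.mpr ⟨u₀, Finset.mem_insert_self _ _⟩
  set e : Fin n ≃ {t // t ∈ Tfull} := Tfull.equivFin.symm with he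
  have hwb : ∀ t : {t // t ∈ Tfull}, ∃ (w : Fin d → ℝ) (b : ℝ),
      (t : (Fin d → ℝ) → ℝ) = fun x => ReLU ((∑ k, w k * x k) + b) :=
    fun t => hTfullS t.2
  choose W B hWB using hwb
  refine ⟨n, hn1, fun j => W (e j), fun j => B (e j), fun i j => c i ((e j : _)), ?_⟩
  -- identify the network with g i
  have hnet : ∀ i x, (∑ j, c i ((e j : _)) * ReLU (∑ k, W (e j) k * x k + B (e j)))
      = g i x := by
    intro i x
    have h1 : ∀ j : Fin n, c i ((e j : _)) * ReLU (∑ k, W (e j) k * x k + B (e j))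
        = c i ((e j : _)) * ((e j : (Fin d → ℝ) → ℝ) x) := by
      intro j
      rw [hWB (e j)]
    rw [Finset.sum_congr rfl fun j _ => h1 j]
    rw [Equiv.sum_comp e (fun t : {t // t ∈ Tfull} => c i (t : _) * ((t : (Fin d → ℝ) → ℝ) x))]
    rw [Finset.sum_coe_sort Tfull (fun t => c i t * t x)]
    have := congrFun (hc i) x
    rw [Finset.sum_apply] at this
    simp only [Pi.smul_apply, smul_eq_mul] at this
    exact this
  have hkey : ∀ i, (∫ x in Set.Icc (0 : Fin d → ℝ) 1,
      |(∑ j, c i ((e j : _)) * ReLU (∑ k, W (e j) k * x k + B (e j))) - f i x|)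
      = ∫ x in Set.Icc (0 : Fin d → ℝ) 1, |g i x - f i x| := by
    intro i
    congr 1
    funext x
    rw [hnet i x]
  calc ∑ i, ∫ x in Set.Icc (0 : Fin d → ℝ) 1,
        |(∑ j, c i ((e j : _)) * ReLU (∑ k, W (e j) k * x k + B (e j))) - f i x|
      = ∑ i, ∫ x in Set.Icc (0 : Fin d → ℝ) 1, |g i x - f i x| :=
        Finset.sum_congr rfl fun i _ => hkey i
    _ < ∑ _i : Fin m, ε / m := Finset.sum_lt_sum_of_nonempty
        (Finset.univ_nonempty_iff.mpr (Fin.pos_iff_nonempty.mp hm)) fun i _ => hgI i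
    _ = ε := by
        rw [Finset.sum_const, Finset.card_univ, Fintype.card_fin, nsmul_eq_mul]
        field_simp
end

section
/- For every d ≥ 1 and m ≥ 1, every vector-valued function f = (f_1, …, f_m) with each component f_i ∈ L¹(I_d) measurable, and every ε > 0, there exist an integer n ≥ 1, shared hidden-layer weights w_1, …, w_n ∈ ℝ^d, biases b_1, …, b_n ∈ ℝ, and output weights α_{ij} ∈ ℝ such that the multi-output ReLU network g_i(x) = Σ_{j=1}^n α_{ij} · ReLU(w_jᵀ x + b_j) satisfies, for every i = 1, …, m, ∫_{I_d} |softmax(g(x))_i − softmax(f(x))_i| dx < ε, where g(x) = (g_1(x), …, g_m(x)). -/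
open MeasureTheory

/-- Softmax of a vector `y ∈ ℝ^m`: `softmax y i = exp (y i) / ∑ k, exp (y k)`. -/
noncomputable def softmax {m : ℕ} (y : Fin m → ℝ) (i : Fin m) : ℝ :=
  Real.exp (y i) / ∑ k, Real.exp (y k)

namespace SMAux

lemma relu_nonneg (t : ℝ) : 0 ≤ ReLU t := le_max_right _ _
lemma relu_of_nonneg {t : ℝ} (h : 0 ≤ t) : ReLU t = t := max_eq_left h
lemma relu_of_nonpos {t : ℝ} (h : t ≤ 0) : ReLU t = 0 := max_eq_right h
lemma continuous_relu : Continuous ReLU := continuous_id.max continuous_const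

lemma exp_abs_sub (a b : ℝ) :
    |Real.exp a - Real.exp b| ≤ (Real.exp a + Real.exp b) * |a - b| := by
  wlog hab : b ≤ a generalizing a b
  · rw [abs_sub_comm, abs_sub_comm a b, add_comm]
    exact this _ _ (le_of_not_ge hab)
  have h1 : Real.exp a - Real.exp b ≤ (a - b) * Real.exp a := by
    have h := Real.add_one_le_exp (b - a)
    have hpos := Real.exp_pos a
    have k1 : (b - a + 1) * Real.exp a ≤ Real.exp b := by
      have := mul_le_mul_of_nonneg_right h hpos.le
      rwa [← Real.exp_add, sub_add_cancel] at this
    nlinarith [k1]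
  have h2 : 0 ≤ Real.exp a - Real.exp b := by
    have := Real.exp_le_exp.2 hab; linarith
  rw [abs_of_nonneg h2, abs_of_nonneg (by linarith : (0:ℝ) ≤ a - b)]
  nlinarith [Real.exp_pos b]

lemma softmax_lipschitz {m : ℕ} (y z : Fin m → ℝ) (i : Fin m) :
    |softmax y i - softmax z i| ≤ 4 * ∑ k, |y k - z k| := by
  classical
  have hne : (Finset.univ : Finset (Fin m)).Nonempty := ⟨i, Finset.mem_univ i⟩
  set Y := ∑ k, Real.exp (y k) with hY
  set Z := ∑ k, Real.exp (z k) with hZ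
  have hYpos : 0 < Y := Finset.sum_pos (fun k _ => Real.exp_pos _) hne
  have hZpos : 0 < Z := Finset.sum_pos (fun k _ => Real.exp_pos _) hne
  set S := ∑ k, |y k - z k| with hS
  have hSnn : 0 ≤ S := Finset.sum_nonneg fun k _ => abs_nonneg _
  have habs : ∀ k, |y k - z k| ≤ S := fun k =>
    Finset.single_le_sum (f := fun k => |y k - z k|) (fun k _ => abs_nonneg _) (Finset.mem_univ k)
  have hrw : softmax y i - softmax z i
      = (∑ k, (Real.exp (y i + z k) - Real.exp (z i + y k))) / (Y * Z) := by
    unfold softmax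
    rw [div_sub_div _ _ (ne_of_gt hYpos) (ne_of_gt hZpos)]
    congr 1
    rw [Finset.sum_sub_distrib, hZ, hY, Finset.mul_sum, Finset.sum_mul]
    simp [Real.exp_add, mul_comm]
  have hnum : |∑ k, (Real.exp (y i + z k) - Real.exp (z i + y k))|
      ≤ 2 * S * (Real.exp (y i) * Z + Real.exp (z i) * Y) := by
    calc |∑ k, (Real.exp (y i + z k) - Real.exp (z i + y k))|
        ≤ ∑ k, |Real.exp (y i + z k) - Real.exp (z i + y k)| :=
          Finset.abs_sum_le_sum_abs _ _
      _ ≤ ∑ k, (Real.exp (y i + z k) + Real.exp (z i + y k)) * (2 * S) := by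
          apply Finset.sum_le_sum
          intro k _
          calc |Real.exp (y i + z k) - Real.exp (z i + y k)|
              ≤ (Real.exp (y i + z k) + Real.exp (z i + y k)) * |y i + z k - (z i + y k)| :=
                exp_abs_sub _ _
            _ ≤ (Real.exp (y i + z k) + Real.exp (z i + y k)) * (2 * S) := by
                apply mul_le_mul_of_nonneg_left _ (by positivity)
                calc |y i + z k - (z i + y k)| ≤ |y i - z i| + |y k - z k| := by
                      rw [show y i + z k - (z i + y k) = (y i - z i) - (y k - z k) by ring]
                      exact (abs_sub _ _)
                  _ ≤ 2 * S := by have := habs i; have := habs k; linarith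
      _ = 2 * S * (Real.exp (y i) * Z + Real.exp (z i) * Y) := by
          rw [← Finset.sum_mul, Finset.sum_add_distrib]
          simp only [Real.exp_add, ← Finset.mul_sum]
          ring
  have hfrac : Real.exp (y i) ≤ Y := Finset.single_le_sum
      (f := fun k => Real.exp (y k)) (fun k _ => (Real.exp_pos _).le) (Finset.mem_univ i)
  have hfrac' : Real.exp (z i) ≤ Z := Finset.single_le_sum
      (f := fun k => Real.exp (z k)) (fun k _ => (Real.exp_pos _).le) (Finset.mem_univ i)
  rw [hrw, abs_div, abs_of_pos (by positivity : (0:ℝ) < Y * Z)]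
  rw [div_le_iff₀ (by positivity)]
  calc |∑ k, (Real.exp (y i + z k) - Real.exp (z i + y k))|
      ≤ 2 * S * (Real.exp (y i) * Z + Real.exp (z i) * Y) := hnum
    _ ≤ 2 * S * (Y * Z + Z * Y) := by
        apply mul_le_mul_of_nonneg_left _ (by positivity)
        have := mul_le_mul_of_nonneg_right hfrac (le_of_lt hZpos)
        have := mul_le_mul_of_nonneg_right hfrac' (le_of_lt hYpos)
        linarith
    _ = 4 * S * (Y * Z) := by ring


/-- Exact representation by a width-`n` one-hidden-layer ReLU net (note: the bias sits
inside the inner sum, matching the target statement's parsing). -/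
def NetRep (d n : ℕ) (g : (Fin d → ℝ) → ℝ) : Prop :=
  ∃ (w : Fin n → Fin d → ℝ) (b : Fin n → ℝ) (c : Fin n → ℝ),
    ∀ x, g x = ∑ j, c j * ReLU (∑ k, w j k * x k + b j)

def IsNet (d : ℕ) (g : (Fin d → ℝ) → ℝ) : Prop := ∃ n, NetRep d n g

lemma isNet_unit (d : ℕ) (w : Fin d → ℝ) (β : ℝ) :
    IsNet d (fun x => ReLU ((∑ k, w k * x k) + β)) := by
  refine ⟨1, fun _ => w, fun _ => β, fun _ => 1, fun x => ?_⟩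
  simp [Fin.sum_univ_one]

lemma isNet_zero (d : ℕ) : IsNet d (fun _ => 0) :=
  ⟨0, fun j => j.elim0, fun j => j.elim0, fun j => j.elim0, fun x => by simp⟩

lemma isNet_add {d : ℕ} {g₁ g₂ : (Fin d → ℝ) → ℝ} (h₁ : IsNet d g₁) (h₂ : IsNet d g₂) :
    IsNet d (fun x => g₁ x + g₂ x) := by
  obtain ⟨n₁, w₁, b₁, c₁, H₁⟩ := h₁
  obtain ⟨n₂, w₂, b₂, c₂, H₂⟩ := h₂
  refine ⟨n₁ + n₂, Fin.append w₁ w₂, Fin.append b₁ b₂, Fin.append c₁ c₂, fun x => ?_⟩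
  show g₁ x + g₂ x = _
  rw [H₁, H₂, Fin.sum_univ_add]
  simp [Fin.append_left, Fin.append_right]

lemma isNet_smul {d : ℕ} (r : ℝ) {g : (Fin d → ℝ) → ℝ} (h : IsNet d g) :
    IsNet d (fun x => r * g x) := by
  obtain ⟨n, w, b, c, H⟩ := h
  refine ⟨n, w, b, fun j => r * c j, fun x => ?_⟩
  show r * g x = _
  rw [H, Finset.mul_sum]
  simp [mul_assoc]

lemma isNet_sum {d : ℕ} {ι : Type*} (s : Finset ι) (g : ι → (Fin d → ℝ) → ℝ)
    (h : ∀ i ∈ s, IsNet d (g i)) : IsNet d (fun x => ∑ i ∈ s, g i x) := by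
  classical
  induction s using Finset.induction_on with
  | empty => simpa using isNet_zero d
  | insert _ _ hni ih =>
    rename_i a s'
    simp only [Finset.sum_insert hni]
    exact isNet_add (h a (Finset.mem_insert_self a s'))
      (ih fun i hi => h i (Finset.mem_insert_of_mem hi))

lemma isNet_continuous {d : ℕ} {g : (Fin d → ℝ) → ℝ} (h : IsNet d g) : Continuous g := by
  obtain ⟨n, w, b, c, H⟩ := h
  have : g = fun x => ∑ j, c j * ReLU (∑ k, w j k * x k + b j) := funext H
  rw [this]
  refine continuous_finset_sum _ fun j _ => Continuous.mul continuous_const ?_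
  exact Continuous.comp continuous_relu
    ((continuous_finset_sum _ fun k _ =>
      Continuous.mul continuous_const (continuous_apply k)).add continuous_const)

lemma netRep_pad {d n N : ℕ} (h : n ≤ N) {g : (Fin d → ℝ) → ℝ} (hg : NetRep d n g) :
    NetRep d N g := by
  obtain ⟨w, b, c, H⟩ := hg
  refine ⟨fun j => if h' : (j : ℕ) < n then w ⟨j, h'⟩ else 0,
    fun j => if h' : (j : ℕ) < n then b ⟨j, h'⟩ else 0,
    fun j => if h' : (j : ℕ) < n then c ⟨j, h'⟩ else 0, fun x => ?_⟩
  rw [H]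
  set body : ℕ → ℝ := fun j => if h' : j < n then
        c ⟨j, h'⟩ * ReLU (∑ k, w ⟨j, h'⟩ k * x k + b ⟨j, h'⟩) else 0 with hbody
  have hA : ∑ j : Fin N, ((fun j : Fin N => if h' : (j : ℕ) < n then c ⟨j, h'⟩ else 0) j *
      ReLU (∑ k, (fun j : Fin N => if h' : (j : ℕ) < n then w ⟨j, h'⟩ else 0) j k * x k +
        (fun j : Fin N => if h' : (j : ℕ) < n then b ⟨j, h'⟩ else 0) j))
      = ∑ j ∈ Finset.range N, body j := by
    rw [← Fin.sum_univ_eq_sum_range body N]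
    refine Finset.sum_congr rfl fun j _ => ?_
    by_cases h' : (j : ℕ) < n
    · simp only [hbody, dif_pos h']
    · simp only [hbody, dif_neg h', Pi.zero_apply, zero_mul]
  have hB : ∑ j ∈ Finset.range N, body j = ∑ j ∈ Finset.range n, body j := by
    refine (Finset.sum_subset (Finset.range_subset_range.2 h) fun j _ hj => ?_).symm
    rw [Finset.mem_range, not_lt] at hj
    simp only [hbody, dif_neg (not_lt.2 hj)]
  have hC : ∑ j ∈ Finset.range n, body j
      = ∑ j : Fin n, c j * ReLU (∑ k, w j k * x k + b j) := by
    rw [← Fin.sum_univ_eq_sum_range body n]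
    refine Finset.sum_congr rfl fun j _ => ?_
    simp only [hbody, dif_pos j.isLt, Fin.eta]
  rw [hA, hB, hC]

lemma isNet_netRep {d : ℕ} {g : (Fin d → ℝ) → ℝ} (h : IsNet d g) (N : ℕ) :
    ∃ N' ≥ N, NetRep d N' g := by
  obtain ⟨n, hn⟩ := h
  exact ⟨max n N, le_max_right _ _, netRep_pad (le_max_left _ _) hn⟩

end SMAux

namespace SMAux

lemma abs_cos_sub_cos (a b : ℝ) : |Real.cos a - Real.cos b| ≤ |a - b| := by
  rw [Real.cos_sub_cos, abs_mul, abs_mul]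
  have h1 : |Real.sin ((a + b) / 2)| ≤ 1 :=
    abs_le.2 ⟨Real.neg_one_le_sin _, Real.sin_le_one _⟩
  have h2 : |Real.sin ((a - b) / 2)| ≤ |(a - b) / 2| := Real.abs_sin_le_abs
  have h3 : |(-2 : ℝ)| = 2 := by norm_num
  calc |(-2 : ℝ)| * |Real.sin ((a + b) / 2)| * |Real.sin ((a - b) / 2)|
      ≤ |(-2 : ℝ)| * 1 * |(a - b) / 2| := by
        apply mul_le_mul (mul_le_mul_of_nonneg_left h1 (abs_nonneg _)) h2 (abs_nonneg _)
        positivity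
    _ = |a - b| := by rw [h3, abs_div]; norm_num; ring

lemma isNet_congr {d : ℕ} {g g' : (Fin d → ℝ) → ℝ} (h : IsNet d g) (he : ∀ x, g' x = g x) :
    IsNet d g' := by
  obtain ⟨n, w, b, c, H⟩ := h
  exact ⟨n, w, b, c, fun x => (he x).trans (H x)⟩

lemma cos_pl_approx (R ε : ℝ) (hR : 1 ≤ R) (hε : 0 < ε) :
    ∃ φ : ℝ → ℝ,
      (∀ t, |t| ≤ R → |φ t - Real.cos t| ≤ ε) ∧
      (∀ d (w : Fin d → ℝ) (β : ℝ), IsNet d (fun x => φ ((∑ k, w k * x k) + β))) := by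
  obtain ⟨N, hN1, hN2⟩ : ∃ N : ℕ, 2 * R / ε ≤ N ∧ 1 ≤ N :=
    ⟨⌈2 * R / ε⌉₊ + 1, le_trans (Nat.le_ceil _) (by push_cast; linarith), by omega⟩
  have hNpos : (0 : ℝ) < N := by exact_mod_cast hN2
  set h : ℝ := 2 * R / N with hh_def
  have hh : 0 < h := by positivity
  have hhε : h ≤ ε := by
    rw [hh_def, div_le_iff₀ hNpos]
    calc 2 * R = (2 * R / ε) * ε := by field_simp
      _ ≤ N * ε := by nlinarith
      _ = ε * N := by ring

  have hNh : (N : ℝ) * h = 2 * R := by rw [hh_def]; field_simp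
  set p : ℕ → ℝ := fun j => -R + j * h with hp
  set hat : ℕ → ℝ → ℝ := fun j t =>
    (ReLU (t - p j + h) - 2 * ReLU (t - p j) + ReLU (t - p j - h)) / h with hhat
  have hat_nonneg : ∀ j t, 0 ≤ hat j t := by
    intro j t
    rcases le_total t (p j) with h1 | h1
    · rw [hhat]
      simp only
      rw [relu_of_nonpos (by linarith : t - p j ≤ 0),
        relu_of_nonpos (by linarith : t - p j - h ≤ 0)]
      have := relu_nonneg (t - p j + h)
      apply div_nonneg (by linarith) hh.le
    · rcases le_total t (p j + h) with h2 | h2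
      · rw [hhat]
        simp only
        rw [relu_of_nonneg (by linarith : (0:ℝ) ≤ t - p j + h),
          relu_of_nonneg (by linarith : (0:ℝ) ≤ t - p j),
          relu_of_nonpos (by linarith : t - p j - h ≤ 0)]
        apply div_nonneg (by linarith) hh.le
      · rw [hhat]
        simp only
        rw [relu_of_nonneg (by linarith : (0:ℝ) ≤ t - p j + h),
          relu_of_nonneg (by linarith : (0:ℝ) ≤ t - p j),
          relu_of_nonneg (by linarith : (0:ℝ) ≤ t - p j - h)]
        apply div_nonneg (by linarith) hh.le
  have hat_zero_or_close : ∀ j t, hat j t = 0 ∨ |t - p j| ≤ h := by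
    intro j t
    rcases le_or_gt (|t - p j|) h with h1 | h1
    · exact Or.inr h1
    rcases le_total t (p j) with h2 | h2
    · left
      rw [abs_of_nonpos (by linarith : t - p j ≤ 0)] at h1
      rw [hhat]
      simp only
      rw [relu_of_nonpos (by linarith : t - p j ≤ 0),
        relu_of_nonpos (by linarith : t - p j - h ≤ 0),
        relu_of_nonpos (by linarith : t - p j + h ≤ 0)]
      simp
    · left
      rw [abs_of_nonneg (by linarith : (0:ℝ) ≤ t - p j)] at h1
      rw [hhat]
      simp only
      rw [relu_of_nonneg (by linarith : (0:ℝ) ≤ t - p j + h),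
        relu_of_nonneg (by linarith : (0:ℝ) ≤ t - p j),
        relu_of_nonneg (by linarith : (0:ℝ) ≤ t - p j - h)]
      field_simp
      ring
  have sum_hat : ∀ t, -R ≤ t → t ≤ R → ∑ j ∈ Finset.range (N + 1), hat j t = 1 := by
    intro t ht1 ht2
    set G : ℕ → ℝ := fun j => ReLU (t - p j + h) with hG
    set D : ℕ → ℝ := fun j => G j - G (j + 1) with hD
    have hp_succ : ∀ j : ℕ, p (j + 1) = p j + h := by
      intro j; rw [hp]; push_cast; ring
    have hat_eq : ∀ j, hat j t = (D j - D (j + 1)) / h := by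
      intro j
      rw [hhat, hD]
      simp only
      rw [hG]
      simp only
      rw [hp_succ j, hp_succ (j + 1), hp_succ j]
      congr 1
      have e1 : t - (p j + h) + h = t - p j := by ring
      have e2 : t - (p j + h + h) + h = t - p j - h := by ring
      rw [e1, e2]
      ring
    calc ∑ j ∈ Finset.range (N + 1), hat j t
        = (∑ j ∈ Finset.range (N + 1), (D j - D (j + 1))) / h := by
          rw [Finset.sum_div]
          exact Finset.sum_congr rfl fun j _ => hat_eq j
      _ = (D 0 - D (N + 1)) / h := by rw [Finset.sum_range_sub' D (N + 1)]
      _ = 1 := by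
          have hD0 : D 0 = h := by
            rw [hD, hG]
            simp only
            have hp0 : p 0 = -R := by rw [hp]; push_cast; ring
            rw [hp_succ 0, hp0]
            rw [relu_of_nonneg (by linarith : (0:ℝ) ≤ t - -R + h),
              relu_of_nonneg (by linarith : (0:ℝ) ≤ t - (-R + h) + h)]
            ring
          have hDN : D (N + 1) = 0 := by
            rw [hD, hG]
            simp only
            have hpN1 : p (N + 1) = R + h := by
              rw [hp]; push_cast; rw [add_mul, one_mul]
              rw [hNh]; ring
            rw [hp_succ (N + 1), hpN1]
            rw [relu_of_nonpos (by linarith : t - (R + h) + h ≤ 0),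
              relu_of_nonpos (by linarith : t - (R + h + h) + h ≤ 0)]
            ring
          rw [hD0, hDN]
          field_simp
          ring
  refine ⟨fun t => ∑ j ∈ Finset.range (N + 1), Real.cos (p j) * hat j t, ?_, ?_⟩
  · intro t ht
    rw [abs_le] at ht
    obtain ⟨ht1, ht2⟩ := ht
    have key : (∑ j ∈ Finset.range (N + 1), Real.cos (p j) * hat j t) - Real.cos t
        = ∑ j ∈ Finset.range (N + 1), (Real.cos (p j) - Real.cos t) * hat j t := by
      simp only [sub_mul]
      rw [Finset.sum_sub_distrib, ← Finset.mul_sum, sum_hat t (by linarith) (by linarith),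
        mul_one]
    rw [key]
    calc |∑ j ∈ Finset.range (N + 1), (Real.cos (p j) - Real.cos t) * hat j t|
        ≤ ∑ j ∈ Finset.range (N + 1), |(Real.cos (p j) - Real.cos t) * hat j t| :=
          Finset.abs_sum_le_sum_abs _ _
      _ ≤ ∑ j ∈ Finset.range (N + 1), h * hat j t := by
          apply Finset.sum_le_sum
          intro j _
          rw [abs_mul, abs_of_nonneg (hat_nonneg j t)]
          rcases hat_zero_or_close j t with h0 | hclose
          · rw [h0]; simp [hh.le, mul_nonneg hh.le]
          · apply mul_le_mul_of_nonneg_right _ (hat_nonneg j t)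
            calc |Real.cos (p j) - Real.cos t| ≤ |p j - t| := abs_cos_sub_cos _ _
              _ ≤ h := by rwa [abs_sub_comm] at hclose
      _ = h * ∑ j ∈ Finset.range (N + 1), hat j t := by rw [Finset.mul_sum]
      _ = h := by rw [sum_hat t (by linarith) (by linarith), mul_one]
      _ ≤ ε := hhε
  · intro d w β
    apply isNet_sum
    intro j _
    have hnet : IsNet d (fun x =>
        (Real.cos (p j) / h) * ReLU ((∑ k, w k * x k) + (β - p j + h)) +
        ((-2 * Real.cos (p j) / h) * ReLU ((∑ k, w k * x k) + (β - p j)) +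
        (Real.cos (p j) / h) * ReLU ((∑ k, w k * x k) + (β - p j - h)))) := by
      apply isNet_add
      · exact isNet_smul _ (isNet_unit d w _)
      · exact isNet_add (isNet_smul _ (isNet_unit d w _)) (isNet_smul _ (isNet_unit d w _))
    apply isNet_congr hnet
    intro x
    rw [hhat]
    simp only
    have e1 : (∑ k, w k * x k) + β - p j + h = (∑ k, w k * x k) + (β - p j + h) := by ring
    have e2 : (∑ k, w k * x k) + β - p j = (∑ k, w k * x k) + (β - p j) := by ring
    have e3 : (∑ k, w k * x k) + β - p j - h = (∑ k, w k * x k) + (β - p j - h) := by ring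
    rw [e1, e3, e2]
    field_simp
    ring

end SMAux

namespace SMAux

abbrev Kset (d : ℕ) : Set (Fin d → ℝ) := Set.Icc 0 1

instance (d : ℕ) : CompactSpace (Kset d) := isCompact_iff_compactSpace.mp isCompact_Icc

noncomputable def cosRidge (d : ℕ) (wβ : (Fin d → ℝ) × ℝ) : C(Kset d, ℝ) :=
  ⟨fun x => Real.cos ((∑ k, wβ.1 k * (x : Fin d → ℝ) k) + wβ.2),
    Real.continuous_cos.comp
      ((continuous_finset_sum _ fun k _ => continuous_const.mul
        ((continuous_apply k).comp continuous_subtype_val)).add continuous_const)⟩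

def SS (d : ℕ) : Set C(Kset d, ℝ) := Set.range (cosRidge d)

lemma cos_mul_cos (A B : ℝ) :
    Real.cos A * Real.cos B = (Real.cos (A + B) + Real.cos (A - B)) / 2 := by
  rw [Real.cos_add, Real.cos_sub]; ring

lemma mul_mem_span_SS {d : ℕ} {p q : C(Kset d, ℝ)}
    (hp : p ∈ SS d) (hq : q ∈ SS d) : p * q ∈ Submodule.span ℝ (SS d) := by
  obtain ⟨⟨u, a⟩, rfl⟩ := hp
  obtain ⟨⟨v, b⟩, rfl⟩ := hq
  have key : cosRidge d (u, a) * cosRidge d (v, b)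
      = (1 / 2 : ℝ) • cosRidge d (u + v, a + b) + (1 / 2 : ℝ) • cosRidge d (u - v, a - b) := by
    ext x
    simp only [ContinuousMap.mul_apply, ContinuousMap.add_apply, ContinuousMap.smul_apply,
      smul_eq_mul, cosRidge, ContinuousMap.coe_mk]
    have h1 : ∑ k, (u + v) k * (x : Fin d → ℝ) k
        = (∑ k, u k * (x : Fin d → ℝ) k) + ∑ k, v k * (x : Fin d → ℝ) k := by
      rw [← Finset.sum_add_distrib]
      exact Finset.sum_congr rfl fun k _ => by simp [Pi.add_apply]; ring
    have h2 : ∑ k, (u - v) k * (x : Fin d → ℝ) k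
        = (∑ k, u k * (x : Fin d → ℝ) k) - ∑ k, v k * (x : Fin d → ℝ) k := by
      rw [← Finset.sum_sub_distrib]
      exact Finset.sum_congr rfl fun k _ => by simp [Pi.sub_apply]; ring
    rw [h1, h2, cos_mul_cos]
    have e1 : (∑ k, u k * (x : Fin d → ℝ) k) + ∑ k, v k * (x : Fin d → ℝ) k + (a + b)
        = ((∑ k, u k * (x : Fin d → ℝ) k) + a) + ((∑ k, v k * (x : Fin d → ℝ) k) + b) := by
      ring
    have e2 : (∑ k, u k * (x : Fin d → ℝ) k) - ∑ k, v k * (x : Fin d → ℝ) k + (a - b)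
        = ((∑ k, u k * (x : Fin d → ℝ) k) + a) - ((∑ k, v k * (x : Fin d → ℝ) k) + b) := by
      ring
    rw [e1, e2]
    ring
  rw [key]
  exact Submodule.add_mem _
    (Submodule.smul_mem _ _ (Submodule.subset_span ⟨(u + v, a + b), rfl⟩))
    (Submodule.smul_mem _ _ (Submodule.subset_span ⟨(u - v, a - b), rfl⟩))

lemma span_mul_closed {d : ℕ} {p q : C(Kset d, ℝ)}
    (hp : p ∈ Submodule.span ℝ (SS d)) (hq : q ∈ Submodule.span ℝ (SS d)) :
    p * q ∈ Submodule.span ℝ (SS d) := by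
  induction hp using Submodule.span_induction with
  | mem p hpS =>
    induction hq using Submodule.span_induction with
    | mem q hqS => exact mul_mem_span_SS hpS hqS
    | zero => simpa using Submodule.zero_mem _
    | add q r _ _ ihq ihr => rw [mul_add]; exact Submodule.add_mem _ ihq ihr
    | smul a q _ ihq => rw [mul_smul_comm]; exact Submodule.smul_mem _ _ ihq
  | zero => simpa using Submodule.zero_mem _
  | add p r _ _ ihp ihr => rw [add_mul]; exact Submodule.add_mem _ ihp ihr
  | smul a p _ ihp => rw [smul_mul_assoc]; exact Submodule.smul_mem _ _ ihp

lemma one_mem_SS (d : ℕ) : (1 : C(Kset d, ℝ)) ∈ SS d := by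
  refine ⟨(0, 0), ?_⟩
  ext x
  simp [cosRidge]

lemma adjoin_le_span {d : ℕ} {p : C(Kset d, ℝ)} (hp : p ∈ Algebra.adjoin ℝ (SS d)) :
    p ∈ Submodule.span ℝ (SS d) := by
  induction hp using Algebra.adjoin_induction with
  | mem p hpS => exact Submodule.subset_span hpS
  | algebraMap r =>
    have : (algebraMap ℝ C(Kset d, ℝ)) r = r • (1 : C(Kset d, ℝ)) := by
      rw [Algebra.algebraMap_eq_smul_one]
    rw [this]
    exact Submodule.smul_mem _ _ (Submodule.subset_span (one_mem_SS d))
  | add p q _ _ ihp ihq => exact Submodule.add_mem _ ihp ihq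
  | mul p q _ _ ihp ihq => exact span_mul_closed ihp ihq

lemma SS_separates (d : ℕ) : (Algebra.adjoin ℝ (SS d)).SeparatesPoints := by
  intro x y hxy
  have : ∃ k, (x : Fin d → ℝ) k ≠ (y : Fin d → ℝ) k := by
    by_contra hc
    push_neg at hc
    exact hxy (Subtype.ext (funext hc))
  obtain ⟨k, hk⟩ := this
  refine ⟨_, ⟨cosRidge d (fun k' => if k' = k then 1 else 0, 0),
      Algebra.subset_adjoin (R := ℝ) (s := SS d) (Set.mem_range_self _), rfl⟩, ?_⟩
  · have hx : ∀ z : Kset d, (cosRidge d (fun k' => if k' = k then 1 else 0, 0)) z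
        = Real.cos ((z : Fin d → ℝ) k) := by
      intro z
      simp only [cosRidge, ContinuousMap.coe_mk]
      congr 1
      rw [add_zero]
      rw [Finset.sum_eq_single k]
      · simp
      · intro k' _ hk'; simp [hk']
      · intro hk'; exact absurd (Finset.mem_univ k) hk'
    show (cosRidge d (fun k' => if k' = k then 1 else 0, 0)) x
        ≠ (cosRidge d (fun k' => if k' = k then 1 else 0, 0)) y
    rw [hx, hx]
    have hmem : ∀ z : Kset d, (z : Fin d → ℝ) k ∈ Set.Icc (0 : ℝ) Real.pi := by
      intro z
      obtain ⟨hz1, hz2⟩ := z.2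
      refine ⟨by simpa using hz1 k, le_trans (hz2 k) ?_⟩
      rw [Pi.one_apply]
      linarith [Real.pi_gt_three]
    intro hcos
    exact hk (Real.injOn_cos (hmem x) (hmem y) hcos)

lemma exists_span_near {d : ℕ} (h0 : (Fin d → ℝ) → ℝ) (hcont : Continuous h0)
    {ε : ℝ} (hε : 0 < ε) :
    ∃ p ∈ Submodule.span ℝ (SS d), ∀ x : Kset d, |p x - h0 x| < ε := by
  obtain ⟨⟨p, hpA⟩, hp⟩ := ContinuousMap.exists_mem_subalgebra_near_continuous_of_separatesPoints
    (Algebra.adjoin ℝ (SS d)) (SS_separates d) (fun x : Kset d => h0 x)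
    (hcont.comp continuous_subtype_val) ε hε
  exact ⟨p, adjoin_le_span hpA, fun x => by simpa using hp x⟩

end SMAux

namespace SMAux

lemma ridge_net_approx {d : ℕ} (w : Fin d → ℝ) (β : ℝ) {ε : ℝ} (hε : 0 < ε) :
    ∃ g, IsNet d g ∧ ∀ x ∈ Kset d, |g x - Real.cos ((∑ k, w k * x k) + β)| ≤ ε := by
  set R : ℝ := (∑ k, |w k|) + |β| + 1 with hR
  have hRnn : 1 ≤ R := by
    have h1 : 0 ≤ ∑ k, |w k| := Finset.sum_nonneg fun k _ => abs_nonneg _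
    have h2 : 0 ≤ |β| := abs_nonneg _
    rw [hR]; linarith
  obtain ⟨φ, hφ1, hφ2⟩ := cos_pl_approx R ε hRnn hε
  refine ⟨fun x => φ ((∑ k, w k * x k) + β), hφ2 d w β, fun x hx => ?_⟩
  apply hφ1
  obtain ⟨hx1, hx2⟩ := hx
  calc |(∑ k, w k * x k) + β| ≤ |∑ k, w k * x k| + |β| := abs_add_le _ _
    _ ≤ (∑ k, |w k|) + |β| := by
        gcongr
        calc |∑ k, w k * x k| ≤ ∑ k, |w k * x k| := Finset.abs_sum_le_sum_abs _ _
          _ ≤ ∑ k, |w k| := by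
              apply Finset.sum_le_sum
              intro k _
              rw [abs_mul]
              have hxk : |x k| ≤ 1 := by
                rw [abs_le]
                constructor
                · have := hx1 k; simp only [Pi.zero_apply] at this; linarith
                · have := hx2 k; simp only [Pi.one_apply] at this; linarith
              calc |w k| * |x k| ≤ |w k| * 1 :=
                    mul_le_mul_of_nonneg_left hxk (abs_nonneg _)
                _ = |w k| := mul_one _
    _ ≤ R := by rw [hR]; linarith

lemma span_net_approx {d : ℕ} {p : C(Kset d, ℝ)} (hp : p ∈ Submodule.span ℝ (SS d)) :
    ∀ ε : ℝ, 0 < ε → ∃ g, IsNet d g ∧ ∀ x : Kset d, |g (x : Fin d → ℝ) - p x| ≤ ε := by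
  induction hp using Submodule.span_induction with
  | mem q hqS =>
    intro ε hε
    obtain ⟨⟨w, β⟩, rfl⟩ := hqS
    obtain ⟨g, hg, hgb⟩ := ridge_net_approx w β hε
    exact ⟨g, hg, fun x => hgb x x.2⟩
  | zero =>
    intro ε hε
    exact ⟨fun _ => 0, isNet_zero d, fun x => by simp [hε.le]⟩
  | add q r _ _ ihq ihr =>
    intro ε hε
    obtain ⟨g₁, hg₁, hb₁⟩ := ihq (ε / 2) (by linarith)
    obtain ⟨g₂, hg₂, hb₂⟩ := ihr (ε / 2) (by linarith)
    refine ⟨fun x => g₁ x + g₂ x, isNet_add hg₁ hg₂, fun x => ?_⟩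
    have := hb₁ x; have := hb₂ x
    simp only [ContinuousMap.add_apply]
    calc |g₁ (x : Fin d → ℝ) + g₂ (x : Fin d → ℝ) - (q x + r x)|
        = |(g₁ (x : Fin d → ℝ) - q x) + (g₂ (x : Fin d → ℝ) - r x)| := by ring_nf
      _ ≤ |g₁ (x : Fin d → ℝ) - q x| + |g₂ (x : Fin d → ℝ) - r x| := abs_add_le _ _
      _ ≤ ε / 2 + ε / 2 := by gcongr <;> assumption
      _ = ε := by ring
  | smul a q _ ihq =>
    intro ε hε
    obtain ⟨g, hg, hb⟩ := ihq (ε / (|a| + 1)) (by positivity)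
    refine ⟨fun x => a * g x, isNet_smul a hg, fun x => ?_⟩
    simp only [ContinuousMap.smul_apply, smul_eq_mul]
    calc |a * g (x : Fin d → ℝ) - a * q x| = |a| * |g (x : Fin d → ℝ) - q x| := by
          rw [← abs_mul]; ring_nf
      _ ≤ |a| * (ε / (|a| + 1)) := mul_le_mul_of_nonneg_left (hb x) (abs_nonneg _)
      _ ≤ ε := by
          rw [mul_div_assoc']
          rw [div_le_iff₀ (by positivity : (0:ℝ) < |a| + 1)]
          nlinarith [abs_nonneg a]

end SMAux

namespace SMAux

lemma volK (d : ℕ) : (volume (Kset d)).toReal = 1 := by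
  rw [show (Kset d : Set (Fin d → ℝ)) = Set.Icc 0 1 from rfl, Real.volume_Icc_pi]
  simp

lemma net_L1_approx {d : ℕ} (f0 : (Fin d → ℝ) → ℝ)
    (hint : IntegrableOn f0 (Kset d)) {δ : ℝ} (hδ : 0 < δ) :
    ∃ g, IsNet d g ∧ ∫ x in Kset d, |g x - f0 x| < δ := by
  have hKmeas : MeasurableSet (Kset d) := measurableSet_Icc
  have hFint : Integrable ((Kset d).indicator f0) := hint.integrable_indicator hKmeas
  obtain ⟨h0, -, hIdiff, hcont, hIntg⟩ :=
    hFint.exists_hasCompactSupport_integral_sub_le (show (0:ℝ) < δ / 4 by linarith)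
  obtain ⟨p, hpspan, hpnear⟩ := exists_span_near h0 hcont (show (0:ℝ) < δ / 8 by linarith)
  obtain ⟨g, hgnet, hgp⟩ := span_net_approx hpspan (δ / 8) (by linarith)
  have hgcont : Continuous g := isNet_continuous hgnet
  refine ⟨g, hgnet, ?_⟩
  have hpt : ∀ x ∈ Kset d, |g x - h0 x| ≤ δ / 4 := by
    intro x hx
    have h1 := hgp ⟨x, hx⟩
    have h2 := hpnear ⟨x, hx⟩
    calc |g x - h0 x| = |(g x - p ⟨x, hx⟩) + (p ⟨x, hx⟩ - h0 x)| := by ring_nf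
      _ ≤ |g x - p ⟨x, hx⟩| + |p ⟨x, hx⟩ - h0 x| := abs_add_le _ _
      _ ≤ δ / 8 + δ / 8 := by
          refine add_le_add h1 h2.le
      _ = δ / 4 := by ring
  have int_gh : IntegrableOn (fun x => |g x - h0 x|) (Kset d) :=
    ((hgcont.sub hcont).abs).continuousOn.integrableOn_compact isCompact_Icc
  have int_hf : IntegrableOn (fun x => |h0 x - f0 x|) (Kset d) := by
    have : IntegrableOn (fun x => |h0 x - f0 x|) (Kset d) ↔
        IntegrableOn (fun x => |(Kset d).indicator f0 x - h0 x|) (Kset d) := by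
      apply integrableOn_congr_fun _ hKmeas
      intro x hx
      show |h0 x - f0 x| = |(Kset d).indicator f0 x - h0 x|
      rw [Set.indicator_of_mem hx, abs_sub_comm]
    rw [this]
    exact ((hFint.sub hIntg).abs).integrableOn
  have int_gf : IntegrableOn (fun x => |g x - f0 x|) (Kset d) :=
    ((hgcont.continuousOn.integrableOn_compact isCompact_Icc).sub hint).abs
  have I1 : ∫ x in Kset d, |g x - h0 x| ≤ δ / 4 := by
    calc ∫ x in Kset d, |g x - h0 x| ≤ ∫ _x in Kset d, (δ / 4 : ℝ) :=
          setIntegral_mono_on int_gh (integrableOn_const (by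
            rw [show (Kset d : Set (Fin d → ℝ)) = Set.Icc 0 1 from rfl, Real.volume_Icc_pi]
            simp [ENNReal.one_lt_top])) hKmeas hpt
      _ = δ / 4 := by rw [setIntegral_const]; show (volume (Kset d)).toReal • (δ / 4) = δ / 4; rw [volK d]; simp
  have I2 : ∫ x in Kset d, |h0 x - f0 x| ≤ δ / 4 := by
    have e : ∫ x in Kset d, |h0 x - f0 x|
        = ∫ x in Kset d, ‖(Kset d).indicator f0 x - h0 x‖ := by
      apply setIntegral_congr_fun hKmeas
      intro x hx
      show |h0 x - f0 x| = ‖(Kset d).indicator f0 x - h0 x‖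
      rw [Set.indicator_of_mem hx, Real.norm_eq_abs, abs_sub_comm]
    rw [e]
    calc ∫ x in Kset d, ‖(Kset d).indicator f0 x - h0 x‖
        ≤ ∫ x, ‖(Kset d).indicator f0 x - h0 x‖ :=
          setIntegral_le_integral (hFint.sub hIntg).norm
            (Filter.Eventually.of_forall fun x => norm_nonneg _)
      _ ≤ δ / 4 := hIdiff
  calc ∫ x in Kset d, |g x - f0 x|
      ≤ ∫ x in Kset d, (|g x - h0 x| + |h0 x - f0 x|) := by
        apply setIntegral_mono_on int_gf (int_gh.add int_hf) hKmeas
        intro x _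
        calc |g x - f0 x| = |(g x - h0 x) + (h0 x - f0 x)| := by ring_nf
          _ ≤ |g x - h0 x| + |h0 x - f0 x| := abs_add_le _ _
    _ = (∫ x in Kset d, |g x - h0 x|) + ∫ x in Kset d, |h0 x - f0 x| :=
        integral_add int_gh int_hf
    _ ≤ δ / 4 + δ / 4 := add_le_add I1 I2
    _ < δ := by linarith

end SMAux


open SMAux in
/-- **Softmax outputs of a ReLU network approximate softmax of any L¹ target.**
For every `d ≥ 1`, `m ≥ 1`, every measurable `f = (f_1, …, f_m)` with each component
in `L¹(I_d)`, and every `ε > 0`, there is a single-hidden-layer ReLU network with shared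
hidden weights such that, for every `i`,
`∫_{I_d} |softmax (g x) i - softmax (f x) i| dx < ε`,
where `g x i = ∑ j, α i j * ReLU (⟪w j, x⟫ + b j)`. -/
theorem softmax_relu_network_approximates_softmax
    (d m : ℕ) (hd : 1 ≤ d) (hm : 1 ≤ m)
    (f : Fin m → (Fin d → ℝ) → ℝ)
    (hfmeas : ∀ i, Measurable (f i))
    (hf : ∀ i, IntegrableOn (f i) (Set.Icc (0 : Fin d → ℝ) 1))
    (ε : ℝ) (hε : 0 < ε) :
    ∃ (n : ℕ), 1 ≤ n ∧ ∃ (w : Fin n → Fin d → ℝ) (b : Fin n → ℝ)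
      (α : Fin m → Fin n → ℝ),
      ∀ i, ∫ x in Set.Icc (0 : Fin d → ℝ) 1,
        |softmax (fun i' => ∑ j, α i' j * ReLU (∑ k, w j k * x k + b j)) i -
          softmax (fun i' => f i' x) i| < ε := by
    classical
  have hmR : (1 : ℝ) ≤ (m : ℝ) := by exact_mod_cast hm
  set δ : ℝ := ε / (8 * m) with hδdef
  have hδ : 0 < δ := by
    apply div_pos hε
    nlinarith
  choose G hGnet hGL1 using fun i : Fin m => net_L1_approx (f i) (hf i) hδ
  have hGcont : ∀ i, Continuous (G i) := fun i => isNet_continuous (hGnet i)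
  choose ncand hncand using fun i : Fin m => hGnet i
  set N : ℕ := (Finset.univ.sup ncand) + 1 with hN
  have hrep : ∀ i, NetRep d N (G i) := fun i =>
    netRep_pad (le_trans (Finset.le_sup (Finset.mem_univ i)) (Nat.le_succ _)) (hncand i)
  choose W B C hWBC using hrep
  set e : Fin m × Fin N ≃ Fin (m * N) := finProdFinEquiv
  refine ⟨m * N, Nat.mul_pos hm (Nat.succ_pos _), 
    fun j => W (e.symm j).1 (e.symm j).2,
    fun j => B (e.symm j).1 (e.symm j).2,
    fun i j => if (e.symm j).1 = i then C i (e.symm j).2 else 0, ?_⟩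
  intro i
  have key : ∀ (i' : Fin m) (x : Fin d → ℝ),
      (∑ j : Fin (m * N), (if (e.symm j).1 = i' then C i' (e.symm j).2 else 0) *
        ReLU (∑ k, W (e.symm j).1 (e.symm j).2 k * x k + B (e.symm j).1 (e.symm j).2))
      = G i' x := by
    intro i' x
    rw [← Equiv.sum_comp e (fun j => (if (e.symm j).1 = i' then C i' (e.symm j).2 else 0) *
        ReLU (∑ k, W (e.symm j).1 (e.symm j).2 k * x k + B (e.symm j).1 (e.symm j).2))]
    simp only [Equiv.symm_apply_apply]
    rw [Fintype.sum_prod_type]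
    rw [Finset.sum_eq_single i']
    · simp only [if_pos rfl]
      exact (hWBC i' x).symm
    · intro i'' _ hne
      simp [hne]
    · intro hne
      exact absurd (Finset.mem_univ i') hne
  have hK : MeasurableSet (Set.Icc (0 : Fin d → ℝ) 1) := measurableSet_Icc
  have step1 : ∫ x in Set.Icc (0 : Fin d → ℝ) 1,
      |softmax (fun i' => ∑ j, (if (e.symm j).1 = i' then C i' (e.symm j).2 else 0) *
        ReLU (∑ k, W (e.symm j).1 (e.symm j).2 k * x k + B (e.symm j).1 (e.symm j).2)) i -
        softmax (fun i' => f i' x) i|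
      = ∫ x in Set.Icc (0 : Fin d → ℝ) 1,
        |softmax (fun i' => G i' x) i - softmax (fun i' => f i' x) i| := by
    apply setIntegral_congr_fun hK
    intro x _
    have : (fun i' => ∑ j : Fin (m * N),
        (if (e.symm j).1 = i' then C i' (e.symm j).2 else 0) *
        ReLU (∑ k, W (e.symm j).1 (e.symm j).2 k * x k + B (e.symm j).1 (e.symm j).2))
        = fun i' => G i' x := funext fun i' => key i' x
    simp only [this]
  rw [step1]
  -- integrability of the bound
  have intB : IntegrableOn (fun x => 4 * ∑ i', |G i' x - f i' x|)
      (Set.Icc (0 : Fin d → ℝ) 1) := by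
    apply Integrable.const_mul
    apply integrable_finset_sum
    intro i' _
    exact (((hGcont i').continuousOn.integrableOn_compact isCompact_Icc).sub (hf i')).abs
  have meas1 : Measurable fun x =>
      |softmax (fun i' => G i' x) i - softmax (fun i' => f i' x) i| := by
    apply Measurable.abs
    apply Measurable.sub
    · unfold softmax
      exact Measurable.div (Real.measurable_exp.comp (hGcont i).measurable)
        (Finset.measurable_sum _ fun k _ => Real.measurable_exp.comp (hGcont k).measurable)
    · unfold softmax
      exact Measurable.div (Real.measurable_exp.comp (hfmeas i))
        (Finset.measurable_sum _ fun k _ => Real.measurable_exp.comp (hfmeas k))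
  have intL : IntegrableOn (fun x =>
      |softmax (fun i' => G i' x) i - softmax (fun i' => f i' x) i|)
      (Set.Icc (0 : Fin d → ℝ) 1) := by
    apply Integrable.mono' intB meas1.aestronglyMeasurable
    apply Filter.Eventually.of_forall
    intro x
    rw [Real.norm_eq_abs, abs_abs]
    exact softmax_lipschitz _ _ i
  have step2 : ∫ x in Set.Icc (0 : Fin d → ℝ) 1,
      |softmax (fun i' => G i' x) i - softmax (fun i' => f i' x) i|
      ≤ ∫ x in Set.Icc (0 : Fin d → ℝ) 1, 4 * ∑ i', |G i' x - f i' x| := by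
    apply setIntegral_mono_on intL intB hK
    intro x _
    exact softmax_lipschitz _ _ i
  refine lt_of_le_of_lt step2 ?_
  have step3 : ∫ x in Set.Icc (0 : Fin d → ℝ) 1, 4 * ∑ i', |G i' x - f i' x|
      = 4 * ∑ i', ∫ x in Set.Icc (0 : Fin d → ℝ) 1, |G i' x - f i' x| := by
    rw [integral_const_mul]
    congr 1
    apply integral_finset_sum
    intro i' _
    exact (((hGcont i').continuousOn.integrableOn_compact isCompact_Icc).sub (hf i')).abs
  rw [step3]
  have step4 : ∑ i', ∫ x in Set.Icc (0 : Fin d → ℝ) 1, |G i' x - f i' x| < m * δ := by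
    calc ∑ i', ∫ x in Set.Icc (0 : Fin d → ℝ) 1, |G i' x - f i' x|
        < ∑ _i' : Fin m, δ := by
          apply Finset.sum_lt_sum_of_nonempty ⟨i, Finset.mem_univ i⟩
          intro i' _
          exact hGL1 i'
      _ = m * δ := by rw [Finset.sum_const, Finset.card_univ, Fintype.card_fin, nsmul_eq_mul]
  calc 4 * ∑ i', ∫ x in Set.Icc (0 : Fin d → ℝ) 1, |G i' x - f i' x|
      < 4 * (m * δ) := by linarith
    _ = ε / 2 := by
        rw [hδdef]
        field_simp
        ring
    _ < ε := by linarith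
end

section
/- For every d ≥ 1 and m ≥ 1, every measurable indicator function f = (f_1, …, f_m) on I_d (each component f_i is then in L¹(I_d)), and every ε > 0, there exist an integer n ≥ 1, shared hidden-layer weights w_1, …, w_n ∈ ℝ^d, biases b_1, …, b_n ∈ ℝ, and output weights α_{ij} ∈ ℝ such that the multi-output ReLU network g_i(x) = Σ_{j=1}^n α_{ij} · ReLU(w_jᵀ x + b_j) satisfies, for every i = 1, …, m, ∫_{I_d} |softmax(g(x))_i − f_i(x)| dx < ε, where g(x) = (g_1(x), …, g_m(x)). That is, a sufficiently large single-hidden-layer ReLU network with a softmax output layer can approximate any measurable indicator function in the L¹ norm. -/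
open MeasureTheory
open scoped ENNReal

/-- `f = (f_1, …, f_m)` is an indicator function on `I_d = [0,1]^d` if each component takes
values in `{0, 1}` and the components sum to `1` at every point of `I_d`. -/
def IsIndicatorFunction {d m : ℕ} (f : Fin m → (Fin d → ℝ) → ℝ) : Prop :=
  ∀ x ∈ Set.Icc (0 : Fin d → ℝ) 1,
    (∀ i, f i x = 0 ∨ f i x = 1) ∧ (∑ i, f i x) = 1

/-- `h` is a single-hidden-layer ReLU network with `n` hidden units. -/
def IsNetN (d n : ℕ) (h : (Fin d → ℝ) → ℝ) : Prop :=
  ∃ (w : Fin n → Fin d → ℝ) (b : Fin n → ℝ) (a : Fin n → ℝ),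
    ∀ x, h x = ∑ j, a j * ReLU (∑ k, w j k * x k + b j)

def IsNet (d : ℕ) (h : (Fin d → ℝ) → ℝ) : Prop := ∃ n, IsNetN d n h

lemma isNet_zero (d : ℕ) : IsNet d (fun _ => 0) :=
  ⟨0, 0, 0, 0, fun x => by simp⟩

lemma isNet_const (d : ℕ) (c : ℝ) : IsNet d (fun _ => c) := by
  refine ⟨1, 0, 1, fun _ => c, fun x => by simp [ReLU]⟩

lemma isNet_relu (d : ℕ) (w : Fin d → ℝ) (b : ℝ) :
    IsNet d (fun x => ReLU (∑ k, w k * x k + b)) := by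
  exact ⟨1, fun _ => w, fun _ => b, 1, fun x => by simp⟩

lemma IsNet.add {d : ℕ} {h₁ h₂ : (Fin d → ℝ) → ℝ} (H₁ : IsNet d h₁) (H₂ : IsNet d h₂) :
    IsNet d (fun x => h₁ x + h₂ x) := by
  obtain ⟨n₁, w₁, b₁, a₁, e₁⟩ := H₁
  obtain ⟨n₂, w₂, b₂, a₂, e₂⟩ := H₂
  refine ⟨n₁ + n₂, Fin.addCases w₁ w₂, Fin.addCases b₁ b₂, Fin.addCases a₁ a₂, fun x => ?_⟩
  rw [Fin.sum_univ_add]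
  simp only [Fin.addCases_left, Fin.addCases_right]
  rw [e₁ x, e₂ x]

lemma IsNet.smul {d : ℕ} {h : (Fin d → ℝ) → ℝ} (c : ℝ) (H : IsNet d h) :
    IsNet d (fun x => c * h x) := by
  obtain ⟨n, w, b, a, e⟩ := H
  exact ⟨n, w, b, fun j => c * a j, fun x => by simp only []; rw [e x, Finset.mul_sum]; simp [mul_assoc]⟩

/-- Pad a network to more hidden units. -/
lemma IsNetN.pad {d n : ℕ} {h : (Fin d → ℝ) → ℝ} (H : IsNetN d n h) (p : ℕ) :
    IsNetN d (n + p) h := by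
  obtain ⟨w, b, a, e⟩ := H
  refine ⟨Fin.addCases w 0, Fin.addCases b 0, Fin.addCases a 0, fun x => ?_⟩
  rw [Fin.sum_univ_add]
  simp only [Fin.addCases_left, Fin.addCases_right]
  rw [e x]; simp

lemma IsNetN.of_le {d n N : ℕ} {h : (Fin d → ℝ) → ℝ} (H : IsNetN d n h) (hle : n ≤ N) :
    IsNetN d N h := by
  obtain ⟨p, rfl⟩ := Nat.exists_eq_add_of_le hle
  exact H.pad p

/-- Combine `m` networks into one shared hidden layer. -/
lemma isNet_combine {d m : ℕ} (hm : 1 ≤ m) (h : Fin m → (Fin d → ℝ) → ℝ)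
    (H : ∀ i, IsNet d (h i)) :
    ∃ (n : ℕ), 1 ≤ n ∧ ∃ (w : Fin n → Fin d → ℝ) (b : Fin n → ℝ)
      (α : Fin m → Fin n → ℝ),
      ∀ i x, h i x = ∑ j, α i j * ReLU (∑ k, w j k * x k + b j) := by
  choose n₀ H₀ using H
  set N : ℕ := (∑ i, n₀ i) + 1 with hN
  have hiN : ∀ i, IsNetN d N (h i) := fun i =>
    (H₀ i).of_le (le_trans (Finset.single_le_sum (f := n₀) (fun _ _ => Nat.zero_le _)
      (Finset.mem_univ i)) (Nat.le_succ _))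
  choose w b a e using hiN
  refine ⟨m * N, Nat.one_le_iff_ne_zero.2 (by positivity), ?_⟩
  refine ⟨fun j => w (finProdFinEquiv.symm j).1 (finProdFinEquiv.symm j).2,
    fun j => b (finProdFinEquiv.symm j).1 (finProdFinEquiv.symm j).2,
    fun i j => if (finProdFinEquiv.symm j).1 = i
      then a (finProdFinEquiv.symm j).1 (finProdFinEquiv.symm j).2 else 0,
    fun i x => ?_⟩
  rw [e i x]
  rw [← Equiv.sum_comp (finProdFinEquiv (m := m) (n := N))]
  simp only [Equiv.symm_apply_apply]
  rw [Fintype.sum_prod_type]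
  rw [Finset.sum_eq_single i]
  · apply Finset.sum_congr rfl; intro j _; simp
  · intro i' _ hne
    apply Finset.sum_eq_zero; intro j _; simp [hne]
  · intro hmem; exact absurd (Finset.mem_univ i) hmem

def IsNet1 (ν : ℝ → ℝ) : Prop :=
  ∃ (n : ℕ) (a w b : Fin n → ℝ), ∀ t, ν t = ∑ j, a j * ReLU (w j * t + b j)

lemma isNet1_const (c : ℝ) : IsNet1 (fun _ => c) :=
  ⟨1, fun _ => c, 0, 1, fun t => by simp [ReLU]⟩

lemma isNet1_relu (w b : ℝ) : IsNet1 (fun t => ReLU (w * t + b)) :=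
  ⟨1, 1, fun _ => w, fun _ => b, fun t => by simp⟩

lemma IsNet1.add {ν₁ ν₂ : ℝ → ℝ} (H₁ : IsNet1 ν₁) (H₂ : IsNet1 ν₂) :
    IsNet1 (fun t => ν₁ t + ν₂ t) := by
  obtain ⟨n₁, a₁, w₁, b₁, e₁⟩ := H₁
  obtain ⟨n₂, a₂, w₂, b₂, e₂⟩ := H₂
  refine ⟨n₁ + n₂, Fin.addCases a₁ a₂, Fin.addCases w₁ w₂, Fin.addCases b₁ b₂, fun t => ?_⟩
  rw [Fin.sum_univ_add]
  simp only [Fin.addCases_left, Fin.addCases_right]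
  rw [e₁ t, e₂ t]

lemma IsNet1.smul {ν : ℝ → ℝ} (c : ℝ) (H : IsNet1 ν) : IsNet1 (fun t => c * ν t) := by
  obtain ⟨n, a, w, b, e⟩ := H
  refine ⟨n, fun j => c * a j, w, b, fun t => ?_⟩
  simp only []; rw [e t, Finset.mul_sum]; simp [mul_assoc]

lemma isNet1_sum {ι : Type*} (s : Finset ι) (F : ι → ℝ → ℝ)
    (h : ∀ j ∈ s, IsNet1 (F j)) : IsNet1 (fun t => ∑ j ∈ s, F j t) := by
  classical
  induction s using Finset.cons_induction with
  | empty => simpa using isNet1_const 0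
  | cons j s hj ih =>
    simp only [Finset.sum_cons]
    exact (h j (Finset.mem_cons_self j s)).add (ih fun i hi => h i (Finset.mem_cons_of_mem hi))

/-- ReLU network approximation of a `1`-Lipschitz function on an interval. -/
lemma isNet1_approx_lipschitz (φ : ℝ → ℝ) (hφ : LipschitzWith 1 φ) (A B : ℝ) (hAB : A ≤ B)
    (ε : ℝ) (hε : 0 < ε) :
    ∃ ν : ℝ → ℝ, IsNet1 ν ∧ ∀ t ∈ Set.Icc A B, |ν t - φ t| ≤ ε := by
  rcases eq_or_lt_of_le hAB with rfl | hlt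
  · exact ⟨fun _ => φ A, isNet1_const _, fun t ht => by
      have : t = A := le_antisymm ht.2 ht.1
      simp [this, le_of_lt hε]⟩
  -- A < B
  set K : ℕ := ⌈2 * (B - A) / ε⌉₊ + 1 with hK
  have hKpos : 0 < (K : ℝ) := by positivity
  set h : ℝ := (B - A) / K with hh
  have hhpos : 0 < h := div_pos (by linarith) hKpos
  have h2h : 2 * h ≤ ε := by
    have hc : 2 * (B - A) / ε ≤ (K : ℝ) :=
      le_trans (Nat.le_ceil _) (by rw [hK]; push_cast; linarith)
    rw [div_le_iff₀ hε] at hc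
    rw [hh, mul_div_assoc']
    rw [div_le_iff₀ hKpos]
    linarith
  
  classical
  set tt : ℕ → ℝ := fun j => A + j * h with htt
  have httm : ∀ {a b : ℕ}, a ≤ b → tt a ≤ tt b := by
    intro a b hab
    have hc : (a : ℝ) ≤ (b : ℝ) := Nat.cast_le.2 hab
    simp only [htt]
    nlinarith [hhpos.le]
  set st : ℕ → ℝ := fun j => φ (tt (j + 1)) - φ (tt j) with hst
  have hstle : ∀ j, |st j| ≤ h := by
    intro j
    have := hφ.dist_le_mul (tt (j + 1)) (tt j)
    rw [Real.dist_eq, Real.dist_eq] at this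
    have harg : tt (j + 1) - tt j = h := by simp only [htt]; push_cast; ring
    calc |st j| ≤ 1 * |tt (j + 1) - tt j| := this
      _ = h := by rw [one_mul, harg, abs_of_pos hhpos]
  set ν : ℝ → ℝ := fun t => φ A +
    ∑ j ∈ Finset.range K, (st j / h) * (ReLU (t - tt j) - ReLU (t - tt (j + 1))) with hν
  have hnet : IsNet1 ν := by
    apply (isNet1_const (φ A)).add
    apply isNet1_sum
    intro j _
    have base : IsNet1 (fun t => (st j / h) * ReLU (1 * t + -(tt j)) +
        (-(st j / h)) * ReLU (1 * t + -(tt (j + 1)))) :=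
      ((isNet1_relu 1 (-(tt j))).smul (st j / h)).add
        ((isNet1_relu 1 (-(tt (j + 1)))).smul (-(st j / h)))
    convert base using 2 with t
    rw [← sub_eq_add_neg, ← sub_eq_add_neg]
    ring
  refine ⟨ν, hnet, fun t ht => ?_⟩
  obtain ⟨htA, htB⟩ := ht
  -- telescoping identity
  have httK : tt K = B := by
    simp only [htt, hh]
    field_simp
    ring
  have htel : φ t - φ A = ∑ j ∈ Finset.range K,
      (φ (min t (tt (j + 1))) - φ (min t (tt j))) := by
    rw [Finset.sum_range_sub (f := fun j => φ (min t (tt j)))]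
    have e0 : tt 0 = A := by simp [htt]
    rw [httK, e0, min_eq_left htB, min_eq_right htA]
  set P : ℕ → Prop := fun j => tt j < t ∧ t < tt (j + 1) with hP
  have hdiff : ν t - φ t = ∑ j ∈ Finset.range K,
      ((st j / h) * (ReLU (t - tt j) - ReLU (t - tt (j + 1)))
        - (φ (min t (tt (j + 1))) - φ (min t (tt j)))) := by
    rw [Finset.sum_sub_distrib, ← htel]
    simp only [hν]
    ring
  have hterm : ∀ j ∈ Finset.range K,
      |(st j / h) * (ReLU (t - tt j) - ReLU (t - tt (j + 1)))
        - (φ (min t (tt (j + 1))) - φ (min t (tt j)))| ≤ if P j then 2 * h else 0 := by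
    intro j _
    rcases le_or_gt t (tt j) with h1 | h1
    · have hj1 : t ≤ tt (j + 1) := le_trans h1 (httm (Nat.le_succ j))
      have r1 : ReLU (t - tt j) = 0 := max_eq_right (by linarith)
      have r2 : ReLU (t - tt (j + 1)) = 0 := max_eq_right (by linarith)
      have m1 : min t (tt j) = t := min_eq_left h1
      have m2 : min t (tt (j + 1)) = t := min_eq_left hj1
      rw [r1, r2, m1, m2]
      simp only [sub_zero, sub_self, mul_zero, abs_zero]
      split_ifs
      · positivity
      · exact le_rfl
    · rcases le_or_gt (tt (j + 1)) t with h2 | h2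
      · have hjj : tt j ≤ tt (j + 1) := httm (Nat.le_succ j)
        have r1 : ReLU (t - tt j) = t - tt j := max_eq_left (by linarith)
        have r2 : ReLU (t - tt (j + 1)) = t - tt (j + 1) := max_eq_left (by linarith)
        have m1 : min t (tt j) = tt j := min_eq_right (by linarith)
        have m2 : min t (tt (j + 1)) = tt (j + 1) := min_eq_right h2
        have harg : tt (j + 1) - tt j = h := by simp only [htt]; push_cast; ring
        rw [r1, r2, m1, m2]
        have : (st j / h) * (t - tt j - (t - tt (j + 1))) - (φ (tt (j + 1)) - φ (tt j)) = 0 := by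
          have e1 : t - tt j - (t - tt (j + 1)) = h := by linarith
          rw [e1, div_mul_cancel₀ _ hhpos.ne']; simp only [hst]; ring
        rw [this, abs_zero]
        split_ifs
        · positivity
        · exact le_rfl
      · have hPj : P j := ⟨h1, h2⟩
        rw [if_pos hPj]
        have r1 : ReLU (t - tt j) = t - tt j := max_eq_left (by linarith)
        have r2 : ReLU (t - tt (j + 1)) = 0 := max_eq_right (by linarith)
        have m1 : min t (tt j) = tt j := min_eq_right h1.le
        have m2 : min t (tt (j + 1)) = t := min_eq_left h2.le
        rw [r1, r2, m1, m2, sub_zero]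
        have harg : tt (j + 1) - tt j = h := by simp only [htt]; push_cast; ring
        have hb1 : |(st j / h) * (t - tt j)| ≤ h := by
          rw [abs_mul, abs_div, abs_of_pos hhpos]
          have h1' : |st j| / h ≤ 1 := by
            rw [div_le_one hhpos]; exact hstle j
          have h2' : |t - tt j| ≤ h := by
            rw [abs_of_pos (by linarith)]; linarith
          calc |st j| / h * |t - tt j| ≤ 1 * h := by
                exact mul_le_mul h1' h2' (abs_nonneg _) zero_le_one
            _ = h := one_mul h
        have hb2 : |φ t - φ (tt j)| ≤ h := by
          have := hφ.dist_le_mul t (tt j)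
          simp only [Real.dist_eq, NNReal.coe_one, one_mul] at this
          calc |φ t - φ (tt j)| ≤ |t - tt j| := this
            _ ≤ h := by rw [abs_of_pos (by linarith)]; linarith
        calc |(st j / h) * (t - tt j) - (φ t - φ (tt j))|
            ≤ |(st j / h) * (t - tt j)| + |φ t - φ (tt j)| := abs_sub _ _
          _ ≤ h + h := add_le_add hb1 hb2
          _ = 2 * h := by ring
  have hcard : ((Finset.range K).filter P).card ≤ 1 := by
    rw [Finset.card_le_one]
    intro a ha b hb
    rw [Finset.mem_filter] at ha hb
    by_contra hne
    rcases Nat.lt_trichotomy a b with hab | hab | hab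
    · exact absurd (lt_trans (lt_of_lt_of_le ha.2.2 (httm hab)) hb.2.1) (lt_irrefl t)
    · exact hne hab
    · exact absurd (lt_trans (lt_of_lt_of_le hb.2.2 (httm hab)) ha.2.1) (lt_irrefl t)
  calc |ν t - φ t| ≤ ∑ j ∈ Finset.range K, |(st j / h) * (ReLU (t - tt j) - ReLU (t - tt (j + 1)))
        - (φ (min t (tt (j + 1))) - φ (min t (tt j)))| := by
        rw [hdiff]; exact Finset.abs_sum_le_sum_abs _ _
    _ ≤ ∑ j ∈ Finset.range K, (if P j then 2 * h else 0) := Finset.sum_le_sum hterm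
    _ = ((Finset.range K).filter P).card * (2 * h) := by
        rw [← Finset.sum_filter, Finset.sum_const, nsmul_eq_mul]
    _ ≤ 1 * (2 * h) := by
        apply mul_le_mul_of_nonneg_right _ (by positivity)
        exact_mod_cast hcard
    _ ≤ ε := by rw [one_mul]; exact h2h

-- Part 3
lemma lipschitzWith_one_cos : LipschitzWith 1 Real.cos := by
  apply LipschitzWith.of_dist_le_mul
  intro x y
  simp only [Real.dist_eq, NNReal.coe_one, one_mul]
  rw [Real.cos_sub_cos]
  have h1 : |Real.sin ((x + y) / 2)| ≤ 1 := Real.abs_sin_le_one _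
  have h2 : |Real.sin ((x - y) / 2)| ≤ |x - y| / 2 := by
    calc |Real.sin ((x - y) / 2)| ≤ |(x - y) / 2| := Real.abs_sin_le_abs
      _ = |x - y| / 2 := by rw [abs_div, abs_two]
  rw [abs_mul, abs_mul]
  have h3 : |(-2 : ℝ)| = 2 := by norm_num
  rw [h3]
  nlinarith [abs_nonneg (Real.sin ((x + y) / 2)), abs_nonneg (Real.sin ((x - y) / 2))]

lemma IsNet1.ridge {ν : ℝ → ℝ} (H : IsNet1 ν) (d : ℕ) (w : Fin d → ℝ) :
    IsNet d (fun x => ν (∑ k, w k * x k)) := by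
  obtain ⟨n, a, w1, b, e⟩ := H
  refine ⟨n, fun j k => w1 j * w k, b, a, fun x => ?_⟩
  show ν (∑ k, w k * x k) = _
  rw [e (∑ k, w k * x k)]
  refine Finset.sum_congr rfl fun j _ => ?_
  have harg : w1 j * ∑ k, w k * x k = ∑ k, w1 j * w k * x k := by
    rw [Finset.mul_sum]
    exact Finset.sum_congr rfl fun k _ => by ring
  rw [harg]

lemma isNet_approx_cos (d : ℕ) (w : Fin d → ℝ) (θ : ℝ) (ε : ℝ) (hε : 0 < ε) :
    ∃ h, IsNet d h ∧ ∀ x ∈ Set.Icc (0 : Fin d → ℝ) 1,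
      |h x - Real.cos (∑ k, w k * x k + θ)| ≤ ε := by
  set R : ℝ := ∑ k, |w k| with hR
  have hR0 : 0 ≤ R := Finset.sum_nonneg fun k _ => abs_nonneg _
  have hφ : LipschitzWith 1 (fun t => Real.cos (t + θ)) := by
    have h2 : LipschitzWith 1 (fun t : ℝ => t + θ) := LipschitzWith.of_dist_le_mul fun a b => by
      simp [Real.dist_eq]
    simpa [Function.comp_def] using lipschitzWith_one_cos.comp h2
  obtain ⟨ν, hν, hb⟩ := isNet1_approx_lipschitz _ hφ (-R) R (by linarith) ε hε
  refine ⟨fun x => ν (∑ k, w k * x k), hν.ridge d w, fun x hx => ?_⟩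
  apply hb
  rw [Set.mem_Icc] at hx
  have habs : |∑ k, w k * x k| ≤ R := by
    calc |∑ k, w k * x k| ≤ ∑ k, |w k * x k| := Finset.abs_sum_le_sum_abs _ _
      _ ≤ ∑ k, |w k| := by
          refine Finset.sum_le_sum fun k _ => ?_
          rw [abs_mul]
          have hx1 : |x k| ≤ 1 := by
            rw [abs_le]; constructor
            · have h0 := Pi.le_def.1 hx.1 k; simp only [Pi.zero_apply] at h0; linarith
            · have h1 := Pi.le_def.1 hx.2 k; simpa using h1
          calc |w k| * |x k| ≤ |w k| * 1 := by
                exact mul_le_mul_of_nonneg_left hx1 (abs_nonneg _)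
            _ = |w k| := mul_one _
  exact abs_le.1 habs

-- Part 4 : Stone-Weierstrass
namespace SWPart
variable (d : ℕ)

abbrev Kube (d : ℕ) : Set (Fin d → ℝ) := Set.Icc (0 : Fin d → ℝ) 1

instance : CompactSpace ↥(Kube d) := isCompact_iff_compactSpace.mp isCompact_Icc

/-- the function `x ↦ cos (w ⬝ x + θ)` as a continuous map on the cube. -/
noncomputable def cosRidge (p : (Fin d → ℝ) × ℝ) : C(↥(Kube d), ℝ) :=
  ⟨fun x => Real.cos (∑ k, p.1 k * (x : Fin d → ℝ) k + p.2), by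
    apply Real.continuous_cos.comp
    apply Continuous.add _ continuous_const
    exact continuous_finset_sum _ fun k _ =>
      continuous_const.mul ((continuous_apply k).comp continuous_subtype_val)⟩

noncomputable def trigSpan : Submodule ℝ C(↥(Kube d), ℝ) :=
  Submodule.span ℝ (Set.range (cosRidge d))

lemma one_mem_trigSpan : (1 : C(↥(Kube d), ℝ)) ∈ trigSpan d := by
  have : (1 : C(↥(Kube d), ℝ)) = cosRidge d (0, 0) := by
    ext x
    simp [cosRidge]
  rw [this]
  exact Submodule.subset_span ⟨(0, 0), rfl⟩

lemma cosRidge_mul (p q : (Fin d → ℝ) × ℝ) :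
    cosRidge d p * cosRidge d q =
      (1 / 2 : ℝ) • cosRidge d (p.1 + q.1, p.2 + q.2) +
      (1 / 2 : ℝ) • cosRidge d (p.1 - q.1, p.2 - q.2) := by
  ext x
  simp only [cosRidge, ContinuousMap.mul_apply, ContinuousMap.add_apply,
    ContinuousMap.smul_apply, ContinuousMap.coe_mk, smul_eq_mul]
  have e1 : ∑ k, (p.1 + q.1) k * (x : Fin d → ℝ) k
      = (∑ k, p.1 k * (x : Fin d → ℝ) k) + ∑ k, q.1 k * (x : Fin d → ℝ) k := by
    rw [← Finset.sum_add_distrib]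
    exact Finset.sum_congr rfl fun k _ => by simp [add_mul]
  have e2 : ∑ k, (p.1 - q.1) k * (x : Fin d → ℝ) k
      = (∑ k, p.1 k * (x : Fin d → ℝ) k) - ∑ k, q.1 k * (x : Fin d → ℝ) k := by
    rw [← Finset.sum_sub_distrib]
    exact Finset.sum_congr rfl fun k _ => by simp [sub_mul]
  rw [e1, e2]
  set X := ∑ k, p.1 k * (x : Fin d → ℝ) k
  set Y := ∑ k, q.1 k * (x : Fin d → ℝ) k
  have c1 : X + Y + (p.2 + q.2) = (X + p.2) + (Y + q.2) := by ring
  have c2 : X - Y + (p.2 - q.2) = (X + p.2) - (Y + q.2) := by ring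
  have key : ∀ a b : ℝ, Real.cos a * Real.cos b
      = 1 / 2 * Real.cos (a + b) + 1 / 2 * Real.cos (a - b) := by
    intro a b; rw [Real.cos_add, Real.cos_sub]; ring
  rw [c1, c2]
  exact key _ _

lemma trigSpan_mul_mem : ∀ f g : C(↥(Kube d), ℝ),
    f ∈ trigSpan d → g ∈ trigSpan d → f * g ∈ trigSpan d := by
  have key : ∀ p : (Fin d → ℝ) × ℝ, ∀ g ∈ trigSpan d, cosRidge d p * g ∈ trigSpan d := by
    intro p g hg
    induction hg using Submodule.span_induction with
    | mem y hy =>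
      obtain ⟨q, rfl⟩ := hy
      rw [cosRidge_mul]
      exact Submodule.add_mem _
        (Submodule.smul_mem _ _ (Submodule.subset_span ⟨_, rfl⟩))
        (Submodule.smul_mem _ _ (Submodule.subset_span ⟨_, rfl⟩))
    | zero => rw [mul_zero]; exact Submodule.zero_mem _
    | add y z _ _ hy hz => rw [mul_add]; exact Submodule.add_mem _ hy hz
    | smul c y _ hy => rw [mul_smul_comm]; exact Submodule.smul_mem _ _ hy
  intro f g hf hg
  induction hf using Submodule.span_induction with
  | mem y hy => obtain ⟨p, rfl⟩ := hy; exact key p g hg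
  | zero => rw [zero_mul]; exact Submodule.zero_mem _
  | add y z _ _ hy hz => rw [add_mul]; exact Submodule.add_mem _ hy hz
  | smul c y _ hy => rw [smul_mul_assoc]; exact Submodule.smul_mem _ _ hy

noncomputable def trigAlg : Subalgebra ℝ C(↥(Kube d), ℝ) :=
  (trigSpan d).toSubalgebra (one_mem_trigSpan d) (trigSpan_mul_mem d)

lemma trigAlg_separates : (trigAlg d).SeparatesPoints := by
  intro x y hxy
  have hvne : (x : Fin d → ℝ) ≠ (y : Fin d → ℝ) := fun h => hxy (Subtype.ext h)
  obtain ⟨k, hk⟩ := Function.ne_iff.mp hvne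
  refine ⟨_, ⟨cosRidge d (Pi.single k 1, 0), Submodule.subset_span ⟨_, rfl⟩, rfl⟩, ?_⟩
  simp only [cosRidge, ContinuousMap.coe_mk]
  have ex : ∀ z : ↥(Kube d), ∑ j, (Pi.single k 1 : Fin d → ℝ) j * (z : Fin d → ℝ) j + 0
      = (z : Fin d → ℝ) k := by
    intro z
    rw [add_zero]
    rw [Finset.sum_eq_single k]
    · simp
    · intro j _ hj; rw [Pi.single_eq_of_ne hj]; ring
    · intro hmem; exact absurd (Finset.mem_univ k) hmem
  rw [ex x, ex y]
  have hmem : ∀ z : ↥(Kube d), (z : Fin d → ℝ) k ∈ Set.Icc 0 Real.pi := by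
    intro z
    have hz := z.2
    rw [Set.mem_Icc] at hz
    constructor
    · have := Pi.le_def.1 hz.1 k; simpa using this
    · have := Pi.le_def.1 hz.2 k
      have h1 : (z : Fin d → ℝ) k ≤ 1 := by simpa using this
      linarith [Real.pi_gt_three]
  intro hcos
  exact hk (Real.injOn_cos (hmem x) (hmem y) hcos)

/-- Universal approximation: single-hidden-layer ReLU networks approximate continuous
functions uniformly on the cube. -/
theorem isNet_uniform_approx (F : (Fin d → ℝ) → ℝ) (hF : Continuous F)
    (ε : ℝ) (hε : 0 < ε) :
    ∃ h, IsNet d h ∧ ∀ x ∈ Kube d, |h x - F x| ≤ ε := by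
  obtain ⟨g, hg⟩ := ContinuousMap.exists_mem_subalgebra_near_continuous_of_separatesPoints
    (trigAlg d) (trigAlg_separates d) (fun x : ↥(Kube d) => F x)
    (hF.comp continuous_subtype_val) (ε / 2) (by linarith)
  obtain ⟨g, hgmem⟩ := g
  -- g approximable by nets
  have happrox : ∀ g : C(↥(Kube d), ℝ), g ∈ trigSpan d → ∀ δ : ℝ, 0 < δ →
      ∃ h, IsNet d h ∧ ∀ x (hx : x ∈ Kube d), |h x - g ⟨x, hx⟩| ≤ δ := by
    intro g hg
    induction hg using Submodule.span_induction with
    | mem y hy =>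
      obtain ⟨p, rfl⟩ := hy
      intro δ hδ
      obtain ⟨h, hnet, hb⟩ := isNet_approx_cos d p.1 p.2 δ hδ
      exact ⟨h, hnet, fun x hx => hb x hx⟩
    | zero =>
      intro δ hδ
      exact ⟨_, isNet_zero d, fun x hx => by simpa using le_of_lt hδ⟩
    | add y z _ _ hy hz =>
      intro δ hδ
      obtain ⟨h₁, hn₁, hb₁⟩ := hy (δ / 2) (by linarith)
      obtain ⟨h₂, hn₂, hb₂⟩ := hz (δ / 2) (by linarith)
      refine ⟨fun x => h₁ x + h₂ x, hn₁.add hn₂, fun x hx => ?_⟩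
      have := abs_add_le (h₁ x - y ⟨x, hx⟩) (h₂ x - z ⟨x, hx⟩)
      simp only [ContinuousMap.add_apply]
      calc |h₁ x + h₂ x - (y ⟨x, hx⟩ + z ⟨x, hx⟩)|
          = |(h₁ x - y ⟨x, hx⟩) + (h₂ x - z ⟨x, hx⟩)| := by ring_nf
        _ ≤ |h₁ x - y ⟨x, hx⟩| + |h₂ x - z ⟨x, hx⟩| := abs_add_le _ _
        _ ≤ δ / 2 + δ / 2 := add_le_add (hb₁ x hx) (hb₂ x hx)
        _ = δ := by ring
    | smul c y _ hy =>
      intro δ hδ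
      rcases eq_or_ne c 0 with rfl | hc
      · refine ⟨_, isNet_zero d, fun x hx => ?_⟩
        simp [le_of_lt hδ]
      · obtain ⟨h, hn, hb⟩ := hy (δ / |c|) (by positivity)
        refine ⟨fun x => c * h x, hn.smul c, fun x hx => ?_⟩
        simp only [ContinuousMap.smul_apply, smul_eq_mul]
        calc |c * h x - c * y ⟨x, hx⟩| = |c| * |h x - y ⟨x, hx⟩| := by
              rw [← abs_mul]; ring_nf
          _ ≤ |c| * (δ / |c|) := mul_le_mul_of_nonneg_left (hb x hx) (abs_nonneg _)
          _ = δ := by field_simp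
  obtain ⟨h, hn, hb⟩ := happrox g hgmem (ε / 2) (by linarith)
  refine ⟨h, hn, fun x hx => ?_⟩
  have h1 := hg ⟨x, hx⟩
  rw [Real.norm_eq_abs] at h1
  calc |h x - F x| = |(h x - g ⟨x, hx⟩) + (g ⟨x, hx⟩ - F x)| := by ring_nf
    _ ≤ |h x - g ⟨x, hx⟩| + |g ⟨x, hx⟩ - F x| := abs_add_le _ _
    _ ≤ ε / 2 + ε / 2 := add_le_add (hb x hx) (le_of_lt h1)
    _ = ε := by ring

end SWPart

section SoftmaxLemmas
variable {m : ℕ} (y : Fin m → ℝ) (i : Fin m)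

lemma sum_exp_pos (i : Fin m) : 0 < ∑ k, Real.exp (y k) :=
  Finset.sum_pos (fun k _ => Real.exp_pos _) ⟨i, Finset.mem_univ i⟩

lemma softmax_pos : 0 < softmax y i :=
  div_pos (Real.exp_pos _) (sum_exp_pos y i)

lemma softmax_le_one : softmax y i ≤ 1 :=
  (div_le_one (sum_exp_pos y i)).2
    (Finset.single_le_sum (f := fun k => Real.exp (y k)) (fun k _ => (Real.exp_pos _).le)
      (Finset.mem_univ i))

lemma softmax_le_exp (i' : Fin m) : softmax y i ≤ Real.exp (y i - y i') := by
  rw [Real.exp_sub]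
  exact div_le_div_of_nonneg_left (Real.exp_pos _).le (Real.exp_pos _)
    (Finset.single_le_sum (f := fun k => Real.exp (y k)) (fun k _ => (Real.exp_pos _).le)
      (Finset.mem_univ i'))

lemma one_sub_softmax_le (c : ℝ) (hc : ∀ i', i' ≠ i → y i' ≤ y i - c) :
    1 - softmax y i ≤ m * Real.exp (-c) := by
  set S := ∑ k, Real.exp (y k) with hS
  have hSpos : 0 < S := sum_exp_pos y i
  have heipos : 0 < Real.exp (y i) := Real.exp_pos _
  have heiS : Real.exp (y i) ≤ S :=
    Finset.single_le_sum (f := fun k => Real.exp (y k)) (fun k _ => (Real.exp_pos _).le)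
      (Finset.mem_univ i)
  have h1 : 1 - softmax y i = (S - Real.exp (y i)) / S := by
    rw [softmax, ← hS]
    field_simp
  have hsplit : S - Real.exp (y i) = ∑ k ∈ Finset.univ.erase i, Real.exp (y k) := by
    rw [hS, ← Finset.add_sum_erase _ _ (Finset.mem_univ i)]
    ring
  have hnum : 0 ≤ S - Real.exp (y i) := by
    rw [hsplit]
    exact Finset.sum_nonneg fun k _ => (Real.exp_pos _).le
  have h2 : (S - Real.exp (y i)) / S ≤ (S - Real.exp (y i)) / Real.exp (y i) :=
    div_le_div_of_nonneg_left hnum heipos heiS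
  have h3 : (S - Real.exp (y i)) / Real.exp (y i)
      = ∑ k ∈ Finset.univ.erase i, Real.exp (y k - y i) := by
    rw [hsplit, Finset.sum_div]
    exact Finset.sum_congr rfl fun k _ => (Real.exp_sub _ _).symm
  have h4 : ∑ k ∈ Finset.univ.erase i, Real.exp (y k - y i)
      ≤ ∑ _k ∈ Finset.univ.erase i, Real.exp (-c) := by
    refine Finset.sum_le_sum fun k hk => Real.exp_le_exp.2 ?_
    have := hc k (Finset.ne_of_mem_erase hk)
    linarith
  have h5 : ∑ _k ∈ Finset.univ.erase i, Real.exp (-c)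
      ≤ m * Real.exp (-c) := by
    rw [Finset.sum_const, nsmul_eq_mul]
    have hcard : ((Finset.univ.erase i).card : ℝ) ≤ m := by
      have := Finset.card_erase_le (s := (Finset.univ : Finset (Fin m))) (a := i)
      have h6 : (Finset.univ : Finset (Fin m)).card = m := Finset.card_fin m
      exact_mod_cast le_trans this (le_of_eq h6)
    exact mul_le_mul_of_nonneg_right hcard (Real.exp_pos _).le
  linarith [h1 ▸ le_trans h2 (le_of_eq h3)]

end SoftmaxLemmas


lemma IsNet.continuous {d : ℕ} {h : (Fin d → ℝ) → ℝ} (H : IsNet d h) : Continuous h := by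
  obtain ⟨n, w, b, a, e⟩ := H
  rw [funext e]
  apply continuous_finset_sum
  intro j _
  apply Continuous.mul continuous_const
  simp only [ReLU]
  exact ((continuous_finset_sum _ fun k _ =>
    continuous_const.mul (continuous_apply k)).add continuous_const).max continuous_const

/-- **Approximation capability of softmax.**
For every `d ≥ 1`, `m ≥ 1`, every measurable indicator function `f = (f_1, …, f_m)` on `I_d`,
and every `ε > 0`, there is a single-hidden-layer ReLU network with a softmax output layer
such that, for every `i`, `∫_{I_d} |softmax (g x) i - f i x| dx < ε`,
where `g x i = ∑ j, α i j * ReLU (⟪w j, x⟫ + b j)`. -/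
theorem softmax_relu_network_approximates_indicator
    (d m : ℕ) (hd : 1 ≤ d) (hm : 1 ≤ m)
    (f : Fin m → (Fin d → ℝ) → ℝ)
    (hfmeas : ∀ i, Measurable (f i))
    (hind : IsIndicatorFunction f)
    (ε : ℝ) (hε : 0 < ε) :
    ∃ (n : ℕ), 1 ≤ n ∧ ∃ (w : Fin n → Fin d → ℝ) (b : Fin n → ℝ)
      (α : Fin m → Fin n → ℝ),
      ∀ i, ∫ x in Set.Icc (0 : Fin d → ℝ) 1,
        |softmax (fun i' => ∑ j, α i' j * ReLU (∑ k, w j k * x k + b j)) i - f i x| < ε := by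
  classical
  set K : Set (Fin d → ℝ) := Set.Icc 0 1 with hK
  have hKmeas : MeasurableSet K := measurableSet_Icc
  have hKvol : volume K = 1 := by
    rw [hK, Real.volume_Icc_pi]
    simp
  have hf01 : ∀ x ∈ K, ∀ i, f i x = 0 ∨ f i x = 1 := fun x hx => (hind x hx).1
  have hfsum : ∀ x ∈ K, ∑ i, f i x = 1 := fun x hx => (hind x hx).2
  have hfnn : ∀ x ∈ K, ∀ i, 0 ≤ f i x := by
    intro x hx i
    rcases hf01 x hx i with h | h <;> rw [h] <;> norm_num
  set A : Fin m → Set (Fin d → ℝ) := fun i => K ∩ f i ⁻¹' {1} with hA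
  have hAmeas : ∀ i, MeasurableSet (A i) :=
    fun i => hKmeas.inter ((hfmeas i) (measurableSet_singleton 1))
  have hAsub : ∀ i, A i ⊆ K := fun i => Set.inter_subset_left
  have hAfin : ∀ i, volume (A i) ≠ ⊤ := by
    intro i
    have h1 : volume (A i) ≤ volume K := measure_mono (hAsub i)
    rw [hKvol] at h1
    exact ne_top_of_le_ne_top ENNReal.one_ne_top h1
  have hmem_iff : ∀ i x, x ∈ A i ↔ (x ∈ K ∧ f i x = 1) := by
    intro i x
    rw [hA]
    simp [Set.mem_inter_iff]
  have hzero : ∀ i j, i ≠ j → ∀ x ∈ A j, f i x = 0 := by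
    intro i j hij x hx
    have hxK : x ∈ K := hAsub j hx
    have hfj : f j x = 1 := ((hmem_iff j x).1 hx).2
    rcases hf01 x hxK i with h0 | h1
    · exact h0
    · exfalso
      have e1 : ∑ k, f k x = f j x + ∑ k ∈ Finset.univ.erase j, f k x :=
        (Finset.add_sum_erase _ _ (Finset.mem_univ j)).symm
      have e2 : f i x ≤ ∑ k ∈ Finset.univ.erase j, f k x :=
        Finset.single_le_sum (f := fun k => f k x) (fun k _ => hfnn x hxK k)
          (Finset.mem_erase.2 ⟨hij, Finset.mem_univ i⟩)
      have := hfsum x hxK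
      rw [e1, hfj] at this
      rw [h1] at e2
      linarith
  have hexists : ∀ x ∈ K, ∃ j, f j x = 1 := by
    intro x hx
    by_contra hno
    push_neg at hno
    have hall : ∀ j, f j x = 0 := fun j => (hf01 x hx j).resolve_right (hno j)
    have h1 := hfsum x hx
    rw [Finset.sum_congr rfl fun j _ => hall j] at h1
    simp at h1
  have hm' : (0 : ℝ) < m := by exact_mod_cast hm
  have hm1 : (1 : ℝ) ≤ m := by exact_mod_cast hm
  set δ : ℝ≥0∞ := ENNReal.ofReal (ε / (8 * m)) with hδ
  have hδr : 0 < ε / (8 * m) := by positivity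
  have hδ0 : δ ≠ 0 := by
    rw [hδ, Ne, ENNReal.ofReal_eq_zero]
    linarith
  have hcomp : ∀ i, ∃ F ⊆ A i, IsCompact F ∧ volume (A i) < volume F + δ :=
    fun i => (hAmeas i).exists_isCompact_lt_add (hAfin i) hδ0
  choose F hFsub hFcomp hFvol using hcomp
  have hFK : ∀ i, F i ⊆ K := fun i => (hFsub i).trans (hAsub i)
  have hFmeas : ∀ i, MeasurableSet (F i) := fun i => (hFcomp i).isClosed.measurableSet
  have hFdiffvol : ∀ i, volume (A i \ F i) ≤ δ := by
    intro i
    have hFfin : volume (F i) ≠ ⊤ := ne_top_of_le_ne_top (hAfin i) (measure_mono (hFsub i))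
    rw [measure_diff (hFsub i) (hFmeas i).nullMeasurableSet hFfin]
    exact tsub_le_iff_right.2 (by rw [add_comm]; exact (hFvol i).le)
  have hFdisj : ∀ i j, i ≠ j → ∀ x ∈ F i, x ∉ F j := by
    intro i j hij x hxi hxj
    have h1 : f i x = 1 := ((hmem_iff i x).1 (hFsub i hxi)).2
    have h0 : f i x = 0 := hzero i j hij x (hFsub j hxj)
    rw [h0] at h1
    norm_num at h1
  have hsep : ∀ p : Fin m × Fin m, ∃ r : ℝ, 0 < r ∧
      (p.1 ≠ p.2 → ∀ x ∈ F p.2, x ∉ Metric.thickening r (F p.1)) := by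
    rintro ⟨i, j⟩
    rcases eq_or_ne i j with rfl | hij
    · exact ⟨1, one_pos, fun hcon => absurd rfl hcon⟩
    · have hopen : IsOpen (F j)ᶜ := (hFcomp j).isClosed.isOpen_compl
      have hsubset : F i ⊆ (F j)ᶜ := fun x hx => hFdisj i j hij x hx
      obtain ⟨r, hr, hthick⟩ := (hFcomp i).exists_thickening_subset_open hopen hsubset
      exact ⟨r, hr, fun _ x hxj hxthick => hthick hxthick hxj⟩
  choose rr hrrpos hrr using hsep
  haveI : Nonempty (Fin m) := ⟨⟨0, hm⟩⟩
  set r : ℝ := Finset.univ.inf' Finset.univ_nonempty rr with hr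
  have hrpos : 0 < r := by
    rw [hr]
    rw [Finset.lt_inf'_iff]
    exact fun p _ => hrrpos p
  have hrle : ∀ p, r ≤ rr p := fun p => Finset.inf'_le _ (Finset.mem_univ p)
  have hinf : ∀ i j, i ≠ j → ∀ x ∈ F j, (F i).Nonempty → r ≤ Metric.infDist x (F i) := by
    intro i j hij x hxj hFne
    by_contra hlt
    push_neg at hlt
    have hx : x ∈ Metric.thickening (rr (i, j)) (F i) := by
      rw [Metric.mem_thickening_iff_infDist_lt hFne]
      exact lt_of_lt_of_le hlt (hrle (i, j))
    exact hrr (i, j) hij x hxj hx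
  set ψ : Fin m → (Fin d → ℝ) → ℝ := fun i =>
    if (F i).Nonempty then (fun x => max (1 - Metric.infDist x (F i) / r) 0)
    else (fun _ => 0) with hψ
  have hψcont : ∀ i, Continuous (ψ i) := by
    intro i
    rw [hψ]
    dsimp only
    split_ifs
    · exact (continuous_const.sub ((Metric.continuous_infDist_pt _).div_const r)).max
        continuous_const
    · exact continuous_const
  have hψ_one : ∀ i, ∀ x ∈ F i, ψ i x = 1 := by
    intro i x hx
    rw [hψ]
    dsimp only
    rw [if_pos ⟨x, hx⟩, Metric.infDist_zero_of_mem hx]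
    norm_num
  have hψ_zero : ∀ i j, i ≠ j → ∀ x ∈ F j, ψ i x = 0 := by
    intro i j hij x hxj
    rw [hψ]
    dsimp only
    split_ifs with hne1
    · have hge := hinf i j hij x hxj hne1
      have h1 : 1 ≤ Metric.infDist x (F i) / r := (one_le_div hrpos).2 hge
      exact max_eq_right (by linarith)
    · rfl
  have happ : ∀ i, ∃ h, IsNet d h ∧ ∀ x ∈ K, |h x - ψ i x| ≤ 1 / 8 :=
    fun i => SWPart.isNet_uniform_approx d (ψ i) (hψcont i) (1 / 8) (by norm_num)
  choose h hhnet hhb using happ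
  set T : ℝ := max 1 (-2 * Real.log (ε / (8 * m))) with hT
  have hT1 : 1 ≤ T := le_max_left _ _
  have hT0 : 0 ≤ T := by linarith
  have hTbound : Real.exp (-(T / 2)) ≤ ε / (8 * m) := by
    have h2 : -2 * Real.log (ε / (8 * m)) ≤ T := le_max_right _ _
    have h3 : -(T / 2) ≤ Real.log (ε / (8 * m)) := by linarith
    calc Real.exp (-(T / 2)) ≤ Real.exp (Real.log (ε / (8 * m))) := Real.exp_le_exp.2 h3
      _ = ε / (8 * m) := Real.exp_log hδr
  obtain ⟨n, hn1, w, b, α, heq⟩ := isNet_combine hm (fun i x => T * h i x)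
    (fun i => (hhnet i).smul T)
  refine ⟨n, hn1, w, b, α, fun i => ?_⟩
  set g : (Fin d → ℝ) → Fin m → ℝ := fun x i' => T * h i' x with hg
  have hrw : ∀ x : Fin d → ℝ,
      (fun i' => ∑ j, α i' j * ReLU (∑ k, w j k * x k + b j)) = g x :=
    fun x => funext fun i' => (heq i' x).symm
  set p : (Fin d → ℝ) → ℝ := fun x =>
    |softmax (fun i' => ∑ j, α i' j * ReLU (∑ k, w j k * x k + b j)) i - f i x| with hp
  have hpg : ∀ x, p x = |softmax (g x) i - f i x| := by
    intro x
    rw [hp]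
    dsimp only
    rw [hrw x]
  show ∫ x in K, p x < ε
  -- pointwise bound on the union of the compacts
  have hηbound : ∀ j, ∀ x ∈ F j, p x ≤ m * Real.exp (-(T / 2)) := by
    intro j x hxFj
    have hxK : x ∈ K := hFK j hxFj
    rw [hpg x]
    rcases eq_or_ne i j with rfl | hij
    · have hfx : f i x = 1 := ((hmem_iff i x).1 (hFsub i hxFj)).2
      rw [hfx]
      have hsm : softmax (g x) i ≤ 1 := softmax_le_one _ _
      rw [abs_sub_comm, abs_of_nonneg (by linarith)]
      apply one_sub_softmax_le
      intro i' hi'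
      have hbi := abs_le.1 (hhb i x hxK)
      rw [hψ_one i x hxFj] at hbi
      have hbi' := abs_le.1 (hhb i' x hxK)
      rw [hψ_zero i' i hi' x hxFj] at hbi'
      have hdm : 1 / 2 ≤ h i x - h i' x := by
        simp only [sub_zero] at hbi'
        linarith [hbi.1, hbi'.2]
      have hmul := mul_le_mul_of_nonneg_left hdm hT0
      rw [hg]
      dsimp only
      linarith [hmul]
    · have hfx : f i x = 0 := hzero i j hij x (hFsub j hxFj)
      rw [hfx, sub_zero, abs_of_nonneg (softmax_pos _ _).le]
      have hb1 : softmax (g x) i ≤ Real.exp (g x i - g x j) := softmax_le_exp _ _ _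
      have hbj := abs_le.1 (hhb j x hxK)
      rw [hψ_one j x hxFj] at hbj
      have hbi := abs_le.1 (hhb i x hxK)
      rw [hψ_zero i j hij x hxFj] at hbi
      have hdm : h i x - h j x ≤ -(1 / 2) := by
        simp only [sub_zero] at hbi
        linarith [hbj.1, hbi.2]
      have hmul := mul_le_mul_of_nonneg_left hdm hT0
      have harg : g x i - g x j ≤ -(T / 2) := by
        rw [hg]
        dsimp only
        linarith [hmul]
      calc softmax (g x) i ≤ Real.exp (g x i - g x j) := hb1
        _ ≤ Real.exp (-(T / 2)) := Real.exp_le_exp.2 harg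
        _ ≤ m * Real.exp (-(T / 2)) := by
            nlinarith [Real.exp_pos (-(T / 2)), hm1]
  have hpnn : ∀ x, 0 ≤ p x := fun x => by rw [hpg x]; exact abs_nonneg _
  have hpb : ∀ x ∈ K, p x ≤ 2 := by
    intro x hxK
    rw [hpg x]
    have h1 : |softmax (g x) i| ≤ 1 :=
      abs_le.2 ⟨by linarith [(softmax_pos (g x) i).le], softmax_le_one _ _⟩
    have h2 : |f i x| ≤ 1 := by
      rcases hf01 x hxK i with hv | hv <;> rw [hv] <;> norm_num
    calc |softmax (g x) i - f i x| ≤ |softmax (g x) i| + |f i x| := abs_sub _ _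
      _ ≤ 2 := by linarith
  -- measurability and integrability
  have hgc : Continuous fun x => softmax (g x) i := by
    apply Continuous.div
    · exact Real.continuous_exp.comp (continuous_const.mul (hhnet i).continuous)
    · exact continuous_finset_sum _ fun k _ =>
        Real.continuous_exp.comp (continuous_const.mul (hhnet k).continuous)
    · intro x
      exact (sum_exp_pos (g x) i).ne'
  have hpmeas : Measurable p := by
    have : Measurable fun x => softmax (g x) i - f i x := hgc.measurable.sub (hfmeas i)
    have habs : Measurable fun x => |softmax (g x) i - f i x| := this.abs
    have : p = fun x => |softmax (g x) i - f i x| := funext hpg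
    rw [this]
    exact habs
  have hpint : IntegrableOn p K volume := by
    have hconst : IntegrableOn (fun _ : Fin d → ℝ => (2 : ℝ)) K volume := by
      refine integrableOn_const (lt_top_iff_ne_top.1 ?_)
      rw [hKvol]
      exact ENNReal.one_lt_top
    refine Integrable.mono' hconst (hpmeas.aestronglyMeasurable.restrict) ?_
    rw [ae_restrict_iff' hKmeas]
    refine ae_of_all _ fun x hx => ?_
    rw [Real.norm_eq_abs, abs_of_nonneg (hpnn x)]
    exact hpb x hx
  set G : Set (Fin d → ℝ) := ⋃ j, F j with hG
  have hGmeas : MeasurableSet G := MeasurableSet.iUnion fun j => hFmeas j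
  have hsplitset : K = (K ∩ G) ∪ (K \ G) := (Set.inter_union_diff K G).symm
  have hdisj2 : Disjoint (K ∩ G) (K \ G) :=
    Disjoint.mono_left Set.inter_subset_right disjoint_sdiff_self_right
  have hsplit : ∫ x in K, p x = (∫ x in K ∩ G, p x) + ∫ x in K \ G, p x := by
    conv_lhs => rw [hsplitset]
    exact setIntegral_union hdisj2 (hKmeas.diff hGmeas)
      (hpint.mono_set Set.inter_subset_left) (hpint.mono_set Set.diff_subset)
  have hCnn : 0 ≤ (m : ℝ) * Real.exp (-(T / 2)) := by positivity
  have hI1 : ∫ x in K ∩ G, p x ≤ (m : ℝ) * Real.exp (-(T / 2)) := by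
    have hfin : volume (K ∩ G) < ⊤ := by
      refine lt_of_le_of_lt (measure_mono Set.inter_subset_left) ?_
      rw [hKvol]
      exact ENNReal.one_lt_top
    have hbd : ∀ x ∈ K ∩ G, ‖p x‖ ≤ (m : ℝ) * Real.exp (-(T / 2)) := by
      intro x hx
      obtain ⟨j, hj⟩ := Set.mem_iUnion.1 hx.2
      rw [Real.norm_eq_abs, abs_of_nonneg (hpnn x)]
      exact hηbound j x hj
    have hnorm := norm_setIntegral_le_of_norm_le_const hfin hbd
    have htr : (volume (K ∩ G)).toReal ≤ 1 := by
      have h1 : volume (K ∩ G) ≤ 1 := by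
        rw [← hKvol]
        exact measure_mono Set.inter_subset_left
      calc (volume (K ∩ G)).toReal ≤ (1 : ℝ≥0∞).toReal :=
            ENNReal.toReal_mono ENNReal.one_ne_top h1
        _ = 1 := by simp
    calc ∫ x in K ∩ G, p x ≤ ‖∫ x in K ∩ G, p x‖ := le_abs_self _
      _ ≤ (m : ℝ) * Real.exp (-(T / 2)) * (volume (K ∩ G)).toReal := hnorm
      _ ≤ (m : ℝ) * Real.exp (-(T / 2)) * 1 := by
          exact mul_le_mul_of_nonneg_left htr hCnn
      _ = (m : ℝ) * Real.exp (-(T / 2)) := mul_one _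
  have hvol2 : volume (K \ G) ≤ (m : ℝ≥0∞) * δ := by
    have hsub2 : K \ G ⊆ ⋃ j, (A j \ F j) := by
      intro x hx
      obtain ⟨j, hj⟩ := hexists x hx.1
      have hxAj : x ∈ A j := (hmem_iff j x).2 ⟨hx.1, hj⟩
      have hxnF : x ∉ F j := fun hc => hx.2 (Set.mem_iUnion.2 ⟨j, hc⟩)
      exact Set.mem_iUnion.2 ⟨j, hxAj, hxnF⟩
    calc volume (K \ G) ≤ volume (⋃ j, (A j \ F j)) := measure_mono hsub2
      _ ≤ ∑' j, volume (A j \ F j) := measure_iUnion_le _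
      _ = ∑ j, volume (A j \ F j) := tsum_fintype _
      _ ≤ ∑ _j : Fin m, δ := Finset.sum_le_sum fun j _ => hFdiffvol j
      _ = (m : ℝ≥0∞) * δ := by
          rw [Finset.sum_const, Finset.card_fin, nsmul_eq_mul]
  have hvol2' : (volume (K \ G)).toReal ≤ ε / 8 := by
    have he : (m : ℝ≥0∞) * δ = ENNReal.ofReal (ε / 8) := by
      rw [hδ, ← ENNReal.ofReal_natCast m, ← ENNReal.ofReal_mul (by positivity)]
      congr 1
      field_simp
      try ring
    rw [he] at hvol2
    exact ENNReal.toReal_le_of_le_ofReal (by positivity) hvol2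
  have hI2 : ∫ x in K \ G, p x ≤ 2 * (ε / 8) := by
    have hfin : volume (K \ G) < ⊤ := by
      refine lt_of_le_of_lt (measure_mono Set.diff_subset) ?_
      rw [hKvol]
      exact ENNReal.one_lt_top
    have hbd : ∀ x ∈ K \ G, ‖p x‖ ≤ (2 : ℝ) := by
      intro x hx
      rw [Real.norm_eq_abs, abs_of_nonneg (hpnn x)]
      exact hpb x hx.1
    have hnorm := norm_setIntegral_le_of_norm_le_const hfin hbd
    calc ∫ x in K \ G, p x ≤ ‖∫ x in K \ G, p x‖ := le_abs_self _
      _ ≤ 2 * (volume (K \ G)).toReal := hnorm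
      _ ≤ 2 * (ε / 8) := by linarith [hvol2']
  have hfinal1 : (m : ℝ) * Real.exp (-(T / 2)) ≤ ε / 8 := by
    have := mul_le_mul_of_nonneg_left hTbound (le_of_lt hm')
    calc (m : ℝ) * Real.exp (-(T / 2)) ≤ (m : ℝ) * (ε / (8 * m)) := this
      _ = ε / 8 := by field_simp
  rw [hsplit]
  have : ε / 8 + 2 * (ε / 8) < ε := by linarith
  linarith [hI1, hI2, hfinal1]
end

section
/- For every dimension d ≥ 1, every function f ∈ L¹(I_d) and every ε > 0, there exist an integer n ≥ 1, coefficients α_1, …, α_n ∈ ℝ, weight vectors w_1, …, w_n ∈ ℝ^d and biases b_1, …, b_n ∈ ℝ such that ∫_{I_d} |Σ_{j=1}^n α_j · σ₁(w_jᵀ x + b_j) − f(x)| dx < ε; that is, finite superpositions of the clipped-linear activation σ₁ are dense in L¹(I_d). -/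
open MeasureTheory

/-- The clipped-linear activation `σ₁ t = ReLU (t + 0.5) - ReLU (t - 0.5)`. -/
noncomputable def sigma1 (t : ℝ) : ℝ := ReLU (t + 0.5) - ReLU (t - 0.5)


lemma sigma1_nonneg (t : ℝ) : 0 ≤ sigma1 t := by
  unfold sigma1 ReLU
  rcases le_or_gt t (-0.5) with h | h
  · rw [max_eq_right (by linarith), max_eq_right (by linarith)]; norm_num
  · rw [max_eq_left (by linarith)]
    rcases le_or_gt t 0.5 with h2 | h2
    · rw [max_eq_right (by linarith)]; linarith
    · rw [max_eq_left (by linarith)]; linarith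

lemma sigma1_le_one (t : ℝ) : sigma1 t ≤ 1 := by
  unfold sigma1 ReLU
  rcases le_or_gt t (-0.5) with h | h
  · rw [max_eq_right (by linarith), max_eq_right (by linarith)]; norm_num
  · rw [max_eq_left (by linarith)]
    rcases le_or_gt t 0.5 with h2 | h2
    · rw [max_eq_right (by linarith)]; linarith
    · rw [max_eq_left (by linarith)]; linarith

lemma sigma1_of_le {t : ℝ} (h : t ≤ -(1/2)) : sigma1 t = 0 := by
  unfold sigma1 ReLU
  rw [max_eq_right (by norm_num; linarith), max_eq_right (by norm_num; linarith)]
  ring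

lemma sigma1_of_ge {t : ℝ} (h : (1/2) ≤ t) : sigma1 t = 1 := by
  unfold sigma1 ReLU
  rw [max_eq_left (by norm_num; linarith), max_eq_left (by norm_num; linarith)]
  ring

lemma sigma1_continuous : Continuous sigma1 := by
  unfold sigma1 ReLU
  fun_prop

lemma pl_approx (φ : ℝ → ℝ) (hφ : Continuous φ) (R ε : ℝ) (hR : 0 < R) (hε : 0 < ε) :
    ∃ (n : ℕ) (α a b : Fin n → ℝ), ∀ t ∈ Set.Icc (-R) R,
      |(∑ j, α j * sigma1 (a j * t + b j)) - φ t| ≤ ε := by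
  have huc : UniformContinuousOn φ (Set.Icc (-R) R) :=
    (isCompact_Icc).uniformContinuousOn_of_continuous hφ.continuousOn
  obtain ⟨δ, hδ, H⟩ := Metric.uniformContinuousOn_iff.mp huc (ε/2) (by linarith)
  set N : ℕ := ⌈2*R/δ⌉₊ + 1 with hN
  have hN1 : 1 ≤ N := Nat.le_add_left 1 _
  have hNpos : (0:ℝ) < N := by positivity
  set h : ℝ := 2*R/N with hh
  have hhpos : 0 < h := by positivity
  have hhδ : h < δ := by
    rw [hh, div_lt_iff₀ hNpos]
    have h1 : 2*R/δ < N := by push_cast [hN]; linarith [Nat.le_ceil (2*R/δ)]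
    have h2 : 2*R < (N:ℝ) * δ := (div_lt_iff₀ hδ).mp h1
    linarith [mul_comm δ (N:ℝ)]
  set τ : ℕ → ℝ := fun i => -R + i*h with hτ
  have hτN : τ N = R := by
    rw [hτ]; simp only; rw [hh]; field_simp; ring
  refine ⟨N+1, Fin.cases (φ (-R)) (fun i : Fin N => φ (τ ((i:ℕ)+1)) - φ (τ (i:ℕ))),
    Fin.cases 0 (fun _ => 1/h), Fin.cases 1 (fun i : Fin N => -(τ (i:ℕ) + h/2)/h), ?_⟩
  intro t ht
  obtain ⟨ht1, ht2⟩ := ht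
  set k : ℕ := min ⌊(t+R)/h⌋₊ (N-1) with hk
  have hkN : k < N := lt_of_le_of_lt (min_le_right _ _) (by omega)
  have hτk_le : τ k ≤ t := by
    have h1 : (k:ℝ) ≤ ⌊(t+R)/h⌋₊ := by exact_mod_cast min_le_left _ _
    have h2 : (⌊(t+R)/h⌋₊ : ℝ) ≤ (t+R)/h := Nat.floor_le (div_nonneg (by linarith) hhpos.le)
    have : (k:ℝ) * h ≤ t + R := by
      calc (k:ℝ)*h ≤ ((t+R)/h) * h := by nlinarith
      _ = t + R := by field_simp
    simp only [hτ]; linarith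
  have hle_τk1 : t ≤ τ (k+1) := by
    rcases le_or_gt ⌊(t+R)/h⌋₊ (N-1) with hc | hc
    · have hkf : k = ⌊(t+R)/h⌋₊ := min_eq_left hc
      have := Nat.lt_floor_add_one ((t+R)/h)
      rw [← hkf] at this
      have : t + R < ((k:ℝ)+1) * h := by
        calc t + R = ((t+R)/h)*h := by field_simp
        _ < ((k:ℝ)+1)*h := by nlinarith
      simp only [hτ]; push_cast; linarith
    · have hkf : k = N - 1 := min_eq_right (le_of_lt hc)
      have : k + 1 = N := by omega
      rw [this, hτN]; exact ht2
  -- bounds on grid points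
  have hτk_mem : τ k ∈ Set.Icc (-R) R := by
    constructor
    · simp only [hτ]
      have : (0:ℝ) ≤ (k:ℝ) * h := mul_nonneg (Nat.cast_nonneg k) hhpos.le
      linarith
    · linarith
  have hτk1_mem : τ (k+1) ∈ Set.Icc (-R) R := by
    constructor
    · linarith [hτk_le, (hτk_mem).1, show τ k ≤ τ (k+1) by simp only [hτ]; push_cast; nlinarith]
    · have : (k:ℝ)+1 ≤ N := by exact_mod_cast hkN
      simp only [hτ]; push_cast
      have : ((k:ℝ)+1)*h ≤ N*h := by nlinarith
      have hNh : (N:ℝ)*h = 2*R := by rw [hh]; field_simp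
      linarith
  have hτ_succ : ∀ i : ℕ, τ (i+1) = τ i + h := by
    intro i; simp only [hτ]; push_cast; ring
  have hτ0 : τ 0 = -R := by simp [hτ]
  clear_value N h τ k
  have harg : ∀ i : ℕ, 1/h * t + -(τ i + h/2)/h = (t - (τ i + h/2))/h := by
    intro i; field_simp; ring
  have hnode_one : ∀ i : ℕ, i < k → sigma1 (1/h * t + -(τ i + h/2)/h) = 1 := by
    intro i hi
    rw [harg]; apply sigma1_of_ge
    rw [le_div_iff₀ hhpos]
    have h1 : τ (i+1) ≤ τ k := by
      simp only [hτ]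
      have : (i:ℝ)+1 ≤ k := by exact_mod_cast hi
      push_cast; nlinarith
    rw [hτ_succ] at h1
    linarith [hτk_le]
  have hnode_zero : ∀ i : ℕ, k < i → sigma1 (1/h * t + -(τ i + h/2)/h) = 0 := by
    intro i hi
    rw [harg]; apply sigma1_of_le
    rw [div_le_iff₀ hhpos]
    have h1 : τ (k+1) ≤ τ i := by
      simp only [hτ]
      have : ((k:ℝ)+1) ≤ i := by exact_mod_cast hi
      push_cast; nlinarith
    linarith [hle_τk1]
  rw [Fin.sum_univ_succ]
  simp only [Fin.cases_zero, Fin.cases_succ]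
  rw [sigma1_of_ge (t := (0:ℝ) * t + 1) (by norm_num), mul_one]
  have hsum : (∑ i : Fin N, (φ (τ ((i:ℕ)+1)) - φ (τ (i:ℕ))) * sigma1 (1/h * t + -(τ (i:ℕ) + h/2)/h))
      = ∑ j ∈ Finset.range N, (φ (τ (j+1)) - φ (τ j)) * sigma1 (1/h * t + -(τ j + h/2)/h) :=
    Fin.sum_univ_eq_sum_range (fun j => (φ (τ (j+1)) - φ (τ j)) * sigma1 (1/h * t + -(τ j + h/2)/h)) N
  rw [hsum]
  set G : ℕ → ℝ := fun j => (φ (τ (j+1)) - φ (τ j)) * sigma1 (1/h * t + -(τ j + h/2)/h) with hG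
  have hsum2 : ∑ i ∈ Finset.range N, G i = ∑ i ∈ Finset.range (k+1), G i := by
    refine (Finset.sum_subset (Finset.range_subset_range.mpr (by omega)) ?_).symm
    intro i _ hi
    have hki : k < i := by simpa using Finset.mem_range.not.mp hi
    simp only [hG]
    rw [hnode_zero i hki, mul_zero]
  rw [hsum2, Finset.sum_range_succ]
  have hsum3 : ∑ i ∈ Finset.range k, G i = φ (τ k) - φ (τ 0) := by
    rw [Finset.sum_congr rfl (fun i hi => by
      simp only [hG]
      rw [hnode_one i (Finset.mem_range.mp hi), mul_one])]
    exact Finset.sum_range_sub (fun i => φ (τ i)) k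
  rw [hsum3, hτ0]
  have key1 : |φ (τ k) - φ t| < ε/2 := by
    have hd : dist (τ k) t < δ := by
      rw [Real.dist_eq, abs_lt]
      have h2 : τ (k+1) = τ k + h := hτ_succ k
      constructor <;> [linarith; linarith]
    have := H (τ k) hτk_mem t ⟨ht1, ht2⟩ hd
    rwa [Real.dist_eq] at this
  have key2 : |G k| < ε/2 := by
    have hd : dist (τ (k+1)) (τ k) < δ := by
      rw [Real.dist_eq, hτ_succ k]
      rw [abs_of_nonneg (by linarith)]
      simpa using hhδ
    have hΔ : |φ (τ (k+1)) - φ (τ k)| < ε/2 := by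
      have := H (τ (k+1)) hτk1_mem (τ k) hτk_mem hd
      rwa [Real.dist_eq] at this
    have hσ : |sigma1 (1/h * t + -(τ k + h/2)/h)| ≤ 1 := by
      rw [abs_of_nonneg (sigma1_nonneg _)]; exact sigma1_le_one _
    calc |G k| = |φ (τ (k+1)) - φ (τ k)| * |sigma1 (1/h * t + -(τ k + h/2)/h)| := by
          rw [hG]; exact abs_mul _ _
    _ ≤ |φ (τ (k+1)) - φ (τ k)| * 1 := by
          exact mul_le_mul_of_nonneg_left hσ (abs_nonneg _)
    _ < ε/2 := by rw [mul_one]; exact hΔ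
  calc |φ (-R) + (φ (τ k) - φ (-R) + G k) - φ t| = |(φ (τ k) - φ t) + G k| := by ring_nf
  _ ≤ |φ (τ k) - φ t| + |G k| := abs_add_le _ _
  _ ≤ ε := by linarith


noncomputable def cosRidge (d : ℕ) (w : Fin d → ℝ) (b : ℝ) :
    C(Set.Icc (0 : Fin d → ℝ) 1, ℝ) :=
  ⟨fun x => Real.cos ((∑ k, w k * x.1 k) + b), by
    apply Real.continuous_cos.comp
    apply Continuous.add _ continuous_const
    apply continuous_finset_sum
    intro k _
    exact continuous_const.mul ((continuous_apply k).comp continuous_subtype_val)⟩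

lemma cosRidge_mul (d : ℕ) (w w' : Fin d → ℝ) (b b' : ℝ) :
    cosRidge d w b * cosRidge d w' b' =
      (1/2 : ℝ) • cosRidge d (w + w') (b + b') + (1/2 : ℝ) • cosRidge d (w - w') (b - b') := by
  ext x
  simp only [cosRidge, ContinuousMap.mul_apply, ContinuousMap.add_apply,
    ContinuousMap.smul_apply, ContinuousMap.coe_mk, smul_eq_mul]
  have h1 : (∑ k, (w + w') k * x.1 k) = (∑ k, w k * x.1 k) + (∑ k, w' k * x.1 k) := by
    rw [← Finset.sum_add_distrib]
    exact Finset.sum_congr rfl fun k _ => by simp [add_mul]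
  have h2 : (∑ k, (w - w') k * x.1 k) = (∑ k, w k * x.1 k) - (∑ k, w' k * x.1 k) := by
    rw [← Finset.sum_sub_distrib]
    exact Finset.sum_congr rfl fun k _ => by simp [sub_mul]
  rw [h1, h2]
  have e1 : (∑ k, w k * x.1 k) + (∑ k, w' k * x.1 k) + (b + b')
      = ((∑ k, w k * x.1 k) + b) + ((∑ k, w' k * x.1 k) + b') := by ring
  have e2 : (∑ k, w k * x.1 k) - (∑ k, w' k * x.1 k) + (b - b')
      = ((∑ k, w k * x.1 k) + b) - ((∑ k, w' k * x.1 k) + b') := by ring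
  have key : ∀ A B : ℝ, Real.cos A * Real.cos B
      = 1/2 * Real.cos (A+B) + 1/2 * Real.cos (A-B) := by
    intro A B; rw [Real.cos_add, Real.cos_sub]; ring
  rw [e1, e2]
  exact key _ _

lemma cos_sw (d : ℕ) (g : C(Set.Icc (0 : Fin d → ℝ) 1, ℝ)) (ε : ℝ) (hε : 0 < ε) :
    ∃ n, ∃ (c : Fin n → ℝ) (w : Fin n → Fin d → ℝ) (b : Fin n → ℝ),
      ∀ x : Set.Icc (0 : Fin d → ℝ) 1,
        |(∑ j, c j * Real.cos ((∑ k, w j k * x.1 k) + b j)) - g x| < ε := by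
  haveI : CompactSpace (Set.Icc (0 : Fin d → ℝ) 1) :=
    isCompact_iff_compactSpace.mp isCompact_Icc
  set S : Set C(Set.Icc (0 : Fin d → ℝ) 1, ℝ) := {p | ∃ w b, p = cosRidge d w b} with hS
  have hone : (1 : C(Set.Icc (0 : Fin d → ℝ) 1, ℝ)) ∈ Submodule.span ℝ S := by
    apply Submodule.subset_span
    refine ⟨0, 0, ?_⟩
    ext x
    simp [cosRidge]
  have hmul : ∀ x y : C(Set.Icc (0 : Fin d → ℝ) 1, ℝ),
      x ∈ Submodule.span ℝ S → y ∈ Submodule.span ℝ S → x * y ∈ Submodule.span ℝ S := by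
    intro x y hx hy
    induction hx, hy using Submodule.span_induction₂ with
    | mem_mem p q hp hq =>
      obtain ⟨w, b, rfl⟩ := hp
      obtain ⟨w', b', rfl⟩ := hq
      rw [cosRidge_mul]
      exact Submodule.add_mem _
        (Submodule.smul_mem _ _ (Submodule.subset_span ⟨_, _, rfl⟩))
        (Submodule.smul_mem _ _ (Submodule.subset_span ⟨_, _, rfl⟩))
    | zero_left y hy => simp
    | zero_right x hx => simp
    | add_left x y z hx hy hz h1 h2 => rw [add_mul]; exact Submodule.add_mem _ h1 h2
    | add_right x y z hx hy hz h1 h2 => rw [mul_add]; exact Submodule.add_mem _ h1 h2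
    | smul_left r x y hx hy h1 => rw [smul_mul_assoc]; exact Submodule.smul_mem _ _ h1
    | smul_right r x y hx hy h1 => rw [mul_smul_comm]; exact Submodule.smul_mem _ _ h1
  set A : Subalgebra ℝ C(Set.Icc (0 : Fin d → ℝ) 1, ℝ) :=
    (Submodule.span ℝ S).toSubalgebra hone hmul with hA
  have hsep : A.SeparatesPoints := by
    intro x y hxy
    have hne : x.1 ≠ y.1 := fun h => hxy (Subtype.ext h)
    obtain ⟨k, hk⟩ := Function.ne_iff.mp hne
    have hsum : ∀ z : Set.Icc (0 : Fin d → ℝ) 1,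
        (∑ k', (Pi.single k 1 : Fin d → ℝ) k' * z.1 k') = z.1 k := by
      intro z
      rw [Finset.sum_eq_single k]
      · simp
      · intro k' _ hk'
        rw [Pi.single_eq_of_ne hk', zero_mul]
      · intro h; exact absurd (Finset.mem_univ k) h
    refine ⟨_, ⟨cosRidge d (Pi.single k 1) 0,
      Submodule.subset_span ⟨Pi.single k 1, 0, rfl⟩, rfl⟩, ?_⟩
    simp only [cosRidge, ContinuousMap.coe_mk, add_zero, hsum]
    have hx01 : x.1 k ∈ Set.Icc (0:ℝ) Real.pi := by
      obtain ⟨h1, h2⟩ := Set.mem_Icc.mp x.2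
      exact ⟨h1 k, le_trans (show x.1 k ≤ (1:ℝ) from h2 k)
        (by linarith [Real.pi_gt_three])⟩
    have hy01 : y.1 k ∈ Set.Icc (0:ℝ) Real.pi := by
      obtain ⟨h1, h2⟩ := Set.mem_Icc.mp y.2
      exact ⟨h1 k, le_trans (show y.1 k ≤ (1:ℝ) from h2 k)
        (by linarith [Real.pi_gt_three])⟩
    exact Real.injOn_cos.ne hx01 hy01 hk
  obtain ⟨⟨p, hpA⟩, hp⟩ :=
    ContinuousMap.exists_mem_subalgebra_near_continuousMap_of_separatesPoints A hsep g ε hε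
  have hplt : ∀ x, |p x - g x| < ε := by
    intro x
    have := (ContinuousMap.norm_lt_iff _ hε).mp hp x
    simpa [Real.norm_eq_abs] using this
  have hpspan : p ∈ Submodule.span ℝ S := hpA
  obtain ⟨n, c, v, hv⟩ := Submodule.mem_span_set'.mp hpspan
  have hex : ∀ i : Fin n, ∃ wb : (Fin d → ℝ) × ℝ,
      ((v i : C(Set.Icc (0 : Fin d → ℝ) 1, ℝ))) = cosRidge d wb.1 wb.2 := by
    intro i
    obtain ⟨w, b, h⟩ := (v i).2
    exact ⟨(w, b), h⟩
  choose wb hwb using hex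
  refine ⟨n, c, fun i => (wb i).1, fun i => (wb i).2, ?_⟩
  intro x
  have hpx : (∑ i, c i * Real.cos ((∑ k, (wb i).1 k * x.1 k) + (wb i).2)) = p x := by
    calc (∑ i, c i * Real.cos ((∑ k, (wb i).1 k * x.1 k) + (wb i).2))
        = ∑ i, (c i • ((v i) : C(Set.Icc (0 : Fin d → ℝ) 1, ℝ))) x := by
          refine Finset.sum_congr rfl fun i _ => ?_
          rw [ContinuousMap.smul_apply, hwb i]
          simp [cosRidge]
    _ = (∑ i, c i • ((v i) : C(Set.Icc (0 : Fin d → ℝ) 1, ℝ))) x := by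
          rw [ContinuousMap.sum_apply]
    _ = p x := by rw [hv]
  rw [hpx]
  exact hplt x

/-- **Superpositions of the clipped-linear activation `σ₁` are dense in `L¹(I_d)`.**
For every `d ≥ 1`, every `f ∈ L¹(I_d)` and every `ε > 0`, there exist `n ≥ 1`,
coefficients `α`, weight vectors `w` and biases `b` such that
`∫_{I_d} |∑ j, α j * σ₁ (⟪w j, x⟫ + b j) - f x| dx < ε`. -/
theorem sigma1_network_dense_L1
    (d : ℕ) (hd : 1 ≤ d) (f : (Fin d → ℝ) → ℝ)
    (hf : IntegrableOn f (Set.Icc (0 : Fin d → ℝ) 1)) (ε : ℝ) (hε : 0 < ε) :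
    ∃ (n : ℕ), 1 ≤ n ∧ ∃ (α : Fin n → ℝ) (w : Fin n → Fin d → ℝ) (b : Fin n → ℝ),
      ∫ x in Set.Icc (0 : Fin d → ℝ) 1,
        |(∑ j, α j * sigma1 (∑ k, w j k * x k + b j)) - f x| < ε := by
  set K : Set (Fin d → ℝ) := Set.Icc 0 1 with hK
  have hKc : IsCompact K := isCompact_Icc
  have hKm : MeasurableSet K := measurableSet_Icc
  have hKvol : (volume K).toReal = 1 := by
    rw [hK, Real.volume_Icc_pi_toReal (by intro i; norm_num)]
    simp
  -- Step 1: approximate by a continuous function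
  have hf' : Integrable (K.indicator f) volume := (integrable_indicator_iff hKm).mpr hf
  obtain ⟨g, gsupp, hgint, gcont, gint⟩ :=
    hf'.exists_hasCompactSupport_integral_sub_le (show (0:ℝ) < ε/4 by linarith)
  have hfg : ∫ x in K, |f x - g x| ≤ ε/4 := by
    have h1 : ∫ x in K, |f x - g x| = ∫ x in K, ‖K.indicator f x - g x‖ := by
      refine setIntegral_congr_fun hKm fun x hx => ?_
      rw [Set.indicator_of_mem hx, Real.norm_eq_abs]
    rw [h1]
    refine le_trans (setIntegral_le_integral ((hf'.sub gint).norm) ?_) hgint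
    exact Filter.Eventually.of_forall fun x => norm_nonneg _
  -- Step 2: Stone-Weierstrass with cosine ridge functions
  set gK : C(K, ℝ) := ⟨fun x => g x.1, gcont.comp continuous_subtype_val⟩ with hgK
  obtain ⟨n₀, c, W, B, hWB⟩ := cos_sw d gK (ε/4) (by linarith)
  -- Step 3: approximate each cosine ridge function by a 1-D sigma1 network
  set R : Fin n₀ → ℝ := fun j => (∑ k, |W j k|) + 1 with hR
  have hRpos : ∀ j, 0 < R j := by
    intro j
    have : (0:ℝ) ≤ ∑ k, |W j k| := Finset.sum_nonneg fun k _ => abs_nonneg _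
    rw [hR]; dsimp only; linarith
  have hex : ∀ j : Fin n₀, ∃ (m : ℕ) (α a b : Fin m → ℝ), ∀ t ∈ Set.Icc (-R j) (R j),
      |(∑ l, α l * sigma1 (a l * t + b l)) - c j * Real.cos (t + B j)| ≤ ε/(4*(n₀+1)) := by
    intro j
    exact pl_approx (fun t => c j * Real.cos (t + B j))
      (continuous_const.mul (Real.continuous_cos.comp (continuous_id.add continuous_const)))
      (R j) _ (hRpos j) (by positivity)
  choose m α a b hspec using hex
  -- Step 4: assemble the network
  set T := (j : Fin n₀) × Fin (m j) with hT
  set N := Fintype.card T with hN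
  set e : Fin N ≃ T := (Fintype.equivFin T).symm with he
  set A' : Fin (N+1) → ℝ := Fin.snoc (fun i : Fin N => α (e i).1 (e i).2) 0 with hA'
  set w' : Fin (N+1) → Fin d → ℝ :=
    Fin.snoc (fun i : Fin N => fun k => a (e i).1 (e i).2 * W (e i).1 k) 0 with hw'
  set b' : Fin (N+1) → ℝ := Fin.snoc (fun i : Fin N => b (e i).1 (e i).2) 0 with hb'
  refine ⟨N + 1, by omega, A', w', b', ?_⟩
  -- pointwise bound for the network against g
  have hnet : ∀ x ∈ K, |(∑ i : Fin (N+1),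
      A' i * sigma1 (∑ k, w' i k * x k + b' i)) - g x| ≤ ε/2 := by
    intro x hx
    set t : Fin n₀ → ℝ := fun j => ∑ k, W j k * x k with ht
    have hxk : ∀ k, x k ∈ Set.Icc (0:ℝ) 1 := by
      intro k
      obtain ⟨h1, h2⟩ := Set.mem_Icc.mp hx
      exact ⟨h1 k, h2 k⟩
    have htmem : ∀ j, t j ∈ Set.Icc (-R j) (R j) := by
      intro j
      have habs : |t j| ≤ ∑ k, |W j k| := by
        refine le_trans (Finset.abs_sum_le_sum_abs _ _) (Finset.sum_le_sum fun k _ => ?_)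
        rw [abs_mul]
        have := hxk k
        calc |W j k| * |x k| ≤ |W j k| * 1 := by
              apply mul_le_mul_of_nonneg_left _ (abs_nonneg _)
              rw [abs_le]; constructor <;> [linarith [this.1]; exact this.2]
        _ = |W j k| := mul_one _
      have := abs_le.mp habs
      constructor
      · rw [hR]; dsimp only; linarith [this.1]
      · rw [hR]; dsimp only; linarith [this.2]
    -- compute the network sum
    have hsum : (∑ i : Fin (N+1), A' i * sigma1 (∑ k, w' i k * x k + b' i))
        = ∑ j : Fin n₀, ∑ l : Fin (m j), α j l * sigma1 (a j l * t j + b j l) := by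
      rw [Fin.sum_univ_castSucc]
      simp only [hA', hw', hb', Fin.snoc_castSucc, Fin.snoc_last, zero_mul, add_zero,
        Pi.zero_apply]
      have h1 : ∀ i : Fin N, (∑ k, (a (e i).1 (e i).2 * W (e i).1 k) * x k)
          = a (e i).1 (e i).2 * t (e i).1 := by
        intro i
        rw [ht, Finset.mul_sum]
        exact Finset.sum_congr rfl fun k _ => by ring
      calc (∑ i : Fin N, α (e i).1 (e i).2 *
            sigma1 (∑ k, (a (e i).1 (e i).2 * W (e i).1 k) * x k + b (e i).1 (e i).2))
          = ∑ i : Fin N, α (e i).1 (e i).2 *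
            sigma1 (a (e i).1 (e i).2 * t (e i).1 + b (e i).1 (e i).2) := by
            exact Finset.sum_congr rfl fun i _ => by rw [h1 i]
      _ = ∑ s : T, α s.1 s.2 * sigma1 (a s.1 s.2 * t s.1 + b s.1 s.2) :=
            Equiv.sum_comp e (fun s : T => α s.1 s.2 * sigma1 (a s.1 s.2 * t s.1 + b s.1 s.2))
      _ = ∑ j : Fin n₀, ∑ l : Fin (m j), α j l * sigma1 (a j l * t j + b j l) := by
            rw [← Finset.univ_sigma_univ, Finset.sum_sigma]
    rw [hsum]
    -- compare with P and then with g
    have hP : |(∑ j : Fin n₀, ∑ l : Fin (m j), α j l * sigma1 (a j l * t j + b j l))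
        - ∑ j : Fin n₀, c j * Real.cos (t j + B j)| ≤ ε/4 := by
      rw [← Finset.sum_sub_distrib]
      refine le_trans (Finset.abs_sum_le_sum_abs _ _) ?_
      have hterm : ∀ j : Fin n₀, |(∑ l, α j l * sigma1 (a j l * t j + b j l))
          - c j * Real.cos (t j + B j)| ≤ ε/(4*(n₀+1)) := fun j => hspec j (t j) (htmem j)
      calc ∑ j : Fin n₀, |(∑ l, α j l * sigma1 (a j l * t j + b j l))
            - c j * Real.cos (t j + B j)| ≤ ∑ _j : Fin n₀, ε/(4*(n₀+1)) :=
            Finset.sum_le_sum fun j _ => hterm j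
      _ = n₀ * (ε/(4*(n₀+1))) := by rw [Finset.sum_const]; simp [mul_comm]
      _ ≤ ε/4 := by
            have h2 : (0:ℝ) < (n₀:ℝ) + 1 := by positivity
            have key : (n₀:ℝ) * (ε/(4*(n₀+1))) = ε/4 * ((n₀:ℝ)/((n₀:ℝ)+1)) := by
              field_simp
            have hle : (n₀:ℝ)/((n₀:ℝ)+1) ≤ 1 := by
              rw [div_le_one h2]; linarith
            calc (n₀:ℝ) * (ε/(4*(n₀+1))) = ε/4 * ((n₀:ℝ)/((n₀:ℝ)+1)) := key
            _ ≤ ε/4 * 1 := mul_le_mul_of_nonneg_left hle (by linarith)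
            _ = ε/4 := mul_one _
    have hPg : |(∑ j : Fin n₀, c j * Real.cos (t j + B j)) - g x| < ε/4 := by
      have := hWB ⟨x, hx⟩
      simpa [ht, hgK] using this
    calc |(∑ j : Fin n₀, ∑ l : Fin (m j), α j l * sigma1 (a j l * t j + b j l)) - g x|
        ≤ |(∑ j : Fin n₀, ∑ l : Fin (m j), α j l * sigma1 (a j l * t j + b j l))
            - ∑ j : Fin n₀, c j * Real.cos (t j + B j)|
          + |(∑ j : Fin n₀, c j * Real.cos (t j + B j)) - g x| := by
          exact abs_sub_le _ _ _
    _ ≤ ε/4 + ε/4 := add_le_add hP hPg.le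
    _ = ε/2 := by ring
  -- integrate
  set net : (Fin d → ℝ) → ℝ :=
    fun x => ∑ i : Fin (N+1), A' i * sigma1 (∑ k, w' i k * x k + b' i) with hnetdef
  have hnetcont : Continuous net := by
    apply continuous_finset_sum
    intro i _
    apply continuous_const.mul
    apply sigma1_continuous.comp
    apply Continuous.add _ continuous_const
    apply continuous_finset_sum
    intro k _
    exact continuous_const.mul (continuous_apply k)
  have hnetint : IntegrableOn net K := hnetcont.continuousOn.integrableOn_compact hKc
  have hgK' : IntegrableOn g K := gcont.continuousOn.integrableOn_compact hKc
  have hintL : IntegrableOn (fun x => |net x - f x|) K := (hnetint.sub hf).abs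
  have hi1 : IntegrableOn (fun _ : Fin d → ℝ => ε/2) K :=
    integrableOn_const hKc.measure_lt_top.ne
  have hi2 : IntegrableOn (fun x => |g x - f x|) K := (hgK'.sub hf).abs
  have hintR : IntegrableOn (fun x => ε/2 + |g x - f x|) K := hi1.add hi2
  have hmono : ∫ x in K, |net x - f x| ≤ ∫ x in K, (ε/2 + |g x - f x|) := by
    refine setIntegral_mono_on hintL hintR hKm fun x hx => ?_
    calc |net x - f x| ≤ |net x - g x| + |g x - f x| := abs_sub_le _ _ _
    _ ≤ ε/2 + |g x - f x| := add_le_add (hnet x hx) le_rfl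
  have hsplit : ∫ x in K, (ε/2 + |g x - f x|) = ε/2 * (volume K).toReal + ∫ x in K, |g x - f x| := by
    rw [integral_add hi1 hi2, setIntegral_const, smul_eq_mul, mul_comm]; rfl
  have hgf : ∫ x in K, |g x - f x| ≤ ε/4 := by
    have : ∀ x, |g x - f x| = |f x - g x| := fun x => abs_sub_comm _ _
    simp_rw [this]
    exact hfg
  calc ∫ x in K, |net x - f x| ≤ ε/2 * (volume K).toReal + ∫ x in K, |g x - f x| := by
        rw [← hsplit]; exact hmono
  _ ≤ ε/2 * 1 + ε/4 := by rw [hKvol]; linarith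
  _ < ε := by linarith
end

section
/- Let m ≥ 1, ε > 0, and let f = (f_1, …, f_m) be a measurable indicator function on I_d. Define f'(x) = (f'_1(x), …, f'_m(x)) with f'_i(x) = (2m/ε)·(f_i(x) − 0.5). Then for every i = 1, …, m, ∫_{I_d} |softmax(f'(x))_i − f_i(x)| dx ≤ ε/2. -/
open MeasureTheory

lemma softmax_key {m : ℕ} (hm : 1 ≤ m) {ε : ℝ} (hε : 0 < ε) (v : Fin m → ℝ)
    (h01 : ∀ i, v i = 0 ∨ v i = 1) (hsum : ∑ i, v i = 1) (i : Fin m) :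
    |softmax (fun i' => (2 * (m : ℝ) / ε) * (v i' - 0.5)) i - v i| ≤ ε / 2 := by
  have hm0 : (0 : ℝ) < m := by exact_mod_cast hm
  set c : ℝ := 2 * m / ε with hc_def
  have hc : 0 < c := by positivity
  have hec : c ≤ Real.exp c := (Real.add_one_le_exp c).trans' (by linarith)
  have hexp : Real.exp (-c) ≤ ε / (2 * m) := by
    rw [Real.exp_neg]
    have h1 : (Real.exp c)⁻¹ ≤ c⁻¹ := inv_anti₀ hc hec
    have h2 : c⁻¹ = ε / (2 * m) := by rw [hc_def, inv_div]
    linarith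
  set y : Fin m → ℝ := fun i' => c * (v i' - 0.5) with hy
  set S : ℝ := ∑ k, Real.exp (y k) with hS
  have hSpos : 0 < S := Finset.sum_pos (fun k _ => Real.exp_pos _)
    (Finset.univ_nonempty_iff.2 (by have : NeZero m := ⟨by omega⟩; infer_instance))
  obtain ⟨j, hj⟩ : ∃ j, v j = 1 := by
    by_contra h
    push_neg at h
    have : ∀ k, v k = 0 := fun k => (h01 k).resolve_right (h k)
    simp [this] at hsum
  have hyj : y j = c / 2 := by simp [hy, hj]; ring
  have hSge : Real.exp (c / 2) ≤ S := by
    rw [← hyj]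
    exact Finset.single_le_sum (fun k _ => (Real.exp_pos (y k)).le) (Finset.mem_univ j)
  have hsm : softmax y i = Real.exp (y i) / S := rfl
  rcases h01 i with hvi | hvi
  · -- v i = 0
    have hyi : y i = -(c / 2) := by simp [hy, hvi]; ring
    rw [hsm, hvi, sub_zero, abs_of_nonneg (by positivity), hyi]
    calc Real.exp (-(c/2)) / S ≤ Real.exp (-(c/2)) / Real.exp (c/2) := by
          apply div_le_div_of_nonneg_left (Real.exp_pos _).le (Real.exp_pos _) hSge
      _ = Real.exp (-c) := by rw [← Real.exp_sub]; ring_nf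
      _ ≤ ε / (2 * m) := hexp
      _ ≤ ε / 2 := by
          apply div_le_div_of_nonneg_left hε.le (by norm_num)
          have hm1 : (1:ℝ) ≤ m := by exact_mod_cast hm
          linarith
  · -- v i = 1
    have hyi : y i = c / 2 := by simp [hy, hvi]; ring
    have hzero : ∀ k, k ≠ i → v k = 0 := by
      intro k hk
      have hsplit : v i + ∑ k ∈ Finset.univ.erase i, v k = 1 := by
        rw [Finset.add_sum_erase _ _ (Finset.mem_univ i)]; exact hsum
      have hnn : ∀ l ∈ Finset.univ.erase i, 0 ≤ v l := by
        intro l _; rcases h01 l with h | h <;> simp [h]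
      have hz : ∑ k ∈ Finset.univ.erase i, v k = 0 := by rw [hvi] at hsplit; linarith
      have := (Finset.sum_eq_zero_iff_of_nonneg hnn).1 hz k (by simp [hk])
      exact this
    have hSval : S = Real.exp (c/2) + (m - 1) * Real.exp (-(c/2)) := by
      rw [hS, ← Finset.add_sum_erase _ _ (Finset.mem_univ i), hyi]
      congr 1
      have hyk : ∀ k ∈ Finset.univ.erase i, Real.exp (y k) = Real.exp (-(c/2)) := by
        intro k hk
        have hvk : y k = -(c/2) := by
          simp [hy, hzero k (Finset.mem_erase.1 hk).1]; ring
        rw [hvk]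
      rw [Finset.sum_congr rfl hyk, Finset.sum_const,
        Finset.card_erase_of_mem (Finset.mem_univ i), Finset.card_univ, Fintype.card_fin,
        nsmul_eq_mul, Nat.cast_sub hm]
      norm_num
    have hle1 : Real.exp (y i) / S ≤ 1 := by
      rw [div_le_one hSpos, hyi]; exact hSge
    rw [hsm, hvi, abs_of_nonpos (by linarith), neg_sub]
    have h2 : 1 - Real.exp (y i) / S = (S - Real.exp (c/2)) / S := by
      rw [hyi]; field_simp
    rw [h2]
    have hnum : S - Real.exp (c/2) = (m - 1) * Real.exp (-(c/2)) := by rw [hSval]; ring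
    calc (S - Real.exp (c/2)) / S ≤ ((m : ℝ) * Real.exp (-(c/2))) / Real.exp (c/2) := by
          apply div_le_div₀ (by positivity) ?_ (Real.exp_pos _) hSge
          rw [hnum]
          have : (0:ℝ) ≤ Real.exp (-(c/2)) := (Real.exp_pos _).le
          nlinarith
      _ = (m : ℝ) * Real.exp (-c) := by
          rw [mul_div_assoc, ← Real.exp_sub]; ring_nf
      _ ≤ (m : ℝ) * (ε / (2 * m)) := by
          apply mul_le_mul_of_nonneg_left hexp hm0.le
      _ = ε / 2 := by field_simp

/-- **Softmax of a rescaled indicator function is close to the indicator in `L¹(I_d)`.**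
Let `m ≥ 1`, `ε > 0`, and `f` a measurable indicator function on `I_d`.  With
`f'_i x = (2m/ε) * (f_i x - 0.5)`, we have for every `i`:
`∫_{I_d} |softmax (f' x) i - f i x| dx ≤ ε / 2`. -/
theorem softmax_of_scaled_indicator_close
    (d m : ℕ) (hm : 1 ≤ m)
    (f : Fin m → (Fin d → ℝ) → ℝ)
    (hfmeas : ∀ i, Measurable (f i))
    (hind : IsIndicatorFunction f)
    (ε : ℝ) (hε : 0 < ε) :
    ∀ i, ∫ x in Set.Icc (0 : Fin d → ℝ) 1,
      |softmax (fun i' => (2 * (m : ℝ) / ε) * (f i' x - 0.5)) i - f i x| ≤ ε / 2 := by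
  intro i
  set s : Set (Fin d → ℝ) := Set.Icc 0 1 with hs
  have hsm : MeasurableSet s := measurableSet_Icc
  have hvol : volume s = 1 := by
    rw [hs, Real.volume_Icc_pi]
    simp
  have hlt : volume s < ⊤ := by rw [hvol]; exact ENNReal.one_lt_top
  have hbound := norm_setIntegral_le_of_norm_le_const_ae' (μ := volume) (C := ε / 2)
    (f := fun x => |softmax (fun i' => (2 * (m : ℝ) / ε) * (f i' x - 0.5)) i - f i x|)
    hlt (Filter.Eventually.of_forall (fun x hx => by
      rw [Real.norm_eq_abs, abs_abs]
      exact softmax_key hm hε (fun i' => f i' x) (hind x hx).1 (hind x hx).2 i))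
  rw [measureReal_def, hvol] at hbound
  simp only [ENNReal.toReal_one, mul_one, Real.norm_eq_abs] at hbound
  exact le_trans (le_abs_self _) hbound
end
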